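/- arXiv:1003.5783 — 3 statements merged into one kernel-verified Lean document; each statement's English description precedes it below -/
import Mathlib

section
/- For every connected s-regular finite loopless multigraph G, the resistance is at most the oddness: r(G) ≤ ξ(G). -/
/-- A finite multigraph: finite vertex and edge types together with an incidence map
assigning to each edge an unordered pair of vertices. -/
structure Mgraph where
  V : Type
  E : Type
  [finV : Finite V]
  [finE : Finite E]
  inc : E → Sym2 V

attribute [instance] Mgraph.finV Mgraph.finE

namespace Mgraph

/-- A multigraph is loopless if no edge joins a vertex to itself. -/
def Loopless (G : Mgraph) : Prop := ∀ e : G.E, ¬ (G.inc e).IsDiag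

/-- The degree of a vertex: the number of edges incident with it. -/
noncomputable def degree (G : Mgraph) (v : G.V) : ℕ :=
  Nat.card {e : G.E // v ∈ G.inc e}

/-- The maximum degree Δ(G). -/
noncomputable def maxDegree (G : Mgraph) : ℕ :=
  sSup (Set.range G.degree)

/-- `G` is `s`-regular. -/
def Regular (G : Mgraph) (s : ℕ) : Prop := ∀ v : G.V, G.degree v = s

/-- A proper edge coloring with `k` colors: adjacent (distinct, sharing an endpoint)
edges receive different colors. -/
def IsProperEdgeColoring (G : Mgraph) {k : ℕ} (c : G.E → Fin k) : Prop :=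
  ∀ e f : G.E, e ≠ f → (∃ v : G.V, v ∈ G.inc e ∧ v ∈ G.inc f) → c e ≠ c f

/-- `G` admits a proper edge coloring with `k` colors. -/
def EdgeColorable (G : Mgraph) (k : ℕ) : Prop :=
  ∃ c : G.E → Fin k, G.IsProperEdgeColoring c

/-- The chromatic index χ'(G). -/
noncomputable def chromaticIndex (G : Mgraph) : ℕ :=
  sInf {k : ℕ | G.EdgeColorable k}

/-- `G` is class 1, i.e. χ'(G) = Δ(G). -/
noncomputable def ClassOne (G : Mgraph) : Prop := G.chromaticIndex = G.maxDegree

/-- Delete a set of edges from `G`. -/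
def deleteEdges (G : Mgraph) (S : Set G.E) : Mgraph where
  V := G.V
  E := {e : G.E // e ∉ S}
  inc e := G.inc e.1

/-- Delete a set of vertices from `G`, together with all incident edges. -/
def deleteVerts (G : Mgraph) (S : Set G.V) : Mgraph where
  V := {v : G.V // v ∉ S}
  E := {e : G.E // ∀ v : G.V, v ∈ G.inc e → v ∉ S}
  inc e := (G.inc e.1).pmap (fun v hv => ⟨v, hv⟩) e.2

/-- The simple graph on `V(G)` whose adjacency is realized by the edges in `F`. -/
def factorGraph (G : Mgraph) (F : Set G.E) : SimpleGraph G.V where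
  Adj u w := u ≠ w ∧ ∃ e ∈ F, G.inc e = s(u, w)
  symm := by
    constructor
    rintro u w ⟨hne, e, heF, he⟩
    exact ⟨hne.symm, e, heF, by rw [he]; exact Sym2.eq_swap⟩
  loopless := by constructor; rintro v ⟨hne, -⟩; exact hne rfl

/-- `G` is connected (in particular nonempty). -/
def Connected (G : Mgraph) : Prop := (G.factorGraph Set.univ).Connected

/-- `G` is 2-connected: it has at least 3 vertices and deleting any single vertex
leaves a connected graph. -/
def TwoConnected (G : Mgraph) : Prop :=
  3 ≤ Nat.card G.V ∧ ∀ v : G.V, (G.deleteVerts {v}).Connected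

/-- The number of odd cycles in the spanning subgraph of `G` with edge set `F`:
the number of connected components of odd cardinality. -/
noncomputable def oddCycles (G : Mgraph) (F : Set G.E) : ℕ :=
  Nat.card {C : (G.factorGraph F).ConnectedComponent //
    Odd (Nat.card {v : G.V // (G.factorGraph F).connectedComponentMk v = C})}

/-- `F` is a 1-factor (perfect matching): every vertex meets exactly one edge of `F`. -/
def IsOneFactor (G : Mgraph) (F : Set G.E) : Prop :=
  ∀ v : G.V, Nat.card {e : G.E // e ∈ F ∧ v ∈ G.inc e} = 1

/-- `F` is a 2-factor (spanning 2-regular subgraph): every vertex meets exactly two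
edges of `F`. -/
def IsTwoFactor (G : Mgraph) (F : Set G.E) : Prop :=
  ∀ v : G.V, Nat.card {e : G.E // e ∈ F ∧ v ∈ G.inc e} = 2

/-- `f` encodes a decomposition of the edge set of `G` into `n` 2-factors
(the fibers of `some i`), together with, possibly, one 1-factor (the fiber of `none`,
which is required to be empty when no 1-factor is used). -/
def IsDecomp (G : Mgraph) {n : ℕ} (f : G.E → Option (Fin n)) : Prop :=
  ((∀ e : G.E, f e ≠ none) ∨ G.IsOneFactor {e | f e = none}) ∧
    ∀ i : Fin n, G.IsTwoFactor {e | f e = some i}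

/-- The total number of odd cycles of the 2-factors of a decomposition. -/
noncomputable def decompOdd (G : Mgraph) {n : ℕ} (f : G.E → Option (Fin n)) : ℕ :=
  ∑ i : Fin n, G.oddCycles {e | f e = some i}

/-- The oddness ξ(G): the minimum total number of odd cycles over all decompositions of
the edge set into 2-factors (together with one 1-factor when the degree is odd);
`⊤` if no such decomposition exists. -/
noncomputable def oddness (G : Mgraph) : ℕ∞ :=
  sInf {k : ℕ∞ | ∃ (n : ℕ) (f : G.E → Option (Fin n)),
    G.IsDecomp f ∧ k = (G.decompOdd f : ℕ∞)}

/-- The minimum number of edges whose removal from `G` leaves a graph that is properly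
edge colorable with `D` colors. -/
noncomputable def resistanceTo (G : Mgraph) (D : ℕ) : ℕ :=
  sInf {k : ℕ | ∃ S : Set G.E, Nat.card S = k ∧ (G.deleteEdges S).EdgeColorable D}

/-- The resistance r(G): the minimum number of edges whose removal from `G` leaves a
Δ(G)-edge-colorable graph. -/
noncomputable def resistance (G : Mgraph) : ℕ := G.resistanceTo G.maxDegree

/-- The vertex resistance r_v(G): the minimum number of vertices whose removal from `G`
leaves a class 1 graph. -/
noncomputable def rv (G : Mgraph) : ℕ :=
  sInf {k : ℕ | ∃ S : Set G.V, Nat.card S = k ∧ (G.deleteVerts S).ClassOne}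

/-- The vertex resistance r'_v(G): the minimum number of vertices whose removal from `G`
leaves a graph `H` with χ'(H) ≤ Δ(G). -/
noncomputable def rv' (G : Mgraph) : ℕ :=
  sInf {k : ℕ | ∃ S : Set G.V, Nat.card S = k ∧
    (G.deleteVerts S).chromaticIndex ≤ G.maxDegree}

/-- The edge boundary ∂_G(X): the set of edges with one endpoint in `X` and one
endpoint outside `X`. -/
def edgeBoundary (G : Mgraph) (X : Set G.V) : Set G.E :=
  {e : G.E | ∃ u ∈ G.inc e, ∃ w ∈ G.inc e, u ∈ X ∧ w ∉ X}

/-- `G` is an `s`-graph: a loopless `s`-regular multigraph with `|∂_G(X)| ≥ s` for every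
odd set `X` of vertices. -/
def IsSGraph (G : Mgraph) (s : ℕ) : Prop :=
  G.Loopless ∧ G.Regular s ∧
    ∀ X : Set G.V, Odd (Nat.card X) → s ≤ Nat.card (G.edgeBoundary X)

end Mgraph

section Other2
variable {T : Type}

noncomputable def other2 (h : Nat.card T = 2) (t : T) : T :=
  ((Nat.card_eq_two_iff' t).mp h).choose

lemma other2_ne (h : Nat.card T = 2) (t : T) : other2 h t ≠ t :=
  ((Nat.card_eq_two_iff' t).mp h).choose_spec.1

lemma other2_eq (h : Nat.card T = 2) {t s : T} (hs : s ≠ t) : s = other2 h t :=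
  ((Nat.card_eq_two_iff' t).mp h).choose_spec.2 s hs

/-- Total version: the other element of a 2-element type, or `t` itself. -/
noncomputable def oth (t : T) : T :=
  if h : Nat.card T = 2 then other2 h t else t

lemma oth_eq (h : Nat.card T = 2) (t : T) : oth t = other2 h t := dif_pos h

lemma oth_invol : Function.Involutive (oth (T := T)) := by
  intro t
  by_cases h : Nat.card T = 2
  · rw [oth_eq h, oth_eq h]
    exact (other2_eq h (Ne.symm (other2_ne h t))).symm
  · rw [oth, dif_neg h, oth, dif_neg h]

lemma oth_ne (h : Nat.card T = 2) (t : T) : oth t ≠ t := by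
  rw [oth_eq h]; exact other2_ne h t

lemma oth_eq_of_ne (h : Nat.card T = 2) {t s : T} (hs : s ≠ t) : s = oth t := by
  rw [oth_eq h]; exact other2_eq h hs

end Other2

namespace AuxRO
open Mgraph
attribute [local instance] Classical.propDecidable

lemma sym2_rep {α : Type*} (z : Sym2 α) : ∃ x y, z = s(x, y) := by
  induction z using Sym2.ind with
  | _ x y => exact ⟨x, y, rfl⟩

lemma sym2_eq_of_mem {α : Type*} {z : Sym2 α} {x y : α} (hx : x ∈ z) (hy : y ∈ z)
    (hxy : x ≠ y) : z = s(x, y) := by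
  induction z using Sym2.ind with
  | _ u w =>
    rw [Sym2.mem_iff] at hx hy
    rcases hx with rfl | rfl <;> rcases hy with rfl | rfl <;> first
      | exact absurd rfl hxy
      | rfl
      | exact Sym2.eq_swap

lemma card_endpoints {G : Mgraph} (hG : G.Loopless) (e : G.E) :
    Nat.card {w : G.V // w ∈ G.inc e} = 2 := by
  have hd := hG e
  obtain ⟨u, w, h⟩ := sym2_rep (G.inc e)
  rw [h, Sym2.mk_isDiag_iff] at hd
  rw [Nat.card_eq_two_iff]
  refine ⟨⟨u, by rw [h]; exact Sym2.mem_mk_left u w⟩, ⟨w, by rw [h]; exact Sym2.mem_mk_right u w⟩,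
    by simp [Subtype.ext_iff, hd], ?_⟩
  ext ⟨z, hz⟩
  simp only [Set.mem_insert_iff, Set.mem_singleton_iff, Set.mem_univ, iff_true]
  rw [h, Sym2.mem_iff] at hz
  rcases hz with rfl | rfl
  · exact Or.inl rfl
  · exact Or.inr rfl

@[ext]
structure Dart (G : Mgraph) (F : Set G.E) where
  e : G.E
  v : G.V
  he : e ∈ F
  hv : v ∈ G.inc e

instance {G : Mgraph} {F : Set G.E} : Finite (Dart G F) :=
  Finite.of_injective (fun d : Dart G F => (d.e, d.v)) (by
    rintro ⟨e, v, _, _⟩ ⟨e', v', _, _⟩ h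
    simp only [Prod.mk.injEq] at h
    obtain ⟨rfl, rfl⟩ := h
    rfl)

variable {G : Mgraph} {F : Set G.E}

/-- α: flip the vertex of a dart (other endpoint of the same edge). -/
noncomputable def flipV (d : Dart G F) : Dart G F :=
  ⟨d.e, (oth (⟨d.v, d.hv⟩ : {w : G.V // w ∈ G.inc d.e})).1, d.he,
    (oth (⟨d.v, d.hv⟩ : {w : G.V // w ∈ G.inc d.e})).2⟩

/-- β: flip the edge of a dart (other edge of `F` at the same vertex). -/
noncomputable def flipE (d : Dart G F) : Dart G F :=
  ⟨(oth (⟨d.e, d.he, d.hv⟩ : {e : G.E // e ∈ F ∧ d.v ∈ G.inc e})).1, d.v,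
    (oth (⟨d.e, d.he, d.hv⟩ : {e : G.E // e ∈ F ∧ d.v ∈ G.inc e})).2.1,
    (oth (⟨d.e, d.he, d.hv⟩ : {e : G.E // e ∈ F ∧ d.v ∈ G.inc e})).2.2⟩

lemma flipV_e (d : Dart G F) : (flipV d).e = d.e := rfl
lemma flipE_v (d : Dart G F) : (flipE d).v = d.v := rfl

lemma flipV_invol : Function.Involutive (flipV (G := G) (F := F)) := by
  intro d
  ext
  · rfl
  · show (oth (⟨(flipV d).v, (flipV d).hv⟩ : {w : G.V // w ∈ G.inc d.e})).1 = d.v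
    have h : (⟨(flipV d).v, (flipV d).hv⟩ : {w // w ∈ G.inc d.e}) =
        oth (⟨d.v, d.hv⟩ : {w : G.V // w ∈ G.inc d.e}) := rfl
    rw [h, oth_invol]

lemma flipE_invol : Function.Involutive (flipE (G := G) (F := F)) := by
  intro d
  ext
  · show (oth (⟨(flipE d).e, (flipE d).he, (flipE d).hv⟩ :
        {e : G.E // e ∈ F ∧ d.v ∈ G.inc e})).1 = d.e
    have h : (⟨(flipE d).e, (flipE d).he, (flipE d).hv⟩ : {e // e ∈ F ∧ d.v ∈ G.inc e}) =
        oth (⟨d.e, d.he, d.hv⟩ : {e : G.E // e ∈ F ∧ d.v ∈ G.inc e}) := rfl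
    rw [h, oth_invol]
  · rfl

lemma flipV_v_ne (hG : G.Loopless) (d : Dart G F) : (flipV d).v ≠ d.v := by
  intro h
  exact oth_ne (card_endpoints hG d.e) ⟨d.v, d.hv⟩ (Subtype.ext h)

lemma flipE_e_ne (hF : G.IsTwoFactor F) (d : Dart G F) : (flipE d).e ≠ d.e := by
  intro h
  exact oth_ne (hF d.v) ⟨d.e, d.he, d.hv⟩ (Subtype.ext h)

lemma flipV_ne (hG : G.Loopless) (d : Dart G F) : flipV d ≠ d :=
  fun h => flipV_v_ne hG d (by rw [h])
lemma flipE_ne (hF : G.IsTwoFactor F) (d : Dart G F) : flipE d ≠ d :=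
  fun h => flipE_e_ne hF d (by rw [h])

/-- every dart of edge `e` is `d` or `flipV d`. -/
lemma dart_eq_or_flipV (hG : G.Loopless) (d d' : Dart G F) (h : d'.e = d.e) :
    d' = d ∨ d' = flipV d := by
  by_cases hv : d'.v = d.v
  · left; ext <;> assumption
  · right
    have h2 : (⟨d'.v, h ▸ d'.hv⟩ : {w // w ∈ G.inc d.e}) =
        oth (⟨d.v, d.hv⟩ : {w : G.V // w ∈ G.inc d.e}) :=
      oth_eq_of_ne (card_endpoints hG d.e) (fun hc => hv (congrArg Subtype.val hc))
    ext
    · exact h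
    · exact congrArg Subtype.val h2

/-- every dart at vertex `v` is `d` or `flipE d`. -/
lemma dart_eq_or_flipE (hF : G.IsTwoFactor F) (d d' : Dart G F) (h : d'.v = d.v) :
    d' = d ∨ d' = flipE d := by
  by_cases he : d'.e = d.e
  · left; ext <;> assumption
  · right
    have h2 : (⟨d'.e, d'.he, h ▸ d'.hv⟩ : {e // e ∈ F ∧ d.v ∈ G.inc e}) =
        oth (⟨d.e, d.he, d.hv⟩ : {e : G.E // e ∈ F ∧ d.v ∈ G.inc e}) :=
      oth_eq_of_ne (hF d.v) (fun hc => he (congrArg Subtype.val hc))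
    ext
    · exact congrArg Subtype.val h2
    · exact h

variable (G F) in
/-- σ = β ∘ α. -/
noncomputable def sig : Equiv.Perm (Dart G F) :=
  ((flipV_invol (G := G) (F := F)).toPerm).trans ((flipE_invol (G := G) (F := F)).toPerm)

lemma sig_apply (d : Dart G F) : sig G F d = flipE (flipV d) := rfl

lemma sig_inv_apply (d : Dart G F) : (sig G F)⁻¹ d = flipV (flipE d) := by
  rw [Equiv.Perm.inv_eq_iff_eq, sig_apply, flipV_invol, flipE_invol]

lemma toPerm_inv_apply {X : Type} {f : X → X} (h : Function.Involutive f) (x : X) :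
    ((h.toPerm)⁻¹ : Equiv.Perm X) x = f x := by
  show (h.toPerm).symm x = f x
  rw [Function.Involutive.toPerm_symm]
  rfl

lemma conjA_apply (d : Dart G F) :
    flipV (sig G F (flipV d)) = (sig G F)⁻¹ d := by
  rw [sig_inv_apply, sig_apply, flipV_invol]

/-- conjugation: A σ A = σ⁻¹ where A = flipV. -/
lemma conjA : (flipV_invol (G := G) (F := F)).toPerm * sig G F *
    ((flipV_invol (G := G) (F := F)).toPerm)⁻¹ = (sig G F)⁻¹ := by
  refine Equiv.ext fun d => ?_
  simp only [Equiv.Perm.coe_mul, Function.comp_apply]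
  rw [toPerm_inv_apply, Function.Involutive.coe_toPerm]
  exact conjA_apply d

lemma flipV_zpow (k : ℤ) (d : Dart G F) :
    flipV ((sig G F ^ k) d) = ((sig G F)⁻¹ ^ k) (flipV d) := by
  have h := congrArg (fun p : Equiv.Perm (Dart G F) => p (flipV d))
    (conj_zpow (i := k) (a := (flipV_invol (G := G) (F := F)).toPerm) (b := sig G F))
  rw [conjA] at h
  simp only [Equiv.Perm.coe_mul, Function.comp_apply] at h
  rw [toPerm_inv_apply, flipV_invol] at h
  rw [Function.Involutive.coe_toPerm] at h
  exact h.symm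

/-- Key lemma: a dart is never in the same σ-cycle as its edge-mate. -/
lemma not_sameCycle_flipV (hG : G.Loopless) (hF : G.IsTwoFactor F) (d : Dart G F) :
    ¬ (sig G F).SameCycle d (flipV d) := by
  rintro ⟨k, hk⟩
  have key : ∀ j : ℤ, flipV ((sig G F ^ j) d) = (sig G F ^ (k - j)) d := by
    intro j
    rw [flipV_zpow, inv_zpow, ← zpow_neg, ← hk, ← Equiv.Perm.mul_apply, ← zpow_add]
    congr 2
    ring_nf
  rcases Int.even_or_odd k with ⟨j, hj⟩ | ⟨j, hj⟩
  · have h := key j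
    rw [hj, show j + j - j = j by ring] at h
    exact flipV_ne hG _ h
  · have hE : ∀ m : ℤ, flipE ((sig G F ^ m) d) = (sig G F ^ (k - m + 1)) d := by
      intro m
      have h1 : flipE ((sig G F ^ m) d) =
          flipV (((sig G F)⁻¹) ((sig G F ^ m) d)) := by
        rw [sig_inv_apply, flipV_invol]
      rw [h1, ← zpow_neg_one, ← Equiv.Perm.mul_apply, ← zpow_add, key]
      congr 1
      ring_nf
    have h := hE (j + 1)
    rw [hj, show 2 * j + 1 - (j + 1) + 1 = j + 1 by ring] at h
    exact flipE_ne hF _ h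

variable (G F) in
/-- The setoid of σ-cycles. -/
def dartSetoid : Setoid (Dart G F) :=
  ⟨(sig G F).SameCycle, Equiv.Perm.SameCycle.equivalence _⟩

variable (G F) in
/-- The type of σ-cycles. -/
def Cyc : Type := Quotient (dartSetoid G F)

instance : Finite (Cyc G F) := Quotient.finite _

def cyc (d : Dart G F) : Cyc G F := Quotient.mk (dartSetoid G F) d

lemma cyc_eq_iff {d d' : Dart G F} : cyc d = cyc d' ↔ (sig G F).SameCycle d d' :=
  ⟨fun h => Quotient.exact h, fun h => Quotient.sound h⟩

lemma cyc_sig (d : Dart G F) : cyc (sig G F d) = cyc d :=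
  cyc_eq_iff.mpr ⟨-1, by simp⟩

lemma cyc_sig_zpow (k : ℤ) (d : Dart G F) : cyc ((sig G F ^ k) d) = cyc d :=
  cyc_eq_iff.mpr ⟨-k, by simp [← Equiv.Perm.mul_apply, ← zpow_add]⟩

/-- flipV descends to cycles. -/
noncomputable def cflip : Cyc G F → Cyc G F :=
  Quotient.map flipV (by
    rintro d d' ⟨k, hk⟩
    exact ⟨-k, by rw [← hk, flipV_zpow, inv_zpow, ← zpow_neg]⟩)

lemma cflip_cyc (d : Dart G F) : cflip (cyc d) = cyc (flipV d) := rfl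

lemma cflip_cflip (q : Cyc G F) : cflip (cflip q) = q := by
  induction q using Quotient.ind with
  | _ d =>
    show cflip (cflip (cyc d)) = cyc d
    rw [cflip_cyc, cflip_cyc, flipV_invol]

lemma cflip_ne (hG : G.Loopless) (hF : G.IsTwoFactor F) (q : Cyc G F) : cflip q ≠ q := by
  induction q using Quotient.ind with
  | _ d =>
    show cflip (cyc d) ≠ cyc d
    rw [cflip_cyc]
    exact fun h => not_sameCycle_flipV hG hF d (cyc_eq_iff.mp h.symm)

variable (G F) in
/-- Pair up each cycle with its reverse. -/
def pairSetoid : Setoid (Cyc G F) :=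
  ⟨fun q q' => q' = q ∨ q' = cflip q, by
    refine ⟨fun q => Or.inl rfl, ?_, ?_⟩
    · rintro q q' (rfl | rfl)
      · exact Or.inl rfl
      · exact Or.inr (cflip_cflip q).symm
    · intro q q' q'' h1 h2
      rcases h1 with h1 | h1 <;> rcases h2 with h2 | h2
      · exact Or.inl (h2.trans h1)
      · exact Or.inr (h2.trans (congrArg cflip h1))
      · exact Or.inr (h2.trans h1)
      · exact Or.inl ((h2.trans (congrArg cflip h1)).trans (cflip_cflip q))⟩

variable (G F) in
/-- The chosen set of cycle-orientations: one from each pair. -/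
noncomputable def RSet : Set (Cyc G F) :=
  {q | (Quotient.mk (pairSetoid G F) q).out = q}

lemma pair_mk_cflip (q : Cyc G F) :
    Quotient.mk (pairSetoid G F) (cflip q) = Quotient.mk (pairSetoid G F) q :=
  Quotient.sound (Or.inr (cflip_cflip q).symm)

lemma RSet_cflip (hG : G.Loopless) (hF : G.IsTwoFactor F) (q : Cyc G F) :
    cflip q ∈ RSet G F ↔ q ∉ RSet G F := by
  have hout0 : q = (Quotient.mk (pairSetoid G F) q).out ∨
      q = cflip ((Quotient.mk (pairSetoid G F) q).out) :=
    Quotient.exact (Quotient.out_eq (Quotient.mk (pairSetoid G F) q))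
  have hout : (Quotient.mk (pairSetoid G F) q).out = q ∨
      (Quotient.mk (pairSetoid G F) q).out = cflip q := by
    rcases hout0 with h | h
    · exact Or.inl h.symm
    · refine Or.inr ?_
      conv_rhs => rw [h, cflip_cflip]
  constructor
  · intro h1 h2
    rw [RSet, Set.mem_setOf_eq, pair_mk_cflip] at h1
    rw [RSet, Set.mem_setOf_eq] at h2
    exact cflip_ne hG hF q (h1.symm.trans h2)
  · intro h2
    rw [RSet, Set.mem_setOf_eq] at h2 ⊢
    rw [pair_mk_cflip]
    rcases hout with h | h
    · exact absurd h h2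
    · exact h

lemma periodicPt (d : Dart G F) : d ∈ Function.periodicPts (⇑(sig G F)) := by
  have : Fintype (Dart G F) := Fintype.ofFinite _
  refine ⟨orderOf (sig G F), orderOf_pos _, ?_⟩
  show (⇑(sig G F))^[orderOf (sig G F)] d = d
  rw [Equiv.Perm.iterate_eq_pow, pow_orderOf_eq_one]
  rfl

variable (G F) in
/-- Length of a cycle. -/
noncomputable def clen (q : Cyc G F) : ℕ :=
  Function.minimalPeriod (⇑(sig G F)) q.out

lemma clen_pos (q : Cyc G F) : 0 < clen G F q :=
  Function.minimalPeriod_pos_of_mem_periodicPts (periodicPt q.out)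

lemma cyc_out (q : Cyc G F) : cyc q.out = q := Quotient.out_eq q

lemma exists_idx {q : Cyc G F} {d : Dart G F} (hd : cyc d = q) :
    ∃ k, k < clen G F q ∧ (⇑(sig G F))^[k] q.out = d := by
  have hsc : (sig G F).SameCycle q.out d := by
    refine cyc_eq_iff.mp ?_
    rw [cyc_out, hd]
  obtain ⟨i, _, hi⟩ := hsc.exists_pow_eq'
  refine ⟨i % clen G F q, Nat.mod_lt _ (clen_pos q), ?_⟩
  have hmod : (⇑(sig G F))^[i % Function.minimalPeriod (⇑(sig G F)) q.out] q.out =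
      (⇑(sig G F))^[i] q.out := Function.iterate_mod_minimalPeriod_eq
  rw [show clen G F q = Function.minimalPeriod (⇑(sig G F)) q.out from rfl, hmod,
    Equiv.Perm.iterate_eq_pow]
  exact hi

lemma idx_unique {q : Cyc G F} {k k' : ℕ} (hk : k < clen G F q) (hk' : k' < clen G F q)
    (h : (⇑(sig G F))^[k] q.out = (⇑(sig G F))^[k'] q.out) : k = k' :=
  Function.iterate_injOn_Iio_minimalPeriod hk hk' h

/-- Position of a dart in its cycle. -/
noncomputable def idx (d : Dart G F) : ℕ := (exists_idx (d := d) rfl).choose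

lemma idx_lt (d : Dart G F) : idx d < clen G F (cyc d) :=
  (exists_idx rfl).choose_spec.1

lemma iterate_idx (d : Dart G F) : (⇑(sig G F))^[idx d] (cyc d).out = d :=
  (exists_idx rfl).choose_spec.2

lemma idx_eq {d : Dart G F} {k : ℕ} (hk : k < clen G F (cyc d))
    (h : (⇑(sig G F))^[k] (cyc d).out = d) : idx d = k :=
  idx_unique (idx_lt d) hk ((iterate_idx d).trans h.symm)

lemma cyc_iterate (k : ℕ) (d : Dart G F) : cyc ((⇑(sig G F))^[k] d) = cyc d := by
  rw [Equiv.Perm.iterate_eq_pow]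
  exact cyc_eq_iff.mpr ⟨-(k : ℤ), by simp [← Equiv.Perm.mul_apply, ← zpow_add,
    ← zpow_natCast, ← zpow_add]⟩

/-- The cardinality of a cycle class is its length. -/
lemma card_class (q : Cyc G F) :
    Nat.card {d : Dart G F // cyc d = q} = clen G F q := by
  have hbij : Function.Bijective
      (fun k : Fin (clen G F q) => (⟨(⇑(sig G F))^[k.1] q.out,
        by rw [cyc_iterate, cyc_out]⟩ : {d : Dart G F // cyc d = q})) := by
    constructor
    · rintro ⟨k, hk⟩ ⟨k', hk'⟩ h
      exact Fin.ext (idx_unique hk hk' (congrArg Subtype.val h))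
    · rintro ⟨d, hd⟩
      obtain ⟨k, hk, hkd⟩ := exists_idx hd
      exact ⟨⟨k, hk⟩, Subtype.ext hkd⟩
  rw [← Nat.card_eq_of_bijective _ hbij, Nat.card_eq_fintype_card, Fintype.card_fin]


lemma exists_mem_sym2 {α : Type*} (z : Sym2 α) : ∃ x, x ∈ z := by
  obtain ⟨x, y, rfl⟩ := sym2_rep z
  exact ⟨x, Sym2.mem_mk_left x y⟩

/-- Some dart on an edge of `F`. -/
noncomputable def dartOf {e : G.E} (he : e ∈ F) : Dart G F :=
  ⟨e, (exists_mem_sym2 (G.inc e)).choose, he, (exists_mem_sym2 (G.inc e)).choose_spec⟩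

/-- The chosen dart of an edge: the one whose cycle is in `RSet`. -/
noncomputable def chosen {e : G.E} (he : e ∈ F) : Dart G F :=
  if cyc (dartOf he) ∈ RSet G F then dartOf he else flipV (dartOf he)

lemma chosen_e {e : G.E} (he : e ∈ F) : (chosen he).e = e := by
  rw [chosen]
  split_ifs <;> rfl

lemma chosen_mem (hG : G.Loopless) (hF : G.IsTwoFactor F) {e : G.E} (he : e ∈ F) :
    cyc (chosen he) ∈ RSet G F := by
  rw [chosen]
  split_ifs with h
  · exact h
  · rw [← cflip_cyc]
    exact (RSet_cflip hG hF _).mpr h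

lemma chosen_unique (hG : G.Loopless) (hF : G.IsTwoFactor F) {e : G.E} (he : e ∈ F)
    {d : Dart G F} (hd : d.e = e) (hR : cyc d ∈ RSet G F) : d = chosen he := by
  have h0 : (dartOf he).e = e := rfl
  rcases dart_eq_or_flipV hG (dartOf he) d (hd.trans h0.symm) with h | h
  · rw [chosen]
    split_ifs with hsp
    · exact h
    · exfalso
      rw [h] at hR
      exact hsp hR
  · rw [chosen]
    split_ifs with hsp
    · exfalso
      rw [h, ← cflip_cyc, RSet_cflip hG hF] at hR
      exact hR hsp
    · exact h

variable (G F) in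
/-- The set of edges to delete: per odd cycle, the edge whose chosen dart is last. -/
def SOdd : Set G.E :=
  {e | ∃ he : e ∈ F, Odd (clen G F (cyc (chosen he))) ∧
    idx (chosen he) = clen G F (cyc (chosen he)) - 1}

lemma SOdd_sub : SOdd G F ⊆ F := fun _ h => h.choose

variable (G F) in
/-- The local 2-coloring of the fiber. -/
noncomputable def locColor (e : G.E) : Fin 2 :=
  if he : e ∈ F then ⟨idx (chosen he) % 2, Nat.mod_lt _ (by omega)⟩ else 0

/-- How the index changes under σ. -/
lemma idx_sig (d : Dart G F) :
    (idx (sig G F d) = idx d + 1 ∧ idx d + 1 < clen G F (cyc d)) ∨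
      (idx d = clen G F (cyc d) - 1 ∧ idx (sig G F d) = 0) := by
  have hcyc : cyc (sig G F d) = cyc d := cyc_sig d
  have hlt := idx_lt d
  have hit : (⇑(sig G F))^[idx d + 1] (cyc d).out = sig G F d := by
    rw [Function.iterate_succ_apply', iterate_idx]
  by_cases h : idx d + 1 < clen G F (cyc d)
  · left
    refine ⟨?_, h⟩
    refine idx_eq (by rw [hcyc]; exact h) ?_
    rw [hcyc]
    exact hit
  · right
    have hL : idx d = clen G F (cyc d) - 1 := by omega
    refine ⟨hL, ?_⟩
    have hout : (⇑(sig G F))^[clen G F (cyc d)] (cyc d).out = (cyc d).out :=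
      Function.iterate_minimalPeriod
    have hsd : sig G F d = (cyc d).out := by
      rw [← hit, show idx d + 1 = clen G F (cyc d) by omega, hout]
    refine idx_eq (by rw [hcyc]; exact clen_pos _) ?_
    rw [hcyc]
    exact hsd.symm

/-- Adjacent chosen darts (x and σ x) of non-deleted edges get different parities. -/
lemma parity_step {e : G.E} (he : e ∈ F) (hs : e ∉ SOdd G F) :
    idx (sig G F (chosen he)) % 2 ≠ idx (chosen he) % 2 := by
  rcases idx_sig (chosen he) with ⟨h1, _⟩ | ⟨h1, h2⟩
  · omega
  · rcases Nat.even_or_odd (clen G F (cyc (chosen he))) with hev | ho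
    · have hpos := clen_pos (cyc (chosen he))
      rw [h1, h2]
      rcases hev with ⟨m, hm⟩
      omega
    · exact absurd ⟨he, ho, h1⟩ hs

lemma locColor_val {e : G.E} (he : e ∈ F) :
    (locColor G F e).1 = idx (chosen he) % 2 := by
  rw [locColor, dif_pos he]

/-- Properness of the local coloring on the fiber minus the deleted edges. -/
lemma fiber_proper (hG : G.Loopless) (hF : G.IsTwoFactor F) {e e' : G.E}
    (he : e ∈ F) (he' : e' ∈ F) (hs : e ∉ SOdd G F) (hs' : e' ∉ SOdd G F)
    (hne : e ≠ e') {v : G.V} (hv : v ∈ G.inc e) (hv' : v ∈ G.inc e') :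
    locColor G F e ≠ locColor G F e' := by
  have hd2 : (⟨e', v, he', hv'⟩ : Dart G F) = flipE ⟨e, v, he, hv⟩ := by
    rcases dart_eq_or_flipE hF ⟨e, v, he, hv⟩ ⟨e', v, he', hv'⟩ rfl with h | h
    · exact absurd (congrArg Dart.e h) hne.symm
    · exact h
  set d1 : Dart G F := ⟨e, v, he, hv⟩ with hd1def
  intro hcol
  have hcolv : idx (chosen he) % 2 = idx (chosen he') % 2 := by
    rw [← locColor_val he, ← locColor_val he', hcol]
  by_cases hR : cyc d1 ∈ RSet G F
  · -- chosen he = d1, chosen he' = flipV (flipE d1) = σ⁻¹ d1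
    have hc1 : d1 = chosen he := chosen_unique hG hF he rfl hR
    have hx : flipV (flipE d1) = (sig G F)⁻¹ d1 := (sig_inv_apply d1).symm
    have hxcyc : cyc (flipV (flipE d1)) = cyc d1 := by
      rw [hx]
      exact cyc_eq_iff.mpr ⟨1, by simp⟩
    have hc2 : flipV (flipE d1) = chosen he' := by
      refine chosen_unique hG hF he' ?_ (by rw [hxcyc]; exact hR)
      rw [← hd2]
      rfl
    have hstep : sig G F (chosen he') = chosen he := by
      rw [← hc2, ← hc1, hx]
      simp
    exact parity_step he' hs' (by rw [hstep, hcolv])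
  · -- chosen he = flipV d1, chosen he' = flipE d1 = σ (flipV d1)
    have hc1 : flipV d1 = chosen he := by
      refine chosen_unique hG hF he rfl ?_
      rw [← cflip_cyc]
      exact (RSet_cflip hG hF _).mpr hR
    have hsd : sig G F (flipV d1) = flipE d1 := by
      rw [sig_apply, flipV_invol]
    have hc2 : flipE d1 = chosen he' := by
      refine chosen_unique hG hF he' (congrArg Dart.e hd2.symm) ?_
      rw [← hsd, cyc_sig, hc1]
      exact chosen_mem hG hF he
    have hstep : sig G F (chosen he) = chosen he' := by
      rw [← hc1, ← hc2, hsd]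
    exact parity_step he hs (by rw [hstep, hcolv])

/-- Deleted edges are at most the odd cycles (as cycle pairs). -/
lemma card_SOdd_le (hG : G.Loopless) (hF : G.IsTwoFactor F) :
    Nat.card (SOdd G F) ≤
      Nat.card {q : Cyc G F // q ∈ RSet G F ∧ Odd (clen G F q)} := by
  refine Nat.card_le_card_of_injective
    (fun e : SOdd G F => ⟨cyc (chosen e.2.choose),
      chosen_mem hG hF _, e.2.choose_spec.1⟩) ?_
  rintro ⟨e, hsE⟩ ⟨e', hsE'⟩ hq
  simp only [Subtype.mk.injEq] at hq
  have h1 := iterate_idx (chosen hsE.choose)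
  have h2 := iterate_idx (chosen hsE'.choose)
  have hidx : idx (chosen hsE.choose) = idx (chosen hsE'.choose) := by
    rw [hsE.choose_spec.2, hsE'.choose_spec.2, hq]
  have hch : chosen hsE.choose = chosen hsE'.choose := by
    rw [← h1, ← h2, hidx, hq]
  have := congrArg Dart.e hch
  rw [chosen_e, chosen_e] at this
  exact Subtype.ext this


section Connect
variable (G F) in
/-- Pairs of mutually reversed cycles. -/
def CPair : Type := Quotient (pairSetoid G F)

def pr (q : Cyc G F) : CPair G F := Quotient.mk (pairSetoid G F) q

lemma pr_cflip (q : Cyc G F) : pr (cflip q) = pr q := pair_mk_cflip q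

lemma pr_flipV (d : Dart G F) : pr (cyc (flipV d)) = pr (cyc d) := by
  rw [← cflip_cyc, pr_cflip]

lemma pr_flipE (d : Dart G F) : pr (cyc (flipE d)) = pr (cyc d) := by
  have h : flipE d = sig G F (flipV d) := by rw [sig_apply, flipV_invol]
  rw [h, cyc_sig, pr_flipV]

lemma pr_eq_cases {q q' : Cyc G F} (h : pr q = pr q') : q = q' ∨ q = cflip q' := by
  have := Quotient.exact h
  rcases this with h1 | h1
  · exact Or.inl h1.symm
  · right
    rw [h1, cflip_cflip]

/-- A dart at each vertex. -/
noncomputable def vdart (hF : G.IsTwoFactor F) (v : G.V) : Dart G F := by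
  have h : Nonempty {e : G.E // e ∈ F ∧ v ∈ G.inc e} :=
    Nat.card_pos_iff.mp (by rw [hF v]; omega) |>.1
  exact ⟨h.some.1, v, h.some.2.1, h.some.2.2⟩

lemma vdart_v (hF : G.IsTwoFactor F) (v : G.V) : (vdart hF v).v = v := rfl

/-- The cycle pair of a vertex. -/
noncomputable def vpair (hF : G.IsTwoFactor F) (v : G.V) : CPair G F :=
  pr (cyc (vdart hF v))

lemma vpair_eq (hF : G.IsTwoFactor F) (d : Dart G F) : pr (cyc d) = vpair hF d.v := by
  rcases dart_eq_or_flipE hF (vdart hF d.v) d rfl with h | h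
  · rw [h]; rfl
  · rw [h, pr_flipE]; rfl

lemma adj_of_dart (hG : G.Loopless) (d : Dart G F) :
    (G.factorGraph F).Adj d.v (flipV d).v := by
  refine ⟨(flipV_v_ne hG d).symm, d.e, d.he, ?_⟩
  exact sym2_eq_of_mem d.hv ((flipV_e d) ▸ (flipV d).hv) (flipV_v_ne hG d).symm

lemma reach_flipV (hG : G.Loopless) (d : Dart G F) :
    (G.factorGraph F).Reachable d.v (flipV d).v := (adj_of_dart hG d).reachable

lemma reach_sig (hG : G.Loopless) (d : Dart G F) :
    (G.factorGraph F).Reachable d.v (sig G F d).v := by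
  have h : (sig G F d).v = (flipV d).v := rfl
  rw [h]
  exact reach_flipV hG d

lemma reach_sig_pow (hG : G.Loopless) (k : ℕ) (d : Dart G F) :
    (G.factorGraph F).Reachable d.v ((sig G F ^ k) d).v := by
  induction k with
  | zero => exact SimpleGraph.Reachable.refl _
  | succ n ih =>
    have h : (sig G F ^ (n + 1)) d = sig G F ((sig G F ^ n) d) := by
      rw [pow_succ', Equiv.Perm.mul_apply]
    rw [h]
    exact ih.trans (reach_sig hG _)

lemma reach_of_sameCycle (hG : G.Loopless) {d d' : Dart G F}
    (h : (sig G F).SameCycle d d') : (G.factorGraph F).Reachable d.v d'.v := by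
  obtain ⟨k, _, hk⟩ := h.exists_pow_eq'
  rw [← hk]
  exact reach_sig_pow hG k d

lemma reach_of_pr_eq (hG : G.Loopless) {d d' : Dart G F}
    (h : pr (cyc d) = pr (cyc d')) : (G.factorGraph F).Reachable d.v d'.v := by
  rcases pr_eq_cases h with h1 | h1
  · exact reach_of_sameCycle hG (cyc_eq_iff.mp h1).symm |>.symm
  · rw [cflip_cyc] at h1
    have h2 := reach_of_sameCycle hG (cyc_eq_iff.mp h1)
    exact h2.trans (reach_flipV hG d').symm

lemma vpair_adj (hG : G.Loopless) (hF : G.IsTwoFactor F) {u w : G.V}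
    (h : (G.factorGraph F).Adj u w) : vpair hF u = vpair hF w := by
  obtain ⟨hne, e, heF, hinc⟩ := h
  have hu : u ∈ G.inc e := by rw [hinc]; exact Sym2.mem_mk_left u w
  set d : Dart G F := ⟨e, u, heF, hu⟩ with hd
  have hwv : (flipV d).v = w := by
    have hmem : (flipV d).v ∈ G.inc e := (flipV d).hv
    rw [hinc, Sym2.mem_iff] at hmem
    rcases hmem with h1 | h1
    · exact absurd h1 (flipV_v_ne hG d)
    · exact h1
  rw [← vpair_eq hF d, ← hwv, ← vpair_eq hF (flipV d), pr_flipV]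

lemma vpair_reach (hG : G.Loopless) (hF : G.IsTwoFactor F) {u w : G.V}
    (h : (G.factorGraph F).Reachable u w) : vpair hF u = vpair hF w := by
  obtain ⟨p⟩ := h
  induction p with
  | nil => rfl
  | cons ha _ ih => exact (vpair_adj hG hF ha).trans ih

/-- Class cardinality equals the cardinality of the corresponding component. -/
lemma card_component (hG : G.Loopless) (hF : G.IsTwoFactor F) (q : Cyc G F) :
    Nat.card {v : G.V // (G.factorGraph F).connectedComponentMk v =
        (G.factorGraph F).connectedComponentMk q.out.v} = clen G F q := by
  rw [← card_class q]
  have hmk : ∀ d : {d : Dart G F // cyc d = q},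
      (G.factorGraph F).connectedComponentMk d.1.v =
        (G.factorGraph F).connectedComponentMk q.out.v := by
    intro d
    refine SimpleGraph.ConnectedComponent.sound ?_
    refine reach_of_pr_eq hG ?_
    rw [d.2, cyc_out]
  refine (Nat.card_eq_of_bijective
    (fun d : {d : Dart G F // cyc d = q} =>
      (⟨d.1.v, hmk d⟩ : {v : G.V // (G.factorGraph F).connectedComponentMk v =
        (G.factorGraph F).connectedComponentMk q.out.v})) ⟨?_, ?_⟩).symm
  · rintro ⟨d, hd⟩ ⟨d', hd'⟩ h
    simp only [Subtype.mk.injEq] at h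
    rcases dart_eq_or_flipE hF d d' h.symm with h1 | h1
    · exact Subtype.ext h1.symm
    · exfalso
      rw [h1, ← cyc_eq_iff.mpr (Equiv.Perm.SameCycle.refl _ _)] at hd'
      have hE : cyc (flipE d) = cflip (cyc d) := by
        have h2 : flipE d = sig G F (flipV d) := by rw [sig_apply, flipV_invol]
        rw [h2, cyc_sig, cflip_cyc]
      rw [hE, hd] at hd'
      exact cflip_ne hG hF q hd'
  · rintro ⟨v, hv⟩
    have hreach : (G.factorGraph F).Reachable v q.out.v :=
      (SimpleGraph.ConnectedComponent.exact hv)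
    have hp : vpair hF v = pr q := by
      rw [vpair_reach hG hF hreach, ← vpair_eq hF q.out, cyc_out]
    rcases pr_eq_cases (hp : pr (cyc (vdart hF v)) = pr q) with h1 | h1
    · exact ⟨⟨vdart hF v, h1⟩, rfl⟩
    · refine ⟨⟨flipE (vdart hF v), ?_⟩, rfl⟩
      have hE : cyc (flipE (vdart hF v)) = cflip (cyc (vdart hF v)) := by
        have h2 : flipE (vdart hF v) = sig G F (flipV (vdart hF v)) := by
          rw [sig_apply, flipV_invol]
        rw [h2, cyc_sig, cflip_cyc]
      rw [hE, h1, cflip_cflip]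

/-- Odd chosen cycles inject into odd components. -/
lemma card_oddR_le (hG : G.Loopless) (hF : G.IsTwoFactor F) :
    Nat.card {q : Cyc G F // q ∈ RSet G F ∧ Odd (clen G F q)} ≤
      G.oddCycles F := by
  rw [Mgraph.oddCycles]
  refine Nat.card_le_card_of_injective
    (fun q : {q : Cyc G F // q ∈ RSet G F ∧ Odd (clen G F q)} =>
      ⟨(G.factorGraph F).connectedComponentMk q.1.out.v, ?_⟩) ?_
  · rw [card_component hG hF]
    exact q.2.2
  · rintro ⟨q, hq⟩ ⟨q', hq'⟩ h
    simp only [Subtype.mk.injEq] at h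
    have hreach := SimpleGraph.ConnectedComponent.exact h
    have hp : pr q = pr q' := by
      have h1 := vpair_reach hG hF hreach
      rw [← vpair_eq hF q.out, ← vpair_eq hF q'.out, cyc_out, cyc_out] at h1
      exact h1
    rcases pr_eq_cases hp with h1 | h1
    · exact Subtype.ext h1
    · exfalso
      rw [h1] at hq
      exact ((RSet_cflip hG hF q').mp hq.1) hq'.1

end Connect


open Mgraph in
lemma partition_count (G : Mgraph) {n : ℕ} (f : G.E → Option (Fin n))
    (hTF : ∀ i, G.IsTwoFactor {e | f e = some i}) (v : G.V) :
    Nat.card {e : G.E // v ∈ G.inc e} =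
      Nat.card {e : G.E // f e = none ∧ v ∈ G.inc e} + 2 * n := by
  have e1 : {e : G.E // v ∈ G.inc e} ≃
      (Σ o : Option (Fin n), {e : G.E // f e = o ∧ v ∈ G.inc e}) :=
    { toFun := fun x => ⟨f x.1, x.1, rfl, x.2⟩
      invFun := fun y => ⟨y.2.1, y.2.2.2⟩
      left_inv := fun x => rfl
      right_inv := fun y => by
        obtain ⟨o, e, he, hv⟩ := y
        subst he
        rfl }
  rw [Nat.card_congr e1]
  letI : ∀ o : Option (Fin n), Fintype {e : G.E // f e = o ∧ v ∈ G.inc e} :=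
    fun o => Fintype.ofFinite _
  rw [Nat.card_eq_fintype_card, Fintype.card_sigma, Fintype.sum_option]
  have h2 : ∀ i : Fin n, Fintype.card {e : G.E // f e = some i ∧ v ∈ G.inc e} = 2 := by
    intro i
    rw [← Nat.card_eq_fintype_card]
    exact hTF i v
  rw [Finset.sum_congr rfl (fun i _ => h2 i), Finset.sum_const, Finset.card_univ,
    Fintype.card_fin, ← Nat.card_eq_fintype_card]
  ring

end AuxRO


open Mgraph AuxRO in
theorem resistance_le_oddness' (G : Mgraph) (hG : G.Loopless) (s : ℕ)
    (hreg : G.Regular s) (hconn : G.Connected) :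
    (G.resistance : ℕ∞) ≤ G.oddness := by
  refine le_sInf ?_
  rintro k ⟨n, f, hdec, rfl⟩
  rw [Nat.cast_le]
  set Fi : Fin n → Set G.E := fun i => {e | f e = some i} with hFidef
  have hTF : ∀ i, G.IsTwoFactor (Fi i) := hdec.2
  have hne : Nonempty G.V := hconn.nonempty
  have hdeg : G.maxDegree = s := by
    rw [Mgraph.maxDegree]
    have hr : Set.range G.degree = {s} := by
      ext x
      simp only [Set.mem_range, Set.mem_singleton_iff]
      constructor
      · rintro ⟨v, rfl⟩; exact hreg v
      · rintro rfl; exact ⟨hne.some, hreg hne.some⟩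
    rw [hr, csSup_singleton]
  have hpart : ∀ v : G.V, s = Nat.card {e : G.E // f e = none ∧ v ∈ G.inc e} + 2 * n := by
    intro v
    rw [← hreg v]
    exact partition_count G f hTF v
  have hs_ge : 2 * n ≤ s := by have := hpart hne.some; omega
  have hkey : ∀ e : G.E, f e = none → 2 * n < s := by
    intro e hfe
    rcases hdec.1 with h | h
    · exact absurd hfe (h e)
    · obtain ⟨v, hv⟩ := exists_mem_sym2 (G.inc e)
      have h1 : Nat.card {e' : G.E // f e' = none ∧ v ∈ G.inc e'} = 1 := h v
      have := hpart v
      omega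
  set S : Set G.E := {e | ∃ i : Fin n, e ∈ SOdd G (Fi i)} with hSdef
  -- cardinality bound
  have hcard : Nat.card S ≤ G.decompOdd f := by
    have hinj : Nat.card S ≤ Nat.card (Σ i : Fin n, SOdd G (Fi i)) := by
      refine Nat.card_le_card_of_injective
        (fun x : S => ⟨x.2.choose, ⟨x.1, x.2.choose_spec⟩⟩) ?_
      rintro ⟨e, he⟩ ⟨e', he'⟩ h
      exact Subtype.ext (congrArg (fun z : (Σ i : Fin n, SOdd G (Fi i)) => z.2.1) h)
    have hsig : Nat.card (Σ i : Fin n, SOdd G (Fi i)) =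
        ∑ i : Fin n, Nat.card (SOdd G (Fi i)) := by
      letI : ∀ i : Fin n, Fintype (SOdd G (Fi i)) := fun i => Fintype.ofFinite _
      rw [Nat.card_eq_fintype_card, Fintype.card_sigma]
      exact Finset.sum_congr rfl fun i _ => (Nat.card_eq_fintype_card).symm
    have hle : ∀ i : Fin n, Nat.card (SOdd G (Fi i)) ≤ G.oddCycles (Fi i) :=
      fun i => (card_SOdd_le hG (hTF i)).trans (card_oddR_le hG (hTF i))
    have hdo : G.decompOdd f = ∑ i : Fin n, G.oddCycles (Fi i) := rfl
    rw [hdo]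
    exact hinj.trans (hsig.trans_le (Finset.sum_le_sum fun i _ => hle i))
  -- the coloring
  have hcol : (G.deleteEdges S).EdgeColorable G.maxDegree := by
    rw [hdeg]
    refine ⟨fun e' => if h : ∃ i : Fin n, f e'.1 = some i
      then ⟨2 * h.choose.1 + (locColor G (Fi h.choose) e'.1).1, by
        have h1 := h.choose.isLt
        have h2 := (locColor G (Fi h.choose) e'.1).isLt
        omega⟩
      else ⟨2 * n, by
        cases hfe : f e'.1 with
        | none => exact hkey e'.1 hfe
        | some i => exact absurd ⟨i, hfe⟩ h⟩, ?_⟩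
    rintro a b hab ⟨v, hv1, hv2⟩
    have hab1 : a.1 ≠ b.1 := fun h => hab (Subtype.ext h)
    have hv1' : v ∈ G.inc a.1 := hv1
    have hv2' : v ∈ G.inc b.1 := hv2
    by_cases ha : ∃ i : Fin n, f a.1 = some i <;>
      by_cases hb : ∃ i : Fin n, f b.1 = some i
    · simp only [dif_pos ha, dif_pos hb]
      by_cases hij : ha.choose = hb.choose
      · -- same fiber
        have hmema : a.1 ∈ Fi ha.choose := ha.choose_spec
        have hmemb : b.1 ∈ Fi ha.choose := by
          rw [hij]; exact hb.choose_spec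
        have hnsa : a.1 ∉ SOdd G (Fi ha.choose) := fun hmem => a.2 ⟨ha.choose, hmem⟩
        have hnsb : b.1 ∉ SOdd G (Fi ha.choose) := fun hmem => b.2 ⟨ha.choose, hmem⟩
        have hloc := fiber_proper hG (hTF ha.choose) hmema hmemb hnsa hnsb hab1 hv1' hv2'
        intro hc
        have hcv := congrArg Fin.val hc
        simp only at hcv
        rw [← hij] at hcv
        refine hloc (Fin.ext ?_)
        omega
      · -- different fibers
        intro hc
        have hcv := congrArg Fin.val hc
        simp only at hcv
        have h1 := (locColor G (Fi ha.choose) a.1).isLt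
        have h2 := (locColor G (Fi hb.choose) b.1).isLt
        have hijv : ha.choose.1 ≠ hb.choose.1 := fun h => hij (Fin.ext h)
        omega
    · simp only [dif_pos ha, dif_neg hb]
      intro hc
      have hcv := congrArg Fin.val hc
      simp only at hcv
      have h1 := ha.choose.isLt
      have h2 := (locColor G (Fi ha.choose) a.1).isLt
      omega
    · simp only [dif_neg ha, dif_pos hb]
      intro hc
      have hcv := congrArg Fin.val hc
      simp only at hcv
      have h1 := hb.choose.isLt
      have h2 := (locColor G (Fi hb.choose) b.1).isLt
      omega
    · -- both in the 1-factor
      exfalso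
      have hfa : f a.1 = none := by
        cases hfe : f a.1 with
        | none => rfl
        | some i => exact absurd ⟨i, hfe⟩ ha
      have hfb : f b.1 = none := by
        cases hfe : f b.1 with
        | none => rfl
        | some i => exact absurd ⟨i, hfe⟩ hb
      rcases hdec.1 with h | h
      · exact h a.1 hfa
      · have h1 : Nat.card {e' : G.E // f e' = none ∧ v ∈ G.inc e'} = 1 := h v
        obtain ⟨x, hx⟩ := Nat.card_eq_one_iff_exists.mp h1
        have ha' := hx ⟨a.1, hfa, hv1'⟩
        have hb' := hx ⟨b.1, hfb, hv2'⟩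
        have hval := congrArg Subtype.val (ha'.trans hb'.symm)
        exact hab1 hval
  -- conclude
  have hres : G.resistance ≤ Nat.card S := by
    rw [Mgraph.resistance, Mgraph.resistanceTo]
    exact Nat.sInf_le ⟨S, rfl, hcol⟩
  exact hres.trans hcard

open Mgraph in
/-- For every connected `s`-regular finite loopless multigraph `G`: `r(G) ≤ ξ(G)`. -/
theorem resistance_le_oddness (G : Mgraph) (hG : G.Loopless) (s : ℕ)
    (hreg : G.Regular s) (hconn : G.Connected) :
    (G.resistance : ℕ∞) ≤ G.oddness := by
  exact resistance_le_oddness' G hG s hreg hconn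
end

section
/- For every k ≥ 1, the complete graph K_{2k+1} on 2k+1 vertices satisfies r(K_{2k+1}) = k and ξ(K_{2k+1}) = k. -/
/-- The complete graph on `n` vertices, as a multigraph: its edges are the non-diagonal
unordered pairs of vertices. -/
def completeMgraph (n : ℕ) : Mgraph where
  V := Fin n
  E := {p : Sym2 (Fin n) // ¬ p.IsDiag}
  inc := Subtype.val

open Mgraph

namespace Kaux

lemma card_fiber_sum {α β : Type*} [Finite α] [Fintype β] (f : α → β) :
    Nat.card α = ∑ b : β, Nat.card {a : α // f a = b} := by
  classical
  have _inst : Fintype α := Fintype.ofFinite α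
  have h := Fintype.card_congr (Equiv.sigmaFiberEquiv f)
  simp only [Nat.card_eq_fintype_card]
  rw [← h, Fintype.card_sigma]

lemma sym2_exists {α : Type*} (p : Sym2 α) : ∃ a b, p = s(a, b) :=
  Sym2.inductionOn p fun a b => ⟨a, b, rfl⟩

def subsub {α : Type*} (p q : α → Prop) : {a : {x // p x} // q a.1} ≃ {x // q x ∧ p x} where
  toFun a := ⟨a.1.1, a.2, a.1.2⟩
  invFun x := ⟨⟨x.1, x.2.2⟩, x.2.1⟩
  left_inv a := rfl
  right_inv x := rfl

lemma degree_complete (n : ℕ) (v : Fin n) : (completeMgraph n).degree v = n - 1 := by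
  classical
  have e : {e : (completeMgraph n).E // v ∈ (completeMgraph n).inc e} ≃ {w : Fin n // ¬ w = v} :=
    { toFun := fun e => ⟨Sym2.Mem.other' e.2, by
        intro h
        apply e.1.2
        have hs := Sym2.other_spec' e.2
        rw [h] at hs
        have : ((completeMgraph n).inc e.1).IsDiag := by
          rw [← hs]; exact Sym2.mk_isDiag_iff.mpr rfl
        exact this⟩
      invFun := fun w => ⟨⟨s(v, w.1), by
          rw [Sym2.mk_isDiag_iff]; exact fun h => w.2 h.symm⟩, Sym2.mem_mk_left v w.1⟩
      left_inv := fun e => by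
        apply Subtype.ext; apply Subtype.ext
        exact Sym2.other_spec' e.2
      right_inv := fun w => by
        apply Subtype.ext
        show Sym2.Mem.other' (Sym2.mem_mk_left v w.1) = w.1
        exact Sym2.congr_right.mp (Sym2.other_spec' (Sym2.mem_mk_left v w.1)) }
  refine (Nat.card_congr e).trans ?_
  rw [Nat.card_eq_fintype_card,
    Fintype.card_subtype_compl, Fintype.card_subtype_eq, Fintype.card_fin]

lemma maxDegree_complete (n : ℕ) (hn : 1 ≤ n) : (completeMgraph n).maxDegree = n - 1 := by
  have h : Set.range (completeMgraph n).degree = {n - 1} := by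
    ext m
    simp only [Set.mem_range, Set.mem_singleton_iff, degree_complete]
    exact ⟨fun ⟨v, hv⟩ => hv.symm.trans (degree_complete n v), fun h => ⟨⟨0, by omega⟩, (degree_complete n _).trans h.symm⟩⟩
  rw [Mgraph.maxDegree, h, csSup_singleton]

lemma card_E (n : ℕ) : Nat.card (completeMgraph n).E = n.choose 2 := by
  classical
  have : Nat.card {p : Sym2 (Fin n) // ¬ p.IsDiag} = n.choose 2 := by
    rw [Nat.card_eq_fintype_card, Sym2.card_subtype_not_diag, Fintype.card_fin]
  exact this

lemma choose_eq (k : ℕ) : (2*k+1).choose 2 = k * (2*k+1) := by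
  rw [Nat.choose_two_right]
  rw [show (2*k+1) - 1 = 2*k from by omega]
  rw [show (2*k+1) * (2*k) = (k * (2*k+1)) * 2 from by ring]
  rw [Nat.mul_div_cancel _ (by norm_num)]

/-! ### Resistance -/

def sumZ (k : ℕ) : Sym2 (ZMod (2*k+1)) → ZMod (2*k+1) :=
  Sym2.lift ⟨fun a b => a + b, fun a b => add_comm a b⟩

def minV (k : ℕ) : Sym2 (ZMod (2*k+1)) → ℕ :=
  Sym2.lift ⟨fun a b => min a.val b.val, fun a b => min_comm _ _⟩

def rS (k : ℕ) : Set (completeMgraph (2*k+1)).E := {e | sumZ k e.1 = 0}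

def rGen (k : ℕ) (i : Fin k) : (completeMgraph (2*k+1)).E :=
  ⟨s((((i:ℕ)+1 : ℕ) : ZMod (2*k+1)), -(((i:ℕ)+1 : ℕ) : ZMod (2*k+1))), by
    show ¬ (s((((i:ℕ)+1 : ℕ) : ZMod (2*k+1)), -(((i:ℕ)+1 : ℕ) : ZMod (2*k+1))) : Sym2 (ZMod (2*k+1))).IsDiag
    rw [Sym2.mk_isDiag_iff]
    intro h
    have hlt : (i:ℕ)+1 < 2*k+1 := by have := i.2; omega
    have h1 : ((((i:ℕ)+1 : ℕ)) : ZMod (2*k+1)).val = (i:ℕ)+1 := ZMod.val_cast_of_lt hlt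
    have h0 : ((((i:ℕ)+1 : ℕ)) : ZMod (2*k+1)) ≠ 0 := by
      intro h0
      rw [h0, ZMod.val_zero] at h1
      omega
    have h2 := ZMod.neg_val ((((i:ℕ)+1 : ℕ)) : ZMod (2*k+1))
    rw [if_neg h0, h1] at h2
    rw [← h] at h2
    rw [h1] at h2
    omega⟩

lemma rGen_inj (k : ℕ) : Function.Injective (rGen k) := by
  intro a b h
  have h2 : (rGen k a).1 = (rGen k b).1 := congrArg _ h
  have hlta : (a:ℕ)+1 < 2*k+1 := by have := a.2; omega
  have hltb : (b:ℕ)+1 < 2*k+1 := by have := b.2; omega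
  have hva : ((((a:ℕ)+1 : ℕ)) : ZMod (2*k+1)).val = (a:ℕ)+1 := ZMod.val_cast_of_lt hlta
  have hvb : ((((b:ℕ)+1 : ℕ)) : ZMod (2*k+1)).val = (b:ℕ)+1 := ZMod.val_cast_of_lt hltb
  have h0b : ((((b:ℕ)+1 : ℕ)) : ZMod (2*k+1)) ≠ 0 := by
    intro h0; rw [h0, ZMod.val_zero] at hvb; omega
  rw [rGen, rGen] at h2
  replace h2 := Sym2.eq_iff.mp (show (s(((((a:ℕ)+1 : ℕ)) : ZMod (2*k+1)), -((((a:ℕ)+1 : ℕ)) : ZMod (2*k+1))) : Sym2 (ZMod (2*k+1))) = s(((((b:ℕ)+1 : ℕ)) : ZMod (2*k+1)), -((((b:ℕ)+1 : ℕ)) : ZMod (2*k+1))) from h2)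
  rcases h2 with ⟨h3, -⟩ | ⟨h3, -⟩
  · apply Fin.ext
    have := congrArg ZMod.val h3
    rw [hva, hvb] at this
    omega
  · exfalso
    have := congrArg ZMod.val h3
    rw [hva, ZMod.neg_val, if_neg h0b, hvb] at this
    have := a.2; have := b.2
    omega

lemma rS_eq_range (k : ℕ) (hk : 1 ≤ k) : rS k = Set.range (rGen k) := by
  ext e
  constructor
  · intro he
    obtain ⟨x, y, hxy⟩ := sym2_exists (α := ZMod (2*k+1)) e.1
    have hsum : x + y = 0 := by
      have : sumZ k e.1 = 0 := he
      rw [hxy] at this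
      simpa [sumZ] using this
    have hy : y = -x := by linear_combination hsum
    subst hy
    have hx0 : x ≠ 0 := by
      intro h0
      apply e.2
      have : (e.1 : Sym2 (ZMod (2*k+1))).IsDiag := by
        rw [hxy, h0]
        exact Sym2.mk_isDiag_iff.mpr neg_zero.symm
      exact this
    have hxval : 1 ≤ x.val ∧ x.val ≤ 2*k := by
      have h1 := ZMod.val_lt x
      have h2 : x.val ≠ 0 := fun h => hx0 ((ZMod.val_eq_zero x).mp h)
      omega
    have hnegval : (-x).val = 2*k+1 - x.val := by
      rw [ZMod.neg_val, if_neg hx0]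
    -- choose representative with val ≤ k
    rcases le_or_gt x.val k with hle | hgt
    · refine ⟨⟨x.val - 1, by omega⟩, ?_⟩
      apply Subtype.ext
      have hcast : (((x.val - 1 : ℕ) + 1 : ℕ) : ZMod (2*k+1)) = x := by
        have hx1 : (x.val - 1 : ℕ) + 1 = x.val := by omega
        rw [hx1, ZMod.natCast_val, ZMod.cast_id]
      show (s(_, _) : Sym2 (ZMod (2*k+1))) = e.1
      rw [hxy, hcast]
    · refine ⟨⟨(-x).val - 1, by omega⟩, ?_⟩
      apply Subtype.ext
      have hcast : ((((-x).val - 1 : ℕ) + 1 : ℕ) : ZMod (2*k+1)) = -x := by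
        have hx1 : ((-x).val - 1 : ℕ) + 1 = (-x).val := by omega
        rw [hx1, ZMod.natCast_val, ZMod.cast_id]
      show (s(_, _) : Sym2 (ZMod (2*k+1))) = e.1
      rw [hxy]
      rw [show (s(x, -x) : Sym2 (ZMod (2*k+1))) = s(-x, -(-x)) by rw [neg_neg]; exact Sym2.eq_swap]
      rw [hcast]
  · rintro ⟨i, rfl⟩
    show sumZ k (rGen k i).1 = 0
    rw [rGen]
    simp only [sumZ, Sym2.lift_mk]
    exact (add_neg_cancel (((i:ℕ)+1 : ℕ) : ZMod (2*k+1)) :)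

lemma card_rS (k : ℕ) (hk : 1 ≤ k) : Nat.card (rS k) = k := by
  rw [rS_eq_range k hk, Nat.card_range_of_injective (rGen_inj k), Nat.card_eq_fintype_card,
    Fintype.card_fin]

lemma colorable_del (k : ℕ) (hk : 1 ≤ k) :
    ((completeMgraph (2*k+1)).deleteEdges (rS k)).EdgeColorable (2*k) := by
  have hval : ∀ e : ((completeMgraph (2*k+1)).deleteEdges (rS k)).E,
      1 ≤ (sumZ k e.1.1).val ∧ (sumZ k e.1.1).val < 2*k+1 := by
    intro e
    have h1 : (sumZ k e.1.1).val < 2*k+1 := ZMod.val_lt _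
    have h2 : (sumZ k e.1.1).val ≠ 0 := by
      intro h
      exact e.2 ((ZMod.val_eq_zero _).mp h)
    omega
  refine ⟨fun e => ⟨(sumZ k e.1.1).val - 1, by have := hval e; omega⟩, ?_⟩
  rintro e f hef ⟨v, hve, hvf⟩ hc
  haveI : DecidableEq ((completeMgraph (2*k+1)).deleteEdges (rS k)).V :=
    (inferInstance : DecidableEq (Fin (2*k+1)))
  apply hef
  have he := Sym2.other_spec' (hve : v ∈ (e.1.1 : Sym2 (Fin (2*k+1))))
  have hf := Sym2.other_spec' (hvf : v ∈ (f.1.1 : Sym2 (Fin (2*k+1))))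
  have hcc : (sumZ k e.1.1).val - 1 = (sumZ k f.1.1).val - 1 := congrArg Fin.val hc
  have hsum : sumZ k e.1.1 = sumZ k f.1.1 := by
    apply ZMod.val_injective
    have h1 := hval e; have h2 := hval f
    omega
  have hsum2 : @HAdd.hAdd (ZMod (2*k+1)) (ZMod (2*k+1)) (ZMod (2*k+1)) _ v (@Sym2.Mem.other' _ this _ _ hve) = @HAdd.hAdd (ZMod (2*k+1)) (ZMod (2*k+1)) (ZMod (2*k+1)) _ v (@Sym2.Mem.other' _ this _ _ hvf) :=
    (congrArg (sumZ k) he).trans (hsum.trans (congrArg (sumZ k) hf).symm)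
  have hoo := add_left_cancel hsum2
  apply Subtype.ext; apply Subtype.ext
  show ((completeMgraph (2*k+1)).deleteEdges (rS k)).inc e
      = ((completeMgraph (2*k+1)).deleteEdges (rS k)).inc f
  rw [← he, ← hf]
  exact congrArg (fun x => s(v, x)) hoo

def minF (n : ℕ) : Sym2 (Fin n) → Fin n :=
  Sym2.lift ⟨fun a b => min a b, fun a b => min_comm _ _⟩

def maxF (n : ℕ) : Sym2 (Fin n) → Fin n :=
  Sym2.lift ⟨fun a b => max a b, fun a b => max_comm _ _⟩

lemma minF_mem (n : ℕ) (p : Sym2 (Fin n)) : minF n p ∈ p := by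
  induction p using Sym2.inductionOn with
  | _ a b =>
    rw [Sym2.mem_iff]
    simpa [minF] using min_choice a b

lemma maxF_mem (n : ℕ) (p : Sym2 (Fin n)) : maxF n p ∈ p := by
  induction p using Sym2.inductionOn with
  | _ a b =>
    rw [Sym2.mem_iff]
    simpa [maxF] using max_choice a b

lemma minF_ne_maxF (n : ℕ) (p : Sym2 (Fin n)) (h : ¬ p.IsDiag) : minF n p ≠ maxF n p := by
  induction p using Sym2.inductionOn with
  | _ a b =>
    rw [Sym2.mk_isDiag_iff] at h
    simpa [minF, maxF] using ne_of_lt (min_lt_max.mpr h)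

lemma resist_lower (k : ℕ) (hk : 1 ≤ k) (S : Set (completeMgraph (2*k+1)).E)
    (h : ((completeMgraph (2*k+1)).deleteEdges S).EdgeColorable (2*k)) : k ≤ Nat.card S := by
  classical
  obtain ⟨c, hc⟩ := h
  -- each color class has at most k edges
  have hfib : ∀ j : Fin (2*k),
      Nat.card {a : ((completeMgraph (2*k+1)).deleteEdges S).E // c a = j} ≤ k := by
    intro j
    set T := {a : ((completeMgraph (2*k+1)).deleteEdges S).E // c a = j} with hT
    have hinj : Function.Injective (fun p : T × Bool =>
        if p.2 then minF (2*k+1) p.1.1.1.1 else maxF (2*k+1) p.1.1.1.1) := by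
      rintro ⟨⟨⟨⟨pe, hpe⟩, hpS⟩, hpc⟩, pb⟩ ⟨⟨⟨⟨qe, hqe⟩, hqS⟩, hqc⟩, qb⟩ heq
      simp only at heq
      -- the common vertex
      have key : ∀ v : Fin (2*k+1), v ∈ pe → v ∈ qe → pe = qe := by
        intro v hv1 hv2
        by_contra hne
        have hne' : (⟨⟨pe, hpe⟩, hpS⟩ : ((completeMgraph (2*k+1)).deleteEdges S).E) ≠ ⟨⟨qe, hqe⟩, hqS⟩ := by
          intro h'
          apply hne
          exact congrArg (fun x => x.1.1) h'
        exact hc _ _ hne' ⟨v, hv1, hv2⟩ (by rw [hpc, hqc])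
      have hpq : pe = qe := by
        rcases pb <;> rcases qb <;> simp only [if_true, if_false, Bool.false_eq_true] at heq
        · exact key (maxF _ qe) (heq ▸ maxF_mem _ pe) (maxF_mem _ qe)
        · exact key (minF _ qe) (heq ▸ maxF_mem _ pe) (minF_mem _ qe)
        · exact key (maxF _ qe) (heq ▸ minF_mem _ pe) (maxF_mem _ qe)
        · exact key (minF _ qe) (heq ▸ minF_mem _ pe) (minF_mem _ qe)
      subst hpq
      have hbb : pb = qb := by
        rcases pb <;> rcases qb <;> simp only [if_true, if_false, Bool.false_eq_true] at heq
        · rfl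
        · exact absurd heq.symm (minF_ne_maxF _ _ hpe)
        · exact absurd heq (minF_ne_maxF _ _ hpe)
        · rfl
      subst hbb
      rfl
    have hle := Nat.card_le_card_of_injective _ hinj
    rw [Nat.card_prod, Nat.card_eq_fintype_card (α := Bool), Fintype.card_bool] at hle
    have : Nat.card (Fin (2*k+1)) = 2*k+1 := by
      rw [Nat.card_eq_fintype_card, Fintype.card_fin]
    rw [this] at hle
    omega
  have hsum := card_fiber_sum c
  have hbound : Nat.card ((completeMgraph (2*k+1)).deleteEdges S).E ≤ 2*k*k := by
    rw [hsum]
    calc ∑ j : Fin (2*k), Nat.card {a // c a = j} ≤ ∑ _j : Fin (2*k), k :=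
          Finset.sum_le_sum fun j _ => hfib j
      _ = 2*k*k := by simp [Finset.sum_const, mul_comm]
  have hsplit : Nat.card S + Nat.card ((completeMgraph (2*k+1)).deleteEdges S).E
      = Nat.card (completeMgraph (2*k+1)).E := by
    have h1 := Nat.card_congr (Equiv.sumCompl (· ∈ S))
    rw [Nat.card_sum] at h1
    exact h1
  have hcE : Nat.card (completeMgraph (2*k+1)).E = k * (2*k+1) := by
    rw [card_E, choose_eq]
  have hlin : k * (2*k+1) = 2*k*k + k := by ring
  omega

lemma resistance_eq (k : ℕ) (hk : 1 ≤ k) : (completeMgraph (2*k+1)).resistance = k := by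
  have hmax : (completeMgraph (2*k+1)).maxDegree = 2*k := by
    have := maxDegree_complete (2*k+1) (by omega)
    omega
  rw [Mgraph.resistance, hmax, Mgraph.resistanceTo]
  have hmem : k ∈ {m : ℕ | ∃ S : Set (completeMgraph (2*k+1)).E,
      Nat.card S = m ∧ ((completeMgraph (2*k+1)).deleteEdges S).EdgeColorable (2*k)} :=
    ⟨rS k, card_rS k hk, colorable_del k hk⟩
  apply le_antisymm
  · exact Nat.sInf_le hmem
  · refine le_csInf ⟨k, hmem⟩ ?_
    rintro m ⟨S, rfl, hcol⟩
    exact resist_lower k hk S hcol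

/-! ### Oddness lower bound -/

lemma oddCycles_pos (G : Mgraph) (F : Set G.E) (h : Odd (Nat.card G.V)) :
    1 ≤ G.oddCycles F := by
  classical
  have _i1 : Fintype (G.factorGraph F).ConnectedComponent := Fintype.ofFinite _
  have hsum := card_fiber_sum ((G.factorGraph F).connectedComponentMk)
  rw [Mgraph.oddCycles]
  by_contra hlt
  push_neg at hlt
  have h0 : Nat.card {C : (G.factorGraph F).ConnectedComponent //
      Odd (Nat.card {v : G.V // (G.factorGraph F).connectedComponentMk v = C})} = 0 := by omega
  have hempty : ∀ C : (G.factorGraph F).ConnectedComponent,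
      ¬ Odd (Nat.card {v : G.V // (G.factorGraph F).connectedComponentMk v = C}) := by
    intro C hC
    have hne : Nonempty {C : (G.factorGraph F).ConnectedComponent //
        Odd (Nat.card {v : G.V // (G.factorGraph F).connectedComponentMk v = C})} := ⟨⟨C, hC⟩⟩
    have := Nat.card_pos (α := {C : (G.factorGraph F).ConnectedComponent //
        Odd (Nat.card {v : G.V // (G.factorGraph F).connectedComponentMk v = C})})
    omega
  have heven : Even (Nat.card G.V) := by
    rw [hsum]
    apply Finset.even_sum
    intro C _
    exact Nat.not_odd_iff_even.mp (hempty C)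
  exact (Nat.not_even_iff_odd.mpr h) heven

lemma oddness_lower (k : ℕ) (hk : 1 ≤ k) :
    (k : ℕ∞) ≤ (completeMgraph (2*k+1)).oddness := by
  classical
  apply le_sInf
  rintro x ⟨n', f, ⟨hnone, htwo⟩, rfl⟩
  have hVodd : Odd (Nat.card (completeMgraph (2*k+1)).V) := by
    have h1 : Nat.card (completeMgraph (2*k+1)).V = 2*k+1 := by
      show Nat.card (Fin (2*k+1)) = 2*k+1
      rw [Nat.card_eq_fintype_card, Fintype.card_fin]
    rw [h1]
    exact ⟨k, by ring⟩
  set v : (completeMgraph (2*k+1)).V := ⟨0, by omega⟩ with hv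
  have hdeg : Nat.card {e : (completeMgraph (2*k+1)).E // v ∈ (completeMgraph (2*k+1)).inc e} = 2*k := by
    have := degree_complete (2*k+1) v
    rw [Mgraph.degree] at this
    omega
  have hsum := card_fiber_sum (fun a : {e : (completeMgraph (2*k+1)).E // v ∈ (completeMgraph (2*k+1)).inc e} => f a.1)
  rw [Fintype.sum_option] at hsum
  have hsome : ∀ i : Fin n',
      Nat.card {a : {e : (completeMgraph (2*k+1)).E // v ∈ (completeMgraph (2*k+1)).inc e} // f a.1 = some i} = 2 := by
    intro i
    rw [Nat.card_congr (subsub (fun e : (completeMgraph (2*k+1)).E => v ∈ (completeMgraph (2*k+1)).inc e)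
      (fun e => f e = some i))]
    exact htwo i v
  have hconst : ∑ i : Fin n',
      Nat.card {a : {e : (completeMgraph (2*k+1)).E // v ∈ (completeMgraph (2*k+1)).inc e} // f a.1 = some i} = 2 * n' := by
    rw [Finset.sum_congr rfl fun i _ => hsome i]
    simp [Finset.sum_const, mul_comm]
  have hn' : n' = k := by
    rcases hnone with h0 | h1
    · have hcard0 : Nat.card {a : {e : (completeMgraph (2*k+1)).E // v ∈ (completeMgraph (2*k+1)).inc e} // f a.1 = none} = 0 := by
        have : IsEmpty {a : {e : (completeMgraph (2*k+1)).E // v ∈ (completeMgraph (2*k+1)).inc e} // f a.1 = none} :=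
          ⟨fun a => h0 a.1.1 a.2⟩
        exact Nat.card_of_isEmpty
      omega
    · have hcard1 : Nat.card {a : {e : (completeMgraph (2*k+1)).E // v ∈ (completeMgraph (2*k+1)).inc e} // f a.1 = none} = 1 := by
        rw [Nat.card_congr (subsub (fun e : (completeMgraph (2*k+1)).E => v ∈ (completeMgraph (2*k+1)).inc e)
          (fun e => f e = none))]
        exact h1 v
      omega
  rw [Mgraph.decompOdd]
  have hge : (k:ℕ) ≤ ∑ i : Fin n', (completeMgraph (2*k+1)).oddCycles {e | f e = some i} := by
    calc (k:ℕ) = ∑ _i : Fin n', 1 := by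
          rw [Finset.sum_const, Finset.card_univ, Fintype.card_fin, smul_eq_mul, mul_one, hn']
    _ ≤ _ := Finset.sum_le_sum fun i _ => oddCycles_pos _ _ hVodd
  exact_mod_cast hge

/-! ### The Walecki decomposition -/

def wemb (k : ℕ) (x : ZMod (2*k)) : Fin (2*k+1) := ⟨x.val % (2*k+1), Nat.mod_lt _ (by omega)⟩

def winf (k : ℕ) : Fin (2*k+1) := ⟨2*k, by omega⟩

def wVert (k i t : ℕ) : Fin (2*k+1) :=
  if t = 0 then winf k
  else wemb k (if 2 ∣ t then ((i:ℕ) : ZMod (2*k)) + ((t/2 : ℕ) : ZMod (2*k))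
    else ((i:ℕ) : ZMod (2*k)) - ((t/2 : ℕ) : ZMod (2*k)))

def wEdge (k i t : ℕ) : Sym2 (Fin (2*k+1)) :=
  s(wVert k i t, wVert k i ((t+1) % (2*k+1)))

def wFun (k : ℕ) : Sym2 (Fin (2*k+1)) → ℕ :=
  Sym2.lift ⟨fun u v => if u.val = 2*k then v.val % k else if v.val = 2*k then u.val % k
      else ((u.val + v.val) % (2*k)) / 2, by
    intro u v
    dsimp only
    split_ifs with h1 h2 h3 <;> simp_all [Nat.add_comm]⟩

lemma wFun_mk (k : ℕ) (u v : Fin (2*k+1)) :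
    wFun k s(u, v) = if u.val = 2*k then v.val % k else if v.val = 2*k then u.val % k
      else ((u.val + v.val) % (2*k)) / 2 := by
  simp [wFun]

lemma wemb_val (k : ℕ) (hk : 1 ≤ k) (x : ZMod (2*k)) : (wemb k x).val = x.val := by
  haveI : NeZero (2*k) := ⟨by omega⟩
  have h := ZMod.val_lt x
  show x.val % (2*k+1) = x.val
  exact Nat.mod_eq_of_lt (by omega)

lemma wemb_inj (k : ℕ) (hk : 1 ≤ k) : Function.Injective (wemb k) := by
  haveI : NeZero (2*k) := ⟨by omega⟩
  intro a b h
  have h2 := congrArg Fin.val h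
  rw [wemb_val k hk, wemb_val k hk] at h2
  exact ZMod.val_injective _ h2

lemma winf_val (k : ℕ) : (winf k).val = 2*k := rfl

lemma wemb_ne_winf (k : ℕ) (hk : 1 ≤ k) (x : ZMod (2*k)) : wemb k x ≠ winf k := by
  haveI : NeZero (2*k) := ⟨by omega⟩
  intro h
  have h2 := congrArg Fin.val h
  rw [wemb_val k hk, winf_val] at h2
  have := ZMod.val_lt x
  omega

lemma wVert_zero (k i : ℕ) : wVert k i 0 = winf k := by simp [wVert]

lemma wVert_odd (k i j : ℕ) :
    wVert k i (2*j+1) = wemb k (((i:ℕ) : ZMod (2*k)) - ((j:ℕ) : ZMod (2*k))) := by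
  have h0 : 2*j+1 ≠ 0 := by omega
  have h1 : ¬ (2 ∣ (2*j+1)) := by omega
  have h2 : (2*j+1)/2 = j := by omega
  simp [wVert, h0, h1, h2]

lemma wVert_even (k i j : ℕ) (hj : j ≠ 0) :
    wVert k i (2*j) = wemb k (((i:ℕ) : ZMod (2*k)) + ((j:ℕ) : ZMod (2*k))) := by
  have h0 : 2*j ≠ 0 := by omega
  have h1 : 2 ∣ 2*j := ⟨j, rfl⟩
  have h2 : (2*j)/2 = j := by omega
  simp [wVert, h0, h1, h2]

lemma wFun_int (k : ℕ) (hk : 1 ≤ k) (x y : ZMod (2*k)) :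
    wFun k s(wemb k x, wemb k y) = (x + y).val / 2 := by
  haveI : NeZero (2*k) := ⟨by omega⟩
  rw [wFun_mk, wemb_val k hk, wemb_val k hk]
  have hx := ZMod.val_lt x
  have hy := ZMod.val_lt y
  rw [if_neg (by omega), if_neg (by omega), ZMod.val_add]

lemma wFun_wEdge (k : ℕ) (hk : 1 ≤ k) (i t : ℕ) (hi : i < k) (ht : t < 2*k+1) :
    wFun k (wEdge k i t) = i := by
  haveI : NeZero (2*k) := ⟨by omega⟩
  by_cases ht0 : t = 0
  · subst ht0
    have h1 : (0+1) % (2*k+1) = 1 := Nat.mod_eq_of_lt (by omega)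
    have h2 : wVert k i 1 = wemb k ((i:ℕ) : ZMod (2*k)) := by
      have := wVert_odd k i 0
      simpa using this
    rw [wEdge, h1, h2, wVert_zero, wFun_mk, winf_val, if_pos rfl, wemb_val k hk,
      ZMod.val_cast_of_lt (show i < 2*k by omega), Nat.mod_eq_of_lt hi]
  by_cases ht2 : t = 2*k
  · subst ht2
    have h1 : (2*k+1) % (2*k+1) = 0 := Nat.mod_self _
    have h2 : wVert k i (2*k) = wemb k (((i:ℕ) : ZMod (2*k)) + ((k:ℕ) : ZMod (2*k))) := by
      have := wVert_even k i k (by omega)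
      simpa using this
    have h3 : (((i:ℕ) : ZMod (2*k)) + ((k:ℕ) : ZMod (2*k))).val = i + k := by
      have hc : ((i:ℕ) : ZMod (2*k)) + ((k:ℕ) : ZMod (2*k)) = (((i + k : ℕ)) : ZMod (2*k)) := by
        push_cast; ring
      rw [hc, ZMod.val_cast_of_lt (by omega)]
    rw [wEdge, h1, h2, wVert_zero, wFun_mk, wemb_val k hk, if_neg (by omega), winf_val,
      if_pos rfl, h3, Nat.add_mod_right, Nat.mod_eq_of_lt hi]
  · have ht1 : 1 ≤ t := by omega
    have hmod : (t+1) % (2*k+1) = t+1 := Nat.mod_eq_of_lt (by omega)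
    rcases Nat.even_or_odd t with he | ho
    · obtain ⟨j, rfl⟩ : ∃ j, t = 2*j := by
        obtain ⟨r, hr⟩ := he; exact ⟨r, by omega⟩
      have hj1 : 1 ≤ j := by omega
      have hjk : j ≤ k - 1 := by omega
      have h2 := wVert_even k i j (by omega)
      have h3 : wVert k i (2*j+1) = wemb k (((i:ℕ) : ZMod (2*k)) - ((j:ℕ) : ZMod (2*k))) :=
        wVert_odd k i j
      rw [wEdge, hmod, h2, h3, wFun_int k hk]
      have h4 : (((i:ℕ) : ZMod (2*k)) + ((j:ℕ) : ZMod (2*k)))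
          + (((i:ℕ) : ZMod (2*k)) - ((j:ℕ) : ZMod (2*k))) = ((2*i : ℕ) : ZMod (2*k)) := by
        push_cast; ring
      rw [h4, ZMod.val_cast_of_lt (by omega)]
      omega
    · obtain ⟨j, rfl⟩ : ∃ j, t = 2*j+1 := ho
      have hjk : j ≤ k - 1 := by omega
      have h2 : wVert k i (2*j+1) = wemb k (((i:ℕ) : ZMod (2*k)) - ((j:ℕ) : ZMod (2*k))) :=
        wVert_odd k i j
      have h3 : wVert k i (2*j+1+1) = wemb k (((i:ℕ) : ZMod (2*k)) + (((j+1:ℕ)) : ZMod (2*k))) := by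
        have := wVert_even k i (j+1) (by omega)
        rw [show 2*(j+1) = 2*j+1+1 by ring] at this
        exact this
      rw [wEdge, hmod, h2, h3, wFun_int k hk]
      have h4 : (((i:ℕ) : ZMod (2*k)) - ((j:ℕ) : ZMod (2*k)))
          + (((i:ℕ) : ZMod (2*k)) + (((j+1:ℕ)) : ZMod (2*k))) = ((2*i+1 : ℕ) : ZMod (2*k)) := by
        push_cast; ring
      rw [h4, ZMod.val_cast_of_lt (by omega)]
      omega

lemma wEdge_not_diag (k : ℕ) (hk : 1 ≤ k) (i t : ℕ) (ht : t < 2*k+1) :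
    ¬ (wEdge k i t).IsDiag := by
  haveI : NeZero (2*k) := ⟨by omega⟩
  rw [wEdge, Sym2.mk_isDiag_iff]
  by_cases ht0 : t = 0
  · subst ht0
    have h1 : (0+1) % (2*k+1) = 1 := Nat.mod_eq_of_lt (by omega)
    rw [h1, wVert_zero]
    intro h
    exact wemb_ne_winf k hk _ (by
      have h2 : wVert k i 1 = wemb k ((i:ℕ) : ZMod (2*k)) := by simpa using wVert_odd k i 0
      rw [h2] at h
      exact h.symm)
  by_cases ht2 : t = 2*k
  · subst ht2
    have h1 : (2*k+1) % (2*k+1) = 0 := Nat.mod_self _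
    rw [h1, wVert_zero]
    intro h
    have h2 : wVert k i (2*k) = wemb k (((i:ℕ) : ZMod (2*k)) + ((k:ℕ) : ZMod (2*k))) := by
      simpa using wVert_even k i k (by omega)
    rw [h2] at h
    exact wemb_ne_winf k hk _ h
  · have ht1 : 1 ≤ t := by omega
    have hmod : (t+1) % (2*k+1) = t+1 := Nat.mod_eq_of_lt (by omega)
    rw [hmod]
    rcases Nat.even_or_odd t with he | ho
    · obtain ⟨j, rfl⟩ : ∃ j, t = 2*j := by
        obtain ⟨r, hr⟩ := he; exact ⟨r, by omega⟩
      have hj1 : 1 ≤ j := by omega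
      have hjk : j ≤ k - 1 := by omega
      rw [wVert_even k i j (by omega), wVert_odd k i j]
      intro h
      have h5 := wemb_inj k hk h
      have h6 : ((2*j : ℕ) : ZMod (2*k)) = 0 := by
        push_cast
        linear_combination h5
      have h7 := ZMod.val_cast_of_lt (show 2*j < 2*k by omega)
      rw [h6, ZMod.val_zero] at h7
      omega
    · obtain ⟨j, rfl⟩ : ∃ j, t = 2*j+1 := ho
      have hjk : j ≤ k - 1 := by omega
      have h3 : wVert k i (2*j+1+1) = wemb k (((i:ℕ) : ZMod (2*k)) + (((j+1:ℕ)) : ZMod (2*k))) := by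
        have := wVert_even k i (j+1) (by omega)
        rw [show 2*(j+1) = 2*j+1+1 by ring] at this
        exact this
      rw [wVert_odd k i j, h3]
      intro h
      have h5 := wemb_inj k hk h
      have h6 : ((2*j+1 : ℕ) : ZMod (2*k)) = 0 := by
        push_cast
        push_cast at h5
        linear_combination -h5
      have h7 := ZMod.val_cast_of_lt (show 2*j+1 < 2*k by omega)
      rw [h6, ZMod.val_zero] at h7
      omega

lemma wVert_inj (k : ℕ) (hk : 1 ≤ k) (i : ℕ) {t t' : ℕ} (ht : t < 2*k+1) (ht' : t' < 2*k+1)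
    (h : wVert k i t = wVert k i t') : t = t' := by
  haveI : NeZero (2*k) := ⟨by omega⟩
  by_cases h0 : t = 0 <;> by_cases h0' : t' = 0
  · omega
  · exfalso
    subst h0
    rw [wVert_zero] at h
    rcases Nat.even_or_odd t' with he | ho
    · obtain ⟨j, rfl⟩ : ∃ j, t' = 2*j := by obtain ⟨r, hr⟩ := he; exact ⟨r, by omega⟩
      rw [wVert_even k i j (by omega)] at h
      exact wemb_ne_winf k hk _ h.symm
    · obtain ⟨j, rfl⟩ : ∃ j, t' = 2*j+1 := ho
      rw [wVert_odd k i j] at h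
      exact wemb_ne_winf k hk _ h.symm
  · exfalso
    subst h0'
    rw [wVert_zero] at h
    rcases Nat.even_or_odd t with he | ho
    · obtain ⟨j, rfl⟩ : ∃ j, t = 2*j := by obtain ⟨r, hr⟩ := he; exact ⟨r, by omega⟩
      rw [wVert_even k i j (by omega)] at h
      exact wemb_ne_winf k hk _ h
    · obtain ⟨j, rfl⟩ : ∃ j, t = 2*j+1 := ho
      rw [wVert_odd k i j] at h
      exact wemb_ne_winf k hk _ h
  · rcases Nat.even_or_odd t with he | ho <;> rcases Nat.even_or_odd t' with he' | ho'
    · obtain ⟨j, rfl⟩ : ∃ j, t = 2*j := by obtain ⟨r, hr⟩ := he; exact ⟨r, by omega⟩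
      obtain ⟨j', rfl⟩ : ∃ j', t' = 2*j' := by obtain ⟨r, hr⟩ := he'; exact ⟨r, by omega⟩
      rw [wVert_even k i j (by omega), wVert_even k i j' (by omega)] at h
      have h5 := wemb_inj k hk h
      have h6 : ((j : ℕ) : ZMod (2*k)) = ((j' : ℕ) : ZMod (2*k)) := by
        linear_combination h5
      have h7 := congrArg ZMod.val h6
      rw [ZMod.val_cast_of_lt (show j < 2*k by omega),
        ZMod.val_cast_of_lt (show j' < 2*k by omega)] at h7
      omega
    · obtain ⟨j, rfl⟩ : ∃ j, t = 2*j := by obtain ⟨r, hr⟩ := he; exact ⟨r, by omega⟩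
      obtain ⟨j', rfl⟩ : ∃ j', t' = 2*j'+1 := ho'
      exfalso
      rw [wVert_even k i j (by omega), wVert_odd k i j'] at h
      have h5 := wemb_inj k hk h
      have h6 : ((j + j' : ℕ) : ZMod (2*k)) = 0 := by
        push_cast
        linear_combination h5
      have h7 := ZMod.val_cast_of_lt (show j + j' < 2*k by omega)
      rw [h6, ZMod.val_zero] at h7
      omega
    · obtain ⟨j, rfl⟩ : ∃ j, t = 2*j+1 := ho
      obtain ⟨j', rfl⟩ : ∃ j', t' = 2*j' := by obtain ⟨r, hr⟩ := he'; exact ⟨r, by omega⟩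
      exfalso
      rw [wVert_odd k i j, wVert_even k i j' (by omega)] at h
      have h5 := wemb_inj k hk h
      have h6 : ((j + j' : ℕ) : ZMod (2*k)) = 0 := by
        push_cast
        linear_combination -h5
      have h7 := ZMod.val_cast_of_lt (show j + j' < 2*k by omega)
      rw [h6, ZMod.val_zero] at h7
      omega
    · obtain ⟨j, rfl⟩ : ∃ j, t = 2*j+1 := ho
      obtain ⟨j', rfl⟩ : ∃ j', t' = 2*j'+1 := ho'
      rw [wVert_odd k i j, wVert_odd k i j'] at h
      have h5 := wemb_inj k hk h
      have h6 : ((j : ℕ) : ZMod (2*k)) = ((j' : ℕ) : ZMod (2*k)) := by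
        linear_combination -h5
      have h7 := congrArg ZMod.val h6
      rw [ZMod.val_cast_of_lt (show j < 2*k by omega),
        ZMod.val_cast_of_lt (show j' < 2*k by omega)] at h7
      omega

lemma wVert_surj (k : ℕ) (hk : 1 ≤ k) (i : ℕ) (v : Fin (2*k+1)) :
    ∃ t, t < 2*k+1 ∧ wVert k i t = v := by
  have hinj : Function.Injective (fun t : Fin (2*k+1) => wVert k i t.val) := by
    intro a b hab
    exact Fin.ext (wVert_inj k hk i a.2 b.2 hab)
  obtain ⟨t, ht⟩ := (Finite.injective_iff_surjective.mp hinj) v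
  exact ⟨t.val, t.2, ht⟩

lemma wEdge_inj (k : ℕ) (hk : 1 ≤ k) (i : ℕ) {t t' : ℕ} (ht : t < 2*k+1) (ht' : t' < 2*k+1)
    (h : wEdge k i t = wEdge k i t') : t = t' := by
  rw [wEdge, wEdge, Sym2.eq_iff] at h
  have hm : (t+1) % (2*k+1) < 2*k+1 := Nat.mod_lt _ (by omega)
  have hm' : (t'+1) % (2*k+1) < 2*k+1 := Nat.mod_lt _ (by omega)
  rcases h with ⟨h1, -⟩ | ⟨h1, h2⟩
  · exact wVert_inj k hk i ht ht' h1
  · have e1 : t = (t'+1) % (2*k+1) := wVert_inj k hk i ht hm' h1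
    have e2 : (t+1) % (2*k+1) = t' := wVert_inj k hk i hm ht' h2
    rcases Nat.lt_or_ge (t'+1) (2*k+1) with h3 | h3
    · rw [Nat.mod_eq_of_lt h3] at e1
      rcases Nat.lt_or_ge (t+1) (2*k+1) with h4 | h4
      · rw [Nat.mod_eq_of_lt h4] at e2
        omega
      · have h5 : t + 1 = 2*k+1 := by omega
        rw [h5, Nat.mod_self] at e2
        omega
    · have h5 : t' + 1 = 2*k+1 := by omega
      rw [h5, Nat.mod_self] at e1
      rw [e1] at e2 ⊢
      rw [Nat.mod_eq_of_lt (by omega)] at e2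
      omega

def wF (k : ℕ) (hk : 1 ≤ k) (e : (completeMgraph (2*k+1)).E) : Fin k :=
  ⟨wFun k e.1 % k, Nat.mod_lt _ hk⟩

def wEB (k : ℕ) (hk : 1 ≤ k) (i : Fin k) (t : Fin (2*k+1)) : (completeMgraph (2*k+1)).E :=
  ⟨wEdge k i.val t.val, wEdge_not_diag k hk i.val t.val t.2⟩

lemma wF_wEB (k : ℕ) (hk : 1 ≤ k) (i : Fin k) (t : Fin (2*k+1)) : wF k hk (wEB k hk i t) = i := by
  apply Fin.ext
  show wFun k (wEdge k i.val t.val) % k = i.val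
  rw [wFun_wEdge k hk i.val t.val i.2 t.2, Nat.mod_eq_of_lt i.2]

lemma wEB_inj (k : ℕ) (hk : 1 ≤ k) (i : Fin k) : Function.Injective (wEB k hk i) := by
  intro a b h
  exact Fin.ext (wEdge_inj k hk i.val a.2 b.2 (congrArg Subtype.val h))

lemma fiber_eq_range (k : ℕ) (hk : 1 ≤ k) (i : Fin k) :
    {e : (completeMgraph (2*k+1)).E | wF k hk e = i} = Set.range (wEB k hk i) := by
  classical
  have hsub : ∀ i' : Fin k,
      Set.range (wEB k hk i') ⊆ {e : (completeMgraph (2*k+1)).E | wF k hk e = i'} := by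
    rintro i' e ⟨t, rfl⟩
    exact wF_wEB k hk i' t
  have hrange : ∀ i' : Fin k, (Set.range (wEB k hk i')).ncard = 2*k+1 := by
    intro i'
    rw [← Nat.card_coe_set_eq, Nat.card_range_of_injective (wEB_inj k hk i'),
      Nat.card_eq_fintype_card, Fintype.card_fin]
  have hcard : ∀ i' : Fin k, (2*k+1 : ℕ) ≤ ({e : (completeMgraph (2*k+1)).E | wF k hk e = i'}).ncard := by
    intro i'
    calc (2*k+1:ℕ) = (Set.range (wEB k hk i')).ncard := (hrange i').symm
      _ ≤ _ := Set.ncard_le_ncard (hsub i') (Set.toFinite _)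
  have hsum : ∑ i' : Fin k, ({e : (completeMgraph (2*k+1)).E | wF k hk e = i'}).ncard = k * (2*k+1) := by
    have h1 := card_fiber_sum (wF k hk)
    rw [card_E, choose_eq] at h1
    rw [h1]
    exact Finset.sum_congr rfl fun i' _ => (Nat.card_coe_set_eq _).symm
  have heq : ({e : (completeMgraph (2*k+1)).E | wF k hk e = i}).ncard = 2*k+1 := by
    by_contra hne
    have hlt : 2*k+1 < ({e : (completeMgraph (2*k+1)).E | wF k hk e = i}).ncard :=
      lt_of_le_of_ne (hcard i) (Ne.symm hne)
    have hstrict : ∑ _i' : Fin k, (2*k+1 : ℕ) < ∑ i' : Fin k, ({e : (completeMgraph (2*k+1)).E | wF k hk e = i'}).ncard :=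
      Finset.sum_lt_sum (fun j _ => hcard j) ⟨i, Finset.mem_univ _, hlt⟩
    rw [hsum] at hstrict
    simp [Finset.sum_const, mul_comm] at hstrict
  exact (Set.eq_of_subset_of_ncard_le (hsub i) (by rw [heq, hrange i]) (Set.toFinite _)).symm

lemma two_factor (k : ℕ) (hk : 1 ≤ k) (i : Fin k) :
    (completeMgraph (2*k+1)).IsTwoFactor {e : (completeMgraph (2*k+1)).E | wF k hk e = i} := by
  intro v
  obtain ⟨t₀, ht₀, hvt⟩ := wVert_surj k hk i.val v
  set t₁ := if t₀ = 0 then 2*k else t₀ - 1 with ht₁def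
  have ht₁ : t₁ < 2*k+1 := by
    rw [ht₁def]; split_ifs <;> omega
  have hmod : (t₁ + 1) % (2*k+1) = t₀ := by
    by_cases h0 : t₀ = 0
    · rw [ht₁def, if_pos h0, Nat.mod_self, h0]
    · rw [ht₁def, if_neg h0, Nat.mod_eq_of_lt (by omega)]
      omega
  set a := wEB k hk i ⟨t₀, ht₀⟩ with ha
  set b := wEB k hk i ⟨t₁, ht₁⟩ with hb
  have ht01 : t₀ ≠ t₁ := by
    rw [ht₁def]; split_ifs <;> omega
  have hne : a ≠ b := by
    intro h
    exact ht01 (wEdge_inj k hk i.val ht₀ ht₁ (congrArg Subtype.val h))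
  have hset : {e : (completeMgraph (2*k+1)).E | e ∈ {e : (completeMgraph (2*k+1)).E | wF k hk e = i} ∧ v ∈ (completeMgraph (2*k+1)).inc e} = {a, b} := by
    ext e
    simp only [Set.mem_setOf_eq, Set.mem_insert_iff, Set.mem_singleton_iff]
    constructor
    · rintro ⟨hfe, hve⟩
      have hfe' : e ∈ Set.range (wEB k hk i) := by
        rw [← fiber_eq_range k hk i]; exact hfe
      obtain ⟨t, rfl⟩ := hfe'
      have hv2 : v = wVert k i.val t.val ∨ v = wVert k i.val ((t.val+1) % (2*k+1)) := by
        have : v ∈ (wEdge k i.val t.val : Sym2 (Fin (2*k+1))) := hve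
        rw [wEdge] at this
        exact Sym2.mem_iff.mp this
      rcases hv2 with hcase | hcase
      · left
        rw [ha]
        congr 1
        apply Fin.ext
        show t.val = t₀
        exact wVert_inj k hk i.val t.2 ht₀ (by rw [← hcase, hvt])
      · right
        rw [hb]
        congr 1
        apply Fin.ext
        show t.val = t₁
        have hmem : (t.val+1) % (2*k+1) = t₀ := by
          apply wVert_inj k hk i.val (Nat.mod_lt _ (by omega)) ht₀
          rw [← hcase, hvt]
        rcases Nat.lt_or_ge (t.val+1) (2*k+1) with h4 | h4
        · rw [Nat.mod_eq_of_lt h4] at hmem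
          rw [ht₁def, if_neg (by omega)]
          omega
        · have h5 : t.val + 1 = 2*k+1 := by have := t.2; omega
          rw [h5, Nat.mod_self] at hmem
          rw [ht₁def, if_pos hmem.symm]
          omega
    · rintro (rfl | rfl)
      · constructor
        · exact wF_wEB k hk i _
        · show v ∈ (wEdge k i.val t₀ : Sym2 (Fin (2*k+1)))
          rw [wEdge]; apply Sym2.mem_iff.mpr
          left
          exact hvt.symm
      · constructor
        · exact wF_wEB k hk i _
        · show v ∈ (wEdge k i.val t₁ : Sym2 (Fin (2*k+1)))
          rw [wEdge]; apply Sym2.mem_iff.mpr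
          right
          rw [hmod, hvt]
  calc Nat.card {e : (completeMgraph (2*k+1)).E // e ∈ {e : (completeMgraph (2*k+1)).E | wF k hk e = i} ∧ v ∈ (completeMgraph (2*k+1)).inc e}
      = Nat.card ({a, b} : Set (completeMgraph (2*k+1)).E) := Nat.card_congr (Equiv.setCongr hset)
    _ = 2 := by rw [Nat.card_coe_set_eq, Set.ncard_pair hne]

lemma factor_conn (k : ℕ) (hk : 1 ≤ k) (i : Fin k) :
    ((completeMgraph (2*k+1)).factorGraph {e : (completeMgraph (2*k+1)).E | wF k hk e = i}).Connected := by
  set H := (completeMgraph (2*k+1)).factorGraph {e : (completeMgraph (2*k+1)).E | wF k hk e = i} with hH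
  have hadj : ∀ t : ℕ, (ht : t < 2*k+1) → H.Adj (wVert k i.val t) (wVert k i.val ((t+1) % (2*k+1))) := by
    intro t ht
    refine ⟨?_, ⟨wEB k hk i ⟨t, ht⟩, wF_wEB k hk i _, rfl⟩⟩
    intro h
    exact wEdge_not_diag k hk i.val t ht (by rw [wEdge]; exact Sym2.mk_isDiag_iff.mpr h)
  have hreach : ∀ t, t ≤ 2*k → H.Reachable (wVert k i.val 0) (wVert k i.val t) := by
    intro t
    induction t with
    | zero => exact fun _ => SimpleGraph.Reachable.refl _
    | succ m ih =>
      intro hm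
      have h1 := ih (by omega)
      have h2 := hadj m (by omega)
      rw [Nat.mod_eq_of_lt (by omega)] at h2
      exact h1.trans h2.reachable
  rw [SimpleGraph.connected_iff]
  refine ⟨?_, ⟨wVert k i.val 0⟩⟩
  intro u w
  obtain ⟨t, ht, rfl⟩ := wVert_surj k hk i.val u
  obtain ⟨t', ht', rfl⟩ := wVert_surj k hk i.val w
  exact (hreach t (by omega)).symm.trans (hreach t' (by omega))

lemma oddCycles_eq_one (k : ℕ) (hk : 1 ≤ k) (i : Fin k) :
    (completeMgraph (2*k+1)).oddCycles {e : (completeMgraph (2*k+1)).E | wF k hk e = i} = 1 := by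
  have hconn := factor_conn k hk i
  set H := (completeMgraph (2*k+1)).factorGraph {e : (completeMgraph (2*k+1)).E | wF k hk e = i} with hH
  rw [Mgraph.oddCycles, Nat.card_eq_one_iff_unique]
  have hsub : Subsingleton H.ConnectedComponent := by
    constructor
    intro C C'
    refine SimpleGraph.ConnectedComponent.ind₂ (fun u w => ?_) C C'
    exact SimpleGraph.ConnectedComponent.eq.mpr (hconn.preconnected u w)
  have hcardV : Nat.card (completeMgraph (2*k+1)).V = 2*k+1 := by
    show Nat.card (Fin (2*k+1)) = 2*k+1
    rw [Nat.card_eq_fintype_card, Fintype.card_fin]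
  constructor
  · exact ⟨fun a b => Subtype.ext (@Subsingleton.elim _ hsub _ _)⟩
  · refine ⟨⟨H.connectedComponentMk (wVert k i.val 0), ?_⟩⟩
    have hall : ∀ v : (completeMgraph (2*k+1)).V,
        H.connectedComponentMk v = H.connectedComponentMk (wVert k i.val 0) :=
      fun v => @Subsingleton.elim _ hsub _ _
    rw [Nat.card_congr (Equiv.subtypeUnivEquiv hall), hcardV]
    exact ⟨k, by ring⟩

lemma oddness_upper (k : ℕ) (hk : 1 ≤ k) :
    (completeMgraph (2*k+1)).oddness ≤ (k : ℕ∞) := by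
  apply sInf_le
  refine ⟨k, fun e => some (wF k hk e), ⟨Or.inl (fun e => by simp), fun i => ?_⟩, ?_⟩
  · have hset : {e : (completeMgraph (2*k+1)).E | (fun e => some (wF k hk e)) e = some i}
        = {e : (completeMgraph (2*k+1)).E | wF k hk e = i} := by
      ext e; simp
    rw [hset]
    exact two_factor k hk i
  · rw [Mgraph.decompOdd]
    have hsum : ∑ i : Fin k, (completeMgraph (2*k+1)).oddCycles
        {e : (completeMgraph (2*k+1)).E | (fun e => some (wF k hk e)) e = some i} = k := by
      have hterm : ∀ i : Fin k, (completeMgraph (2*k+1)).oddCycles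
          {e : (completeMgraph (2*k+1)).E | (fun e => some (wF k hk e)) e = some i} = 1 := by
        intro i
        have hset : {e : (completeMgraph (2*k+1)).E | (fun e => some (wF k hk e)) e = some i}
            = {e : (completeMgraph (2*k+1)).E | wF k hk e = i} := by
          ext e; simp
        rw [hset]
        exact oddCycles_eq_one k hk i
      rw [Finset.sum_congr rfl fun i _ => hterm i]
      simp
    rw [hsum]

end Kaux

open Kaux in
open Mgraph in
/-- For every `k ≥ 1`, the complete graph `K_{2k+1}` satisfies
`r(K_{2k+1}) = k` and `ξ(K_{2k+1}) = k`. -/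
theorem resistance_oddness_complete_graph (k : ℕ) (hk : 1 ≤ k) :
    (completeMgraph (2 * k + 1)).resistance = k ∧
    (completeMgraph (2 * k + 1)).oddness = (k : ℕ∞) := by
  exact ⟨resistance_eq k hk, le_antisymm (oddness_upper k hk) (oddness_lower k hk)⟩
end

section
/- Let G be a connected s-regular finite loopless multigraph with an even number of vertices. Then r(G) = 2 if and only if ξ(G) = 2. -/
namespace MgraphAux
open Mgraph Finset
open scoped Classical

noncomputable instance (G : Mgraph) : Fintype G.V := Fintype.ofFinite _
noncomputable instance (G : Mgraph) : Fintype G.E := Fintype.ofFinite _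

variable {G : Mgraph}

/-- degree of `v` in the edge set `F` -/
noncomputable def fdeg (G : Mgraph) (F : Finset G.E) (v : G.V) : ℕ :=
  (F.filter (fun e => v ∈ G.inc e)).card

lemma sym2_eq_of_mem {z : Sym2 G.V} {a b : G.V} (ha : a ∈ z) (hb : b ∈ z) (h : a ≠ b) :
    z = s(a, b) := by
  induction z using Sym2.ind with
  | _ x y =>
    rw [Sym2.mem_iff] at ha hb
    rcases ha with rfl|rfl <;> rcases hb with rfl|rfl <;> simp_all [Sym2.eq_iff] <;> tauto

lemma exists_two_endpoints (hG : G.Loopless) (e : G.E) :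
    ∃ a b : G.V, a ≠ b ∧ G.inc e = s(a, b) := by
  obtain ⟨x, y, h⟩ : ∃ x y, G.inc e = s(x, y) :=
    Sym2.ind (f := fun z => ∃ x y, z = s(x, y)) (fun x y => ⟨x, y, rfl⟩) (G.inc e)
  refine ⟨x, y, ?_, h⟩
  intro hxy; subst hxy
  exact hG e (by rw [h]; exact Sym2.mk_isDiag_iff.2 rfl)

lemma card_endpoints (hG : G.Loopless) (e : G.E) :
    (univ.filter (fun v => v ∈ G.inc e)).card = 2 := by
  obtain ⟨a, b, hab, hinc⟩ := exists_two_endpoints hG e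
  rw [hinc]
  have : (univ.filter (fun v => v ∈ s(a, b))) = {a, b} := by
    ext v; simp [Sym2.mem_iff]
  rw [this, card_insert_of_notMem (by simpa using hab), card_singleton]

lemma natCard_deg (S : Set G.E) (v : G.V) :
    Nat.card {e : G.E // e ∈ S ∧ v ∈ G.inc e} = fdeg G S.toFinset v := by
  rw [Nat.card_eq_fintype_card, Fintype.card_subtype, fdeg]
  congr 1
  ext e
  simp

lemma handshake (hG : G.Loopless) (F : Finset G.E) :
    ∑ v : G.V, fdeg G F v = 2 * F.card := by
  unfold fdeg
  simp only [card_filter]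
  rw [Finset.sum_comm]
  have : ∀ e ∈ F, (∑ v : G.V, if v ∈ G.inc e then 1 else 0) = 2 := by
    intro e _
    rw [← card_filter]
    exact card_endpoints hG e
  rw [Finset.sum_congr rfl this, Finset.sum_const, smul_eq_mul, Nat.mul_comm]

/-- Double counting: sum of `M`-degrees over a set closed under `M`-incidence. -/
lemma dc (hG : G.Loopless) (M : Finset G.E) (C : Finset G.V)
    (hcl : ∀ e ∈ M, ∀ a b : G.V, a ∈ G.inc e → b ∈ G.inc e → a ∈ C → b ∈ C) :
    ∑ v ∈ C, fdeg G M v = 2 * (M.filter (fun e => ∃ a ∈ C, a ∈ G.inc e)).card := by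
  unfold fdeg
  simp only [card_filter]
  rw [Finset.sum_comm]
  have key : ∀ e ∈ M, (∑ v ∈ C, if v ∈ G.inc e then 1 else 0)
      = if (∃ a ∈ C, a ∈ G.inc e) then 2 else 0 := by
    intro e he
    rw [← card_filter]
    by_cases hmeet : ∃ a ∈ C, a ∈ G.inc e
    · rw [if_pos hmeet]
      obtain ⟨x, y, hxy, hinc⟩ := exists_two_endpoints hG e
      obtain ⟨a, haC, hainc⟩ := hmeet
      have hx : x ∈ C := by
        rcases (by rw [hinc] at hainc; exact Sym2.mem_iff.1 hainc) with rfl | rfl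
        · exact haC
        · exact hcl e he a x hainc (by rw [hinc]; simp) haC
      have hy : y ∈ C := hcl e he x y (by rw [hinc]; simp) (by rw [hinc]; simp) hx
      have : C.filter (fun v => v ∈ G.inc e) = {x, y} := by
        ext v
        simp only [mem_filter, mem_insert, mem_singleton, hinc, Sym2.mem_iff]
        constructor
        · rintro ⟨-, h⟩; exact h
        · rintro (rfl | rfl)
          · exact ⟨hx, Or.inl rfl⟩
          · exact ⟨hy, Or.inr rfl⟩
      rw [this, card_insert_of_notMem (by simpa using hxy), card_singleton]
    · rw [if_neg hmeet, card_eq_zero]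
      ext v
      simp only [mem_filter, notMem_empty, iff_false]
      rintro ⟨hvC, hv⟩
      exact hmeet ⟨v, hvC, hv⟩
  rw [Finset.sum_congr rfl key, Finset.sum_ite, Finset.sum_const, Finset.sum_const]
  simp [mul_comm]

section Comp
variable {V : Type} [Fintype V]

/-- The vertex set of a connected component, as a `Finset`. -/
noncomputable def compFin (H : SimpleGraph V) (C : H.ConnectedComponent) : Finset V :=
  univ.filter (fun v => H.connectedComponentMk v = C)

noncomputable instance (H : SimpleGraph V) : Fintype H.ConnectedComponent :=
  Fintype.ofFinite _

lemma natCard_comp (H : SimpleGraph V) (C : H.ConnectedComponent) :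
    Nat.card {v : V // H.connectedComponentMk v = C} = (compFin H C).card := by
  rw [Nat.card_eq_fintype_card, Fintype.card_subtype, compFin]

lemma card_univ_eq_sum_comp (H : SimpleGraph V) :
    Fintype.card V = ∑ C : H.ConnectedComponent, (compFin H C).card := by
  rw [← card_univ]
  rw [Finset.card_eq_sum_card_fiberwise
    (f := H.connectedComponentMk) (t := univ) (fun v _ => mem_univ _)]
  rfl

lemma even_card_odd_comps (H : SimpleGraph V) (heven : Even (Fintype.card V)) :
    Even ((univ.filter (fun C : H.ConnectedComponent => Odd (compFin H C).card)).card) := by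
  have h1 : ((Fintype.card V : ℕ) : ZMod 2) = 0 := by
    obtain ⟨k, hk⟩ := heven
    rw [hk]; push_cast
    rw [← two_mul, show (2:ZMod 2) = 0 from rfl, zero_mul]
  rw [card_univ_eq_sum_comp H, Nat.cast_sum] at h1
  have h2 : ∀ C : H.ConnectedComponent, ((compFin H C).card : ZMod 2)
      = if Odd (compFin H C).card then 1 else 0 := by
    intro C
    by_cases h : Odd (compFin H C).card
    · rw [if_pos h]
      obtain ⟨k, hk⟩ := h
      rw [hk]; push_cast
      rw [show (2:ZMod 2) = 0 from rfl, zero_mul, zero_add]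
    · rw [if_neg h]
      obtain ⟨k, hk⟩ := Nat.not_odd_iff_even.1 h
      rw [hk]; push_cast
      rw [← two_mul, show (2:ZMod 2) = 0 from rfl, zero_mul]
  rw [Finset.sum_congr rfl (fun C _ => h2 C), Finset.sum_boole] at h1
  exact even_iff_two_dvd.2 ((ZMod.natCast_eq_zero_iff _ 2).1 h1)

end Comp

lemma mem_compFin {V : Type} [Fintype V] {H : SimpleGraph V} {C : H.ConnectedComponent}
    {v : V} : v ∈ compFin H C ↔ H.connectedComponentMk v = C := by
  simp [compFin]

lemma adj_of_edge {F : Set G.E} {e : G.E} (he : e ∈ F) {a b : G.V}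
    (ha : a ∈ G.inc e) (hb : b ∈ G.inc e) (hab : a ≠ b) :
    (G.factorGraph F).Adj a b :=
  ⟨hab, e, he, sym2_eq_of_mem ha hb hab⟩

lemma comp_closed {F : Finset G.E} {C : (G.factorGraph ↑F).ConnectedComponent}
    {e : G.E} (he : e ∈ F) {a b : G.V} (ha : a ∈ G.inc e) (hb : b ∈ G.inc e)
    (haC : a ∈ compFin (G.factorGraph ↑F) C) : b ∈ compFin (G.factorGraph ↑F) C := by
  by_cases hab : a = b
  · exact hab ▸ haC
  · rw [mem_compFin] at haC ⊢
    rw [← haC]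
    exact SimpleGraph.ConnectedComponent.eq.2
      ((adj_of_edge (Finset.mem_coe.2 he) ha hb hab).symm.reachable)

lemma oddCycles_eq (F : Finset G.E) :
    G.oddCycles (↑F : Set G.E) =
      (univ.filter (fun C : (G.factorGraph (↑F : Set G.E)).ConnectedComponent =>
        Odd (compFin (G.factorGraph (↑F : Set G.E)) C).card)).card := by
  unfold Mgraph.oddCycles
  rw [Nat.card_eq_fintype_card, Fintype.card_subtype]
  apply Finset.card_bij (fun C _ => C) ?_ (fun _ _ _ _ h => h) (fun C hC => ⟨C, by
    simp only [mem_filter, mem_univ, true_and] at hC ⊢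
    rwa [natCard_comp], rfl⟩)
  intro C hC
  simp only [mem_filter, mem_univ, true_and] at hC ⊢
  rwa [natCard_comp] at hC

lemma even_oddCycles (F : Finset G.E) (heven : Even (Nat.card G.V)) :
    Even (G.oddCycles (↑F : Set G.E)) := by
  rw [oddCycles_eq]
  exact even_card_odd_comps _ (by rwa [← Nat.card_eq_fintype_card])

lemma fdeg_erase {F : Finset G.E} {e1 : G.E} (he : e1 ∈ F) (v : G.V) :
    fdeg G F v = fdeg G (F.erase e1) v + (if v ∈ G.inc e1 then 1 else 0) := by
  unfold fdeg
  rw [Finset.filter_erase]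
  by_cases h : v ∈ G.inc e1
  · rw [if_pos h]
    rw [Finset.card_erase_of_mem (Finset.mem_filter.2 ⟨he, h⟩)]
    have : 1 ≤ (F.filter (fun e => v ∈ G.inc e)).card :=
      Finset.card_pos.2 ⟨e1, Finset.mem_filter.2 ⟨he, h⟩⟩
    omega
  · rw [if_neg h, Finset.erase_eq_of_notMem
      (a := e1) (s := F.filter (fun e => v ∈ G.inc e))
      (fun hc => h (Finset.mem_filter.1 hc).2), add_zero]

lemma fdeg_mono {F F' : Finset G.E} (h : F' ⊆ F) (v : G.V) : fdeg G F' v ≤ fdeg G F v :=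
  Finset.card_le_card (Finset.filter_subset_filter _ h)

lemma natCard_V : Nat.card G.V = Fintype.card G.V := Nat.card_eq_fintype_card

lemma two_colorable_aux (hG : G.Loopless) (N : ℕ) : ∀ F : Finset G.E, F.card ≤ N →
    (∀ v, fdeg G F v ≤ 2) →
    (∀ v, fdeg G F v = 2 →
      ∃ w, (G.factorGraph (↑F : Set G.E)).Reachable v w ∧ fdeg G F w ≤ 1) →
    ∃ c : G.E → Fin 2, ∀ e ∈ F, ∀ f ∈ F, e ≠ f →
      (∃ v, v ∈ G.inc e ∧ v ∈ G.inc f) → c e ≠ c f := by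
  induction N with
  | zero =>
    intro F hcard _ _
    have : F = ∅ := Finset.card_eq_zero.1 (Nat.le_zero.1 hcard)
    exact ⟨fun _ => 0, by simp [this]⟩
  | succ n IHn =>
    intro F hcard hdeg hcomp
    by_cases hF : F = ∅
    · exact ⟨fun _ => 0, by simp [hF]⟩
    obtain ⟨e0, he0⟩ := Finset.nonempty_iff_ne_empty.2 hF
    obtain ⟨x, y, hxy, hincx⟩ := exists_two_endpoints hG e0
    have hx1 : 1 ≤ fdeg G F x :=
      Finset.card_pos.2 ⟨e0, Finset.mem_filter.2 ⟨he0, by rw [hincx]; simp⟩⟩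
    have hv1ex : ∃ v1, fdeg G F v1 = 1 := by
      rcases Nat.lt_or_ge (fdeg G F x) 2 with h | h
      · exact ⟨x, by omega⟩
      · have hx2 : fdeg G F x = 2 := le_antisymm (hdeg x) h
        obtain ⟨w, hreach, hw⟩ := hcomp x hx2
        refine ⟨w, ?_⟩
        have hw1 : 1 ≤ fdeg G F w := by
          by_contra h0
          have hw0 : fdeg G F w = 0 := by omega
          have hwx : w = x := by
            obtain ⟨p⟩ := hreach.symm
            cases p with
            | nil => rfl
            | cons hadj q =>
              exfalso
              obtain ⟨hne, f, hfF, hfinc⟩ := hadj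
              have hf' : f ∈ F.filter (fun e => w ∈ G.inc e) :=
                Finset.mem_filter.2 ⟨Finset.mem_coe.1 hfF, by rw [hfinc]; simp⟩
              have := Finset.card_pos.2 ⟨f, hf'⟩
              unfold fdeg at hw0
              omega
          rw [hwx] at hw0
          omega
        omega
    obtain ⟨v1, hv1⟩ := hv1ex
    obtain ⟨e1, he1⟩ := Finset.card_eq_one.1 hv1
    have he1m := he1 ▸ Finset.mem_singleton_self e1
    have he1F : e1 ∈ F := (Finset.mem_filter.1 he1m).1
    have hv1e1 : v1 ∈ G.inc e1 := (Finset.mem_filter.1 he1m).2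
    obtain ⟨a, b, hab, hinc1⟩ := exists_two_endpoints hG e1
    have hvab : v1 = a ∨ v1 = b := by rw [hinc1] at hv1e1; simpa using hv1e1
    obtain ⟨u1, hu1v, hinc1'⟩ : ∃ u1, u1 ≠ v1 ∧ G.inc e1 = s(v1, u1) := by
      rcases hvab with rfl | rfl
      · exact ⟨b, Ne.symm hab, hinc1⟩
      · exact ⟨a, hab, by rw [hinc1, Sym2.eq_swap]⟩
    have hsub : F.erase e1 ⊆ F := Finset.erase_subset _ _
    have hdeg' : ∀ v, fdeg G (F.erase e1) v ≤ 2 :=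
      fun v => le_trans (fdeg_mono hsub v) (hdeg v)
    have hcomp' : ∀ v, fdeg G (F.erase e1) v = 2 →
        ∃ w, (G.factorGraph (↑(F.erase e1) : Set G.E)).Reachable v w ∧
          fdeg G (F.erase e1) w ≤ 1 := by
      intro v hv2
      by_contra hno
      push_neg at hno
      have hall : ∀ w, (G.factorGraph (↑(F.erase e1) : Set G.E)).Reachable v w →
          fdeg G (F.erase e1) w = 2 := by
        intro w hw
        have h1 := hno w hw
        have h2 := hdeg' w
        omega
      have hkey : ∀ u w : G.V, (p : (G.factorGraph (↑F : Set G.E)).Walk u w) →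
          (G.factorGraph (↑(F.erase e1) : Set G.E)).Reachable v u →
          (G.factorGraph (↑(F.erase e1) : Set G.E)).Reachable v w := by
        intro u w p
        induction p with
        | nil => exact fun h => h
        | @cons u b w hadj q ihq =>
          intro hu
          have hu2 : fdeg G (F.erase e1) u = 2 := hall u hu
          have hune : u ∉ G.inc e1 := by
            intro hmem
            have := fdeg_erase he1F u
            rw [if_pos hmem] at this
            have := hdeg u
            omega
          obtain ⟨hne, f, hfF, hfinc⟩ := hadj
          have hfe1 : f ≠ e1 := by
            intro h; subst h
            exact hune (by rw [hfinc]; simp)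
          have hadj' : (G.factorGraph (↑(F.erase e1) : Set G.E)).Adj u b :=
            ⟨hne, f, Finset.mem_coe.2 (Finset.mem_erase.2 ⟨hfe1, Finset.mem_coe.1 hfF⟩), hfinc⟩
          exact ihq (hu.trans hadj'.reachable)
      have hvF2 : fdeg G F v = 2 :=
        le_antisymm (hdeg v) (le_trans (le_of_eq hv2.symm) (fdeg_mono hsub v))
      obtain ⟨w, hreach, hw⟩ := hcomp v hvF2
      obtain ⟨p⟩ := hreach
      have := hall w (hkey v w p (SimpleGraph.Reachable.refl v))
      have := fdeg_mono hsub w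
      omega
    have hcard' : (F.erase e1).card ≤ n := by
      rw [Finset.card_erase_of_mem he1F]
      omega
    obtain ⟨c', hc'⟩ := IHn (F.erase e1) hcard' hdeg' hcomp'
    have hbadcard : (((F.erase e1).filter (fun f => u1 ∈ G.inc f)).image c').card ≤ 1 := by
      refine le_trans Finset.card_image_le ?_
      have h1 : ((F.erase e1).filter (fun f => u1 ∈ G.inc f)).card
          = fdeg G (F.erase e1) u1 := rfl
      have h2 := fdeg_erase he1F u1
      rw [if_pos (by rw [hinc1']; simp : u1 ∈ G.inc e1)] at h2
      have := hdeg u1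
      omega
    obtain ⟨k, hk⟩ : ∃ k : Fin 2, k ∉ ((F.erase e1).filter (fun f => u1 ∈ G.inc f)).image c' := by
      by_contra h
      push_neg at h
      have hsub2 : (univ : Finset (Fin 2)) ⊆ _ := fun k _ => h k
      have := Finset.card_le_card hsub2
      simp only [Finset.card_univ, Fintype.card_fin] at this
      omega
    refine ⟨Function.update c' e1 k, ?_⟩
    have main : ∀ f ∈ F, f ≠ e1 → (∃ z, z ∈ G.inc e1 ∧ z ∈ G.inc f) →
        Function.update c' e1 k f ≠ Function.update c' e1 k e1 := by
      rintro f hf hfne ⟨z, hz1, hzf⟩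
      rw [Function.update_of_ne hfne, Function.update_self]
      have hfF' : f ∈ F.erase e1 := Finset.mem_erase.2 ⟨hfne, hf⟩
      have hz : z = v1 ∨ z = u1 := by rw [hinc1'] at hz1; simpa using hz1
      rcases hz with rfl | rfl
      · exfalso
        have : f ∈ F.filter (fun e => z ∈ G.inc e) := Finset.mem_filter.2 ⟨hf, hzf⟩
        rw [he1] at this
        exact hfne (Finset.mem_singleton.1 this)
      · intro hEq
        exact hk (hEq ▸ Finset.mem_image_of_mem c' (Finset.mem_filter.2 ⟨hfF', hzf⟩))
    intro e he f hf hef hshare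
    by_cases he1e : e = e1
    · subst he1e
      obtain ⟨z, hz, hzf⟩ := hshare
      exact (main f hf (Ne.symm hef) ⟨z, hz, hzf⟩).symm
    by_cases hf1 : f = e1
    · subst hf1
      obtain ⟨z, hze, hz1⟩ := hshare
      exact main e he he1e ⟨z, hz1, hze⟩
    · rw [Function.update_of_ne he1e, Function.update_of_ne hf1]
      exact hc' e (Finset.mem_erase.2 ⟨he1e, he⟩) f (Finset.mem_erase.2 ⟨hf1, hf⟩) hef hshare

lemma edges_sub_of_fdeg {F' F : Finset G.E} (hsub : F' ⊆ F) {w : G.V}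
    (h : fdeg G F w ≤ fdeg G F' w) : ∀ e ∈ F, w ∈ G.inc e → e ∈ F' := by
  intro e heF hw
  have heq : F'.filter (fun e => w ∈ G.inc e) = F.filter (fun e => w ∈ G.inc e) :=
    Finset.eq_of_subset_of_card_le (Finset.filter_subset_filter _ hsub) h
  have he' : e ∈ F.filter (fun e => w ∈ G.inc e) := Finset.mem_filter.2 ⟨heF, hw⟩
  rw [← heq] at he'
  exact (Finset.mem_filter.1 he').1

lemma reach_transfer {F' F : Finset G.E} {v : G.V}
    (hall : ∀ w, (G.factorGraph (↑F' : Set G.E)).Reachable v w →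
      ∀ e ∈ F, w ∈ G.inc e → e ∈ F') :
    ∀ u w, (G.factorGraph (↑F : Set G.E)).Walk u w →
      (G.factorGraph (↑F' : Set G.E)).Reachable v u →
      (G.factorGraph (↑F' : Set G.E)).Reachable v w := by
  intro u w p
  induction p with
  | nil => exact fun h => h
  | @cons u b w hadj q ihq =>
    intro hu
    obtain ⟨hne, g, hgF, hginc⟩ := hadj
    have hgF' : g ∈ F' := hall u hu g (Finset.mem_coe.1 hgF) (by rw [hginc]; simp)
    exact ihq (hu.trans (SimpleGraph.Adj.reachable ⟨hne, g, Finset.mem_coe.2 hgF', hginc⟩))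

lemma twofactor_color (hG : G.Loopless) (F : Finset G.E) (h2 : ∀ v, fdeg G F v = 2) :
    ∃ (S : Finset G.E) (c : G.E → Fin 2), S ⊆ F ∧
      S.card = G.oddCycles (↑F : Set G.E) ∧
      ∀ e ∈ F, e ∉ S → ∀ f ∈ F, f ∉ S → e ≠ f →
        (∃ v, v ∈ G.inc e ∧ v ∈ G.inc f) → c e ≠ c f := by
  classical
  have h01 : ∀ x : Fin 2, x = 0 ∨ x = 1 := by decide
  have hex : ∀ C : (G.factorGraph (↑F : Set G.E)).ConnectedComponent,
      ∃ e, e ∈ F ∧ ∃ z, z ∈ G.inc e ∧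
        (G.factorGraph (↑F : Set G.E)).connectedComponentMk z = C := by
    intro C
    obtain ⟨v, hv⟩ := C.exists_rep
    have hpos : 0 < fdeg G F v := by rw [h2 v]; omega
    obtain ⟨e, he⟩ := Finset.card_pos.1 hpos
    exact ⟨e, (Finset.mem_filter.1 he).1, v, (Finset.mem_filter.1 he).2, hv⟩
  choose eps hepsF zf hzf1 hzf2 using hex
  have heps_end : ∀ C, ∀ z', z' ∈ G.inc (eps C) →
      (G.factorGraph (↑F : Set G.E)).connectedComponentMk z' = C := by
    intro C z' hz'
    by_cases h : z' = zf C
    · rw [h]; exact hzf2 C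
    · rw [← hzf2 C]
      exact SimpleGraph.ConnectedComponent.eq.2
        (SimpleGraph.Adj.reachable
          (adj_of_edge (Finset.mem_coe.2 (hepsF C)) hz' (hzf1 C) h))
  have heps_inj : Function.Injective eps := by
    intro C C' h
    have h1 := heps_end C' (zf C) (by rw [← h]; exact hzf1 C)
    exact (hzf2 C).symm.trans h1
  have hrem : ∀ (v : G.V) (e : G.E), e ∈ F → v ∈ G.inc e → e ∈ univ.image eps →
      e = eps ((G.factorGraph (↑F : Set G.E)).connectedComponentMk v) := by
    intro v e heF hv himg
    obtain ⟨C, -, rfl⟩ := Finset.mem_image.1 himg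
    rw [heps_end C v hv]
  have hfilter : ∀ v : G.V, (F \ univ.image eps).filter (fun e => v ∈ G.inc e)
      = (F.filter (fun e => v ∈ G.inc e)).erase
          (eps ((G.factorGraph (↑F : Set G.E)).connectedComponentMk v)) := by
    intro v
    ext e
    simp only [Finset.mem_filter, Finset.mem_sdiff, Finset.mem_erase]
    constructor
    · rintro ⟨⟨heF, hne⟩, hv⟩
      refine ⟨fun h => hne ?_, heF, hv⟩
      rw [h]; exact Finset.mem_image_of_mem eps (mem_univ _)
    · rintro ⟨hne, heF, hv⟩
      exact ⟨⟨heF, fun himg => hne (hrem v e heF hv himg)⟩, hv⟩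
  have hfdeg1 : ∀ v : G.V,
      v ∈ G.inc (eps ((G.factorGraph (↑F : Set G.E)).connectedComponentMk v)) →
      fdeg G (F \ univ.image eps) v = 1 := by
    intro v hv
    unfold fdeg
    rw [hfilter v, Finset.card_erase_of_mem (Finset.mem_filter.2 ⟨hepsF _, hv⟩)]
    have h2v : (F.filter (fun e => v ∈ G.inc e)).card = 2 := h2 v
    omega
  have hfdeg2 : ∀ v : G.V,
      v ∉ G.inc (eps ((G.factorGraph (↑F : Set G.E)).connectedComponentMk v)) →
      fdeg G (F \ univ.image eps) v = 2 := by
    intro v hv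
    unfold fdeg
    rw [hfilter v, Finset.erase_eq_of_notMem
      (a := eps ((G.factorGraph (↑F : Set G.E)).connectedComponentMk v))
      (s := F.filter (fun e => v ∈ G.inc e))
      (fun h => hv (Finset.mem_filter.1 h).2)]
    exact h2 v
  have hsubF : F \ univ.image eps ⊆ F := Finset.sdiff_subset
  have hdeg' : ∀ v, fdeg G (F \ univ.image eps) v ≤ 2 :=
    fun v => le_trans (fdeg_mono hsubF v) (le_of_eq (h2 v))
  have hcomp' : ∀ v, fdeg G (F \ univ.image eps) v = 2 →
      ∃ w, (G.factorGraph (↑(F \ univ.image eps) : Set G.E)).Reachable v w ∧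
        fdeg G (F \ univ.image eps) w ≤ 1 := by
    intro v hv2
    by_contra hno
    push_neg at hno
    have hall : ∀ w, (G.factorGraph (↑(F \ univ.image eps) : Set G.E)).Reachable v w →
        ∀ e ∈ F, w ∈ G.inc e → e ∈ F \ univ.image eps := by
      intro w hw
      have hgt := hno w hw
      have hle := fdeg_mono hsubF w
      have h3 := h2 w
      exact edges_sub_of_fdeg hsubF (by omega)
    have hvC := hzf2 ((G.factorGraph (↑F : Set G.E)).connectedComponentMk v)
    have hreachF : (G.factorGraph (↑F : Set G.E)).Reachable v
        (zf ((G.factorGraph (↑F : Set G.E)).connectedComponentMk v)) :=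
      SimpleGraph.ConnectedComponent.eq.1 hvC.symm
    obtain ⟨p⟩ := hreachF
    have hreach' := reach_transfer hall v _ p (SimpleGraph.Reachable.refl v)
    have hw1 : fdeg G (F \ univ.image eps)
        (zf ((G.factorGraph (↑F : Set G.E)).connectedComponentMk v)) = 1 := by
      apply hfdeg1
      rw [hvC]
      exact hzf1 _
    have := hno _ hreach'
    omega
  obtain ⟨c, hc⟩ := two_colorable_aux hG (F \ univ.image eps).card (F \ univ.image eps)
    le_rfl hdeg' hcomp'
  have huniq : ∀ v : G.V,
      v ∈ G.inc (eps ((G.factorGraph (↑F : Set G.E)).connectedComponentMk v)) →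
      ∃ g, (F \ univ.image eps).filter (fun e => v ∈ G.inc e) = {g} :=
    fun v hv => Finset.card_eq_one.1 (hfdeg1 v hv)
  have hM1 : ∀ v : G.V, fdeg G (F \ univ.image eps) v = 2 →
      fdeg G ((F \ univ.image eps).filter (fun g => c g = 0)) v = 1 := by
    intro v hv
    obtain ⟨g1, g2, hg12, hpair⟩ := Finset.card_eq_two.1
      (show ((F \ univ.image eps).filter (fun e => v ∈ G.inc e)).card = 2 from hv)
    have hg1m : g1 ∈ (F \ univ.image eps).filter (fun e => v ∈ G.inc e) := by
      rw [hpair]; simp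
    have hg2m : g2 ∈ (F \ univ.image eps).filter (fun e => v ∈ G.inc e) := by
      rw [hpair]; simp
    have hcne : c g1 ≠ c g2 :=
      hc g1 (Finset.mem_filter.1 hg1m).1 g2 (Finset.mem_filter.1 hg2m).1 hg12
        ⟨v, (Finset.mem_filter.1 hg1m).2, (Finset.mem_filter.1 hg2m).2⟩
    show (((F \ univ.image eps).filter (fun g => c g = 0)).filter
      (fun e => v ∈ G.inc e)).card = 1
    rw [Finset.filter_comm, hpair]
    rw [show ({g1, g2} : Finset G.E) = insert g1 {g2} from rfl]
    rw [Finset.filter_insert, Finset.filter_singleton]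
    rcases h01 (c g1) with h1 | h1 <;> rcases h01 (c g2) with hb | hb <;>
      first
      | (exact absurd (h1.trans hb.symm) hcne)
      | simp [h1, hb]
  have hcfufw : ∀ C : (G.factorGraph (↑F : Set G.E)).ConnectedComponent,
      Even (compFin (G.factorGraph (↑F : Set G.E)) C).card →
      ∀ g1, g1 ∈ F \ univ.image eps → (∃ z, z ∈ G.inc (eps C) ∧ z ∈ G.inc g1) →
      ∀ g2, g2 ∈ F \ univ.image eps → (∃ z, z ∈ G.inc (eps C) ∧ z ∈ G.inc g2) →
      c g1 = c g2 := by
    intro C hev g1 hg1 hs1 g2 hg2 hs2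
    obtain ⟨u, w, huw, hincC⟩ := exists_two_endpoints hG (eps C)
    have hmku : (G.factorGraph (↑F : Set G.E)).connectedComponentMk u = C :=
      heps_end C u (by rw [hincC]; simp)
    have hmkw : (G.factorGraph (↑F : Set G.E)).connectedComponentMk w = C :=
      heps_end C w (by rw [hincC]; simp)
    have huinc : u ∈ G.inc (eps ((G.factorGraph (↑F : Set G.E)).connectedComponentMk u)) := by
      rw [hmku, hincC]; simp
    have hwinc : w ∈ G.inc (eps ((G.factorGraph (↑F : Set G.E)).connectedComponentMk w)) := by
      rw [hmkw, hincC]; simp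
    obtain ⟨fu, hfu⟩ := huniq u huinc
    obtain ⟨fw, hfw⟩ := huniq w hwinc
    have hclaim : ∀ g, g ∈ F \ univ.image eps → (∃ z, z ∈ G.inc (eps C) ∧ z ∈ G.inc g) →
        g = fu ∨ g = fw := by
      rintro g hg ⟨z, hz1, hz2⟩
      have hz : z = u ∨ z = w := by rw [hincC] at hz1; simpa using hz1
      rcases hz with rfl | rfl
      · left
        have hm : g ∈ (F \ univ.image eps).filter (fun e => z ∈ G.inc e) :=
          Finset.mem_filter.2 ⟨hg, hz2⟩
        rw [hfu] at hm
        exact Finset.mem_singleton.1 hm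
      · right
        have hm : g ∈ (F \ univ.image eps).filter (fun e => z ∈ G.inc e) :=
          Finset.mem_filter.2 ⟨hg, hz2⟩
        rw [hfw] at hm
        exact Finset.mem_singleton.1 hm
    have hkey : c fu = c fw := by
      have hcl : ∀ e ∈ (F \ univ.image eps).filter (fun g => c g = 0), ∀ a b : G.V,
          a ∈ G.inc e → b ∈ G.inc e →
          a ∈ compFin (G.factorGraph (↑F : Set G.E)) C →
          b ∈ compFin (G.factorGraph (↑F : Set G.E)) C := by
        intro e he a b ha hb haC
        exact comp_closed (hsubF (Finset.mem_filter.1 he).1) ha hb haC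
      have hdc := dc hG ((F \ univ.image eps).filter (fun g => c g = 0))
        (compFin (G.factorGraph (↑F : Set G.E)) C) hcl
      set M := (F \ univ.image eps).filter (fun g => c g = 0) with hM
      have hu : u ∈ compFin (G.factorGraph (↑F : Set G.E)) C := mem_compFin.2 hmku
      have hwC : w ∈ compFin (G.factorGraph (↑F : Set G.E)) C := mem_compFin.2 hmkw
      have hwB : w ∈ (compFin (G.factorGraph (↑F : Set G.E)) C).erase u :=
        Finset.mem_erase.2 ⟨Ne.symm huw, hwC⟩
      have e1 := Finset.add_sum_erase _ (fdeg G M) hu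
      have e2 := Finset.add_sum_erase _ (fdeg G M) hwB
      have hint : ∀ v ∈ ((compFin (G.factorGraph (↑F : Set G.E)) C).erase u).erase w,
          fdeg G M v = 1 := by
        intro v hv
        have hvw : v ≠ w := (Finset.mem_erase.1 hv).1
        have hvu : v ≠ u := (Finset.mem_erase.1 (Finset.mem_erase.1 hv).2).1
        have hvC : v ∈ compFin (G.factorGraph (↑F : Set G.E)) C :=
          (Finset.mem_erase.1 (Finset.mem_erase.1 hv).2).2
        have hnotinc : v ∉ G.inc
            (eps ((G.factorGraph (↑F : Set G.E)).connectedComponentMk v)) := by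
          rw [mem_compFin.1 hvC, hincC]
          simp only [Sym2.mem_iff]
          rintro (rfl | rfl)
          exacts [hvu rfl, hvw rfl]
        exact hM1 v (hfdeg2 v hnotinc)
      have hsum_int : ∑ v ∈ ((compFin (G.factorGraph (↑F : Set G.E)) C).erase u).erase w,
          fdeg G M v = (compFin (G.factorGraph (↑F : Set G.E)) C).card - 2 := by
        rw [Finset.sum_congr rfl hint, Finset.sum_const, smul_eq_mul, mul_one,
          Finset.card_erase_of_mem hwB, Finset.card_erase_of_mem hu]
        omega
      have hMu : fdeg G M u = if c fu = 0 then 1 else 0 := by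
        show ((M.filter (fun e => u ∈ G.inc e)).card) = _
        rw [hM, Finset.filter_comm, hfu, Finset.filter_singleton]
        by_cases h : c fu = 0 <;> simp [h]
      have hMw : fdeg G M w = if c fw = 0 then 1 else 0 := by
        show ((M.filter (fun e => w ∈ G.inc e)).card) = _
        rw [hM, Finset.filter_comm, hfw, Finset.filter_singleton]
        by_cases h : c fw = 0 <;> simp [h]
      have hcard2 : 2 ≤ (compFin (G.factorGraph (↑F : Set G.E)) C).card := by
        have h1 := Finset.one_lt_card.2 ⟨u, hu, w, hwC, huw⟩
        omega
      obtain ⟨m, hm⟩ := hev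
      have hEvenTot : ∃ t, ∑ v ∈ compFin (G.factorGraph (↑F : Set G.E)) C, fdeg G M v
          = t + t := ⟨_, by rw [hdc]; ring⟩
      obtain ⟨t, ht⟩ := hEvenTot
      rw [← e1, ← e2, hsum_int, hMu, hMw] at ht
      by_cases hx : c fu = 0 <;> by_cases hy : c fw = 0
      · exact hx.trans hy.symm
      · exfalso; rw [if_pos hx, if_neg hy] at ht; omega
      · exfalso; rw [if_neg hx, if_pos hy] at ht; omega
      · exact ((h01 (c fu)).resolve_left hx).trans ((h01 (c fw)).resolve_left hy).symm
    rcases hclaim g1 hg1 hs1 with rfl | rfl <;> rcases hclaim g2 hg2 hs2 with rfl | rfl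
    · rfl
    · exact hkey
    · exact hkey.symm
    · rfl
  have hkex : ∀ C : (G.factorGraph (↑F : Set G.E)).ConnectedComponent,
      ∃ k : Fin 2, Even (compFin (G.factorGraph (↑F : Set G.E)) C).card →
      ∀ g, g ∈ F \ univ.image eps → (∃ z, z ∈ G.inc (eps C) ∧ z ∈ G.inc g) → c g ≠ k := by
    intro C
    by_cases hev : Even (compFin (G.factorGraph (↑F : Set G.E)) C).card
    · by_cases hany : ∃ g0, g0 ∈ F \ univ.image eps ∧
          (∃ z, z ∈ G.inc (eps C) ∧ z ∈ G.inc g0)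
      · obtain ⟨g0, hg0, hs0⟩ := hany
        refine ⟨if c g0 = 0 then 1 else 0, fun _ g hg hs => ?_⟩
        have heq := hcfufw C hev g hg hs g0 hg0 hs0
        rw [heq]
        by_cases h : c g0 = 0
        · rw [if_pos h, h]; exact zero_ne_one
        · rw [if_neg h]; exact h
      · exact ⟨0, fun _ g hg hs => absurd ⟨g, hg, hs⟩ hany⟩
    · exact ⟨0, fun h => absurd h hev⟩
  choose kf hkf using hkex
  have hepex : ∀ g : G.E, ∃ v : G.V, v ∈ G.inc g := by
    intro g
    obtain ⟨a, b, -, h⟩ := exists_two_endpoints hG g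
    exact ⟨a, by rw [h]; simp⟩
  choose ep hep using hepex
  set cstar : G.E → Fin 2 := fun g => if g ∈ univ.image eps
      then kf ((G.factorGraph (↑F : Set G.E)).connectedComponentMk (ep g))
      else c g with hcstar
  have hval : ∀ C, cstar (eps C) = kf C := by
    intro C
    simp only [hcstar]
    rw [if_pos (Finset.mem_image_of_mem eps (mem_univ C))]
    congr 1
    exact heps_end C (ep (eps C)) (hep (eps C))
  have hvalc : ∀ g, g ∉ univ.image eps → cstar g = c g := by
    intro g h
    simp only [hcstar]
    rw [if_neg h]
  refine ⟨(univ.filter (fun C : (G.factorGraph (↑F : Set G.E)).ConnectedComponent =>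
      Odd (compFin (G.factorGraph (↑F : Set G.E)) C).card)).image eps, cstar, ?_, ?_, ?_⟩
  · intro e he
    obtain ⟨C, -, rfl⟩ := Finset.mem_image.1 he
    exact hepsF C
  · rw [Finset.card_image_of_injOn (heps_inj.injOn), oddCycles_eq]
  · intro e heF heS f hfF hfS hef hshare
    by_cases he' : e ∈ univ.image eps <;> by_cases hf' : f ∈ univ.image eps
    · obtain ⟨C, -, rfl⟩ := Finset.mem_image.1 he'
      obtain ⟨C', -, rfl⟩ := Finset.mem_image.1 hf'
      obtain ⟨z, hz1, hz2⟩ := hshare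
      exact absurd (congrArg eps ((heps_end C z hz1).symm.trans (heps_end C' z hz2))) hef
    · obtain ⟨C, -, rfl⟩ := Finset.mem_image.1 he'
      have hevC : Even (compFin (G.factorGraph (↑F : Set G.E)) C).card := by
        rcases Nat.even_or_odd (compFin (G.factorGraph (↑F : Set G.E)) C).card with h | h
        · exact h
        · exact absurd (Finset.mem_image_of_mem eps
            (Finset.mem_filter.2 ⟨mem_univ _, h⟩)) heS
      rw [hval C, hvalc f hf']
      exact Ne.symm (hkf C hevC f (Finset.mem_sdiff.2 ⟨hfF, hf'⟩) hshare)
    · obtain ⟨C, -, rfl⟩ := Finset.mem_image.1 hf'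
      have hevC : Even (compFin (G.factorGraph (↑F : Set G.E)) C).card := by
        rcases Nat.even_or_odd (compFin (G.factorGraph (↑F : Set G.E)) C).card with h | h
        · exact h
        · exact absurd (Finset.mem_image_of_mem eps
            (Finset.mem_filter.2 ⟨mem_univ _, h⟩)) hfS
      rw [hval C, hvalc e he']
      obtain ⟨z, hz1, hz2⟩ := hshare
      exact hkf C hevC e (Finset.mem_sdiff.2 ⟨heF, he'⟩) ⟨z, hz2, hz1⟩
    · rw [hvalc e he', hvalc f hf']
      exact hc e (Finset.mem_sdiff.2 ⟨heF, he'⟩) f (Finset.mem_sdiff.2 ⟨hfF, hf'⟩) hef hshare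

lemma degree_eq_fdeg (G : Mgraph) (v : G.V) : G.degree v = fdeg G univ v := by
  unfold Mgraph.degree fdeg
  rw [Nat.card_eq_fintype_card, Fintype.card_subtype]

lemma setOf_toFinset_eq (p : G.E → Prop) :
    {e : G.E | p e}.toFinset = univ.filter (fun e => p e) := by
  ext e; simp

lemma twoFactor_fdeg {S : Set G.E} (h : G.IsTwoFactor S) (v : G.V) :
    fdeg G S.toFinset v = 2 := by
  rw [← natCard_deg]; exact h v

lemma oneFactor_fdeg {S : Set G.E} (h : G.IsOneFactor S) (v : G.V) :
    fdeg G S.toFinset v = 1 := by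
  rw [← natCard_deg]; exact h v

lemma fdeg_fiber_sum (n : ℕ) (f : G.E → Option (Fin n)) (v : G.V) :
    fdeg G univ v = ∑ o : Option (Fin n), fdeg G (univ.filter (fun e => f e = o)) v := by
  unfold fdeg
  rw [Finset.card_eq_sum_card_fiberwise (f := f) (t := univ) (fun x _ => mem_univ _)]
  apply Finset.sum_congr rfl
  intro o _
  rw [Finset.filter_comm]

lemma s_eq_fiber {s : ℕ} (hreg : G.Regular s) {n : ℕ} {f : G.E → Option (Fin n)}
    (hdec : G.IsDecomp f) (v : G.V) :
    s = fdeg G (univ.filter (fun e => f e = none)) v + 2 * n := by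
  have h1 := (degree_eq_fdeg G v).symm.trans (hreg v)
  rw [fdeg_fiber_sum n f] at h1
  rw [Fintype.sum_option] at h1
  have h2 : ∀ i : Fin n, fdeg G (univ.filter (fun e => f e = some i)) v = 2 := by
    intro i
    have h3 := twoFactor_fdeg (hdec.2 i) v
    rw [setOf_toFinset_eq] at h3
    convert h3 using 2
    ext e; simp
  rw [Finset.sum_congr rfl (fun i _ => h2 i), Finset.sum_const, smul_eq_mul] at h1
  rw [← h1]
  ring_nf
  simp [Finset.card_univ, mul_comm]

lemma decomp_to_coloring (hG : G.Loopless) {s : ℕ} (hreg : G.Regular s)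
    (hne : Nonempty G.V) {n : ℕ} (f : G.E → Option (Fin n)) (hdec : G.IsDecomp f) :
    ∃ S : Set G.E, Nat.card S = G.decompOdd f ∧ (G.deleteEdges S).EdgeColorable s := by
  classical
  have hfib2 : ∀ i : Fin n, ∀ v, fdeg G (univ.filter (fun e => f e = some i)) v = 2 := by
    intro i v
    have h3 := twoFactor_fdeg (hdec.2 i) v
    rw [setOf_toFinset_eq] at h3
    convert h3 using 2
    ext e; simp
  choose Si ci hSisub hSicard hciprop using
    fun i : Fin n => twofactor_color hG (univ.filter (fun e => f e = some i)) (hfib2 i)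
  have hStot_card : (Finset.biUnion univ Si).card = G.decompOdd f := by
    rw [Finset.card_biUnion]
    · unfold Mgraph.decompOdd
      apply Finset.sum_congr rfl
      intro i _
      rw [hSicard i]
      congr 1
      ext e; simp
    · intro i _ j _ hij
      rw [Function.onFun, Finset.disjoint_left]
      intro e hei hej
      have h1 := (Finset.mem_filter.1 (hSisub i hei)).2
      have h2 := (Finset.mem_filter.1 (hSisub j hej)).2
      exact hij (Option.some.inj (h1.symm.trans h2))
  have hmemS : ∀ i : Fin n, ∀ e ∈ Si i, e ∈ Finset.biUnion univ Si :=
    fun i e he => Finset.mem_biUnion.2 ⟨i, mem_univ i, he⟩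
  rcases hdec.1 with h0 | h1f
  · -- case A : s = 2n, no 1-factor
    have hnone : univ.filter (fun e => f e = none) = ∅ := by
      ext e; simp [h0 e]
    have hs2n : s = 2 * n := by
      obtain ⟨v⟩ := hne
      have h4 := s_eq_fiber hreg hdec v
      rw [hnone] at h4
      simpa [fdeg] using h4
    have hbound : ∀ e : G.E,
        (match f e with | some i => 2 * i.1 + (ci i e).1 | none => 0) < s := by
      intro e
      rcases hfe : f e with _ | i
      · exact absurd hfe (h0 e)
      · show 2 * i.1 + (ci i e).1 < s
        have h5 := i.2
        have h6 := (ci i e).2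
        omega
    have hidx_some : ∀ (e : G.E) (i : Fin n), f e = some i →
        (match f e with | some i => 2 * i.1 + (ci i e).1 | none => 0)
          = 2 * i.1 + (ci i e).1 := by
      intro e i h
      rw [h]
    refine ⟨(↑(Finset.biUnion univ Si) : Set G.E), ?_, ?_⟩
    · rw [Nat.card_coe_set_eq, Set.ncard_coe_finset, hStot_card]
    · refine ⟨fun e => ⟨_, hbound e.1⟩, ?_⟩
      intro e f' hef hshare hEq
      have hidxeq := congrArg Fin.val hEq
      simp only at hidxeq
      have he1 : e.1 ∉ Finset.biUnion univ Si := fun h => e.2 (Finset.mem_coe.2 h)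
      have hf1 : f'.1 ∉ Finset.biUnion univ Si := fun h => f'.2 (Finset.mem_coe.2 h)
      have hne1 : e.1 ≠ f'.1 := fun h => hef (Subtype.ext h)
      obtain ⟨v, hv1, hv2⟩ := hshare
      rcases hfe : f e.1 with _ | i
      · exact absurd hfe (h0 e.1)
      rcases hff : f f'.1 with _ | j
      · exact absurd hff (h0 f'.1)
      rw [hidx_some _ _ hfe, hidx_some _ _ hff] at hidxeq
      by_cases hij : i = j
      · subst hij
        have hci : ci i e.1 ≠ ci i f'.1 :=
          hciprop i e.1 (Finset.mem_filter.2 ⟨mem_univ _, hfe⟩)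
            (fun h => he1 (hmemS i e.1 h)) f'.1
            (Finset.mem_filter.2 ⟨mem_univ _, hff⟩)
            (fun h => hf1 (hmemS i f'.1 h)) hne1 ⟨v, hv1, hv2⟩
        have hb1 : (ci i e.1).1 = (ci i f'.1).1 := by omega
        exact hci (Fin.ext hb1)
      · have h5 := i.2
        have h6 := j.2
        have h7 := (ci i e.1).2
        have h8 := (ci j f'.1).2
        exact hij (Fin.ext (by omega))
  · -- case B : s = 2n + 1, with 1-factor
    have hnone1 : ∀ v, fdeg G (univ.filter (fun e => f e = none)) v = 1 := by
      intro v
      have h3 := oneFactor_fdeg h1f v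
      rw [setOf_toFinset_eq] at h3
      convert h3 using 2
      ext e; simp
    have hs2n : s = 2 * n + 1 := by
      obtain ⟨v⟩ := hne
      have h4 := s_eq_fiber hreg hdec v
      rw [hnone1 v] at h4
      omega
    have hbound : ∀ e : G.E,
        (match f e with | some i => 2 * i.1 + (ci i e).1 | none => 2 * n) < s := by
      intro e
      rcases hfe : f e with _ | i
      · show 2 * n < s; omega
      · show 2 * i.1 + (ci i e).1 < s
        have h5 := i.2
        have h6 := (ci i e).2
        omega
    have hidx_some : ∀ (e : G.E) (i : Fin n), f e = some i →
        (match f e with | some i => 2 * i.1 + (ci i e).1 | none => 2 * n)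
          = 2 * i.1 + (ci i e).1 := by
      intro e i h
      rw [h]
    have hidx_none : ∀ (e : G.E), f e = none →
        (match f e with | some i => 2 * i.1 + (ci i e).1 | none => 2 * n) = 2 * n := by
      intro e h
      rw [h]
    refine ⟨(↑(Finset.biUnion univ Si) : Set G.E), ?_, ?_⟩
    · rw [Nat.card_coe_set_eq, Set.ncard_coe_finset, hStot_card]
    · refine ⟨fun e => ⟨_, hbound e.1⟩, ?_⟩
      intro e f' hef hshare hEq
      have hidxeq := congrArg Fin.val hEq
      simp only at hidxeq
      have he1 : e.1 ∉ Finset.biUnion univ Si := fun h => e.2 (Finset.mem_coe.2 h)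
      have hf1 : f'.1 ∉ Finset.biUnion univ Si := fun h => f'.2 (Finset.mem_coe.2 h)
      have hne1 : e.1 ≠ f'.1 := fun h => hef (Subtype.ext h)
      obtain ⟨v, hv1, hv2⟩ := hshare
      rcases hfe : f e.1 with _ | i <;> rcases hff : f f'.1 with _ | j
      · -- both none : contradicts 1-factor
        have hc1 := hnone1 v
        have hlt : 1 < fdeg G (univ.filter (fun e => f e = none)) v := by
          unfold fdeg
          exact Finset.one_lt_card.2 ⟨e.1, by simp [hfe]; exact hv1, f'.1, by simp [hff]; exact hv2, hne1⟩
        omega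
      · -- none, some j
        rw [hidx_none _ hfe, hidx_some _ _ hff] at hidxeq
        have h5 := j.2
        have h6 := (ci j f'.1).2
        omega
      · rw [hidx_some _ _ hfe, hidx_none _ hff] at hidxeq
        have h5 := i.2
        have h6 := (ci i e.1).2
        omega
      · rw [hidx_some _ _ hfe, hidx_some _ _ hff] at hidxeq
        by_cases hij : i = j
        · subst hij
          have hci : ci i e.1 ≠ ci i f'.1 :=
            hciprop i e.1 (Finset.mem_filter.2 ⟨mem_univ _, hfe⟩)
              (fun h => he1 (hmemS i e.1 h)) f'.1
              (Finset.mem_filter.2 ⟨mem_univ _, hff⟩)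
              (fun h => hf1 (hmemS i f'.1 h)) hne1 ⟨v, hv1, hv2⟩
          have hb1 : (ci i e.1).1 = (ci i f'.1).1 := by omega
          exact hci (Fin.ext hb1)
        · have h5 := i.2
          have h6 := j.2
          have h7 := (ci i e.1).2
          have h8 := (ci j f'.1).2
          exact hij (Fin.ext (by omega))

lemma maxDegree_eq {s : ℕ} (hreg : G.Regular s) (hne : Nonempty G.V) :
    G.maxDegree = s := by
  unfold Mgraph.maxDegree
  have h1 : Set.range G.degree = {s} := by
    ext k
    simp only [Set.mem_range, Set.mem_singleton_iff]
    constructor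
    · rintro ⟨v, rfl⟩; exact hreg v
    · rintro rfl; obtain ⟨v⟩ := hne; exact ⟨v, hreg v⟩
  rw [h1, csSup_singleton]

/-- color class of `k` for a coloring `c` with removed edges `R` -/
noncomputable def Mcl (G : Mgraph) {s : ℕ} (R : Finset G.E) (c : G.E → Fin s) (k : Fin s) :
    Finset G.E :=
  (univ \ R).filter (fun g => c g = k)

lemma fdeg_univ_eq {s : ℕ} (hreg : G.Regular s) (v : G.V) : fdeg G univ v = s :=
  (degree_eq_fdeg G v).symm.trans (hreg v)

lemma fdeg_sdiff (R : Finset G.E) (v : G.V) :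
    fdeg G (univ \ R) v = fdeg G univ v - fdeg G R v := by
  unfold fdeg
  have h1 : (univ \ R).filter (fun e => v ∈ G.inc e)
      = univ.filter (fun e => v ∈ G.inc e) \ R.filter (fun e => v ∈ G.inc e) := by
    ext e
    simp only [Finset.mem_filter, Finset.mem_sdiff]
    tauto
  rw [h1, Finset.card_sdiff_of_subset (by
    intro e he
    simp only [Finset.mem_filter] at he ⊢
    exact ⟨mem_univ _, he.2⟩)]

lemma color_classes (hG : G.Loopless) {s : ℕ} (hreg : G.Regular s) (R : Finset G.E)
    (c : G.E → Fin s)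
    (hprop : ∀ e, e ∉ R → ∀ f, f ∉ R → e ≠ f →
      (∃ v, v ∈ G.inc e ∧ v ∈ G.inc f) → c e ≠ c f) (v : G.V) :
    (∀ k : Fin s, fdeg G (Mcl G R c k) v ≤ 1) ∧
    (univ.filter (fun k : Fin s => fdeg G (Mcl G R c k) v = 0)).card = fdeg G R v := by
  have hmatch : ∀ k : Fin s, fdeg G (Mcl G R c k) v ≤ 1 := by
    intro k
    by_contra h
    push_neg at h
    obtain ⟨e, he, f, hf, hef⟩ := Finset.one_lt_card.1 h
    simp only [Mcl, Finset.mem_filter, Finset.mem_sdiff] at he hf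
    exact hprop e he.1.1.2 f hf.1.1.2 hef ⟨v, he.2, hf.2⟩
      (he.1.2.trans hf.1.2.symm)
  refine ⟨hmatch, ?_⟩
  have hsum : ∑ k : Fin s, fdeg G (Mcl G R c k) v = fdeg G (univ \ R) v := by
    unfold Mcl fdeg
    rw [Finset.card_eq_sum_card_fiberwise
      (f := c) (t := univ) (fun x _ => mem_univ _)]
    apply Finset.sum_congr rfl
    intro k _
    rw [Finset.filter_comm]
  have hV : fdeg G (univ \ R) v = s - fdeg G R v := by
    rw [fdeg_sdiff, fdeg_univ_eq hreg]
  have hRle : fdeg G R v ≤ s := by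
    have := fdeg_mono (Finset.subset_univ R) v
    rw [fdeg_univ_eq hreg] at this
    exact this
  have hsplit := Finset.sum_filter_add_sum_filter_not univ
    (fun k : Fin s => fdeg G (Mcl G R c k) v = 0) (fun k => fdeg G (Mcl G R c k) v)
  have hzero : ∑ k ∈ univ.filter (fun k : Fin s => fdeg G (Mcl G R c k) v = 0),
      fdeg G (Mcl G R c k) v = 0 := by
    apply Finset.sum_eq_zero
    intro k hk
    exact (Finset.mem_filter.1 hk).2
  have hone : ∑ k ∈ univ.filter (fun k : Fin s => ¬ fdeg G (Mcl G R c k) v = 0),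
      fdeg G (Mcl G R c k) v
      = (univ.filter (fun k : Fin s => ¬ fdeg G (Mcl G R c k) v = 0)).card := by
    rw [Finset.card_eq_sum_ones]
    apply Finset.sum_congr rfl
    intro k hk
    have h1 := (Finset.mem_filter.1 hk).2
    have h2 := hmatch k
    omega
  have hcards := Finset.card_filter_add_card_filter_not
    (s := (univ : Finset (Fin s))) (p := fun k : Fin s => fdeg G (Mcl G R c k) v = 0)
  simp only [Finset.card_univ, Fintype.card_fin] at hcards
  rw [← hsplit, hzero, hone, hV] at hsum
  omega

lemma miss_card_even {s : ℕ} (hG : G.Loopless) (heven : Even (Nat.card G.V))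
    (R : Finset G.E) (c : G.E → Fin s) (k : Fin s)
    (hm : ∀ v : G.V, fdeg G (Mcl G R c k) v ≤ 1) :
    Even (univ.filter (fun v : G.V => fdeg G (Mcl G R c k) v = 0)).card := by
  have hhs := handshake hG (Mcl G R c k)
  have hsplit := Finset.sum_filter_add_sum_filter_not univ
    (fun v : G.V => fdeg G (Mcl G R c k) v = 0) (fun v => fdeg G (Mcl G R c k) v)
  have hzero : ∑ v ∈ univ.filter (fun v : G.V => fdeg G (Mcl G R c k) v = 0),
      fdeg G (Mcl G R c k) v = 0 :=
    Finset.sum_eq_zero (fun v hv => (Finset.mem_filter.1 hv).2)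
  have hone : ∑ v ∈ univ.filter (fun v : G.V => ¬ fdeg G (Mcl G R c k) v = 0),
      fdeg G (Mcl G R c k) v
      = (univ.filter (fun v : G.V => ¬ fdeg G (Mcl G R c k) v = 0)).card := by
    rw [Finset.card_eq_sum_ones]
    apply Finset.sum_congr rfl
    intro v hv
    have h1 := (Finset.mem_filter.1 hv).2
    have h2 := hm v
    omega
  have hcards := Finset.card_filter_add_card_filter_not
    (s := (univ : Finset G.V)) (p := fun v : G.V => fdeg G (Mcl G R c k) v = 0)
  rw [natCard_V] at heven
  rw [Finset.card_univ] at hcards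
  obtain ⟨m, hmm⟩ := heven
  rw [← hsplit, hzero, hone] at hhs
  refine ⟨(univ.filter (fun v : G.V => fdeg G (Mcl G R c k) v = 0)).card
    + (Mcl G R c k).card - m, ?_⟩
  omega

lemma natCard_deg' (p : G.E → Prop) (v : G.V) :
    Nat.card {e : G.E // p e ∧ v ∈ G.inc e} = fdeg G (univ.filter (fun e => p e)) v := by
  rw [Nat.card_eq_fintype_card, Fintype.card_subtype]
  unfold fdeg
  congr 1
  ext e
  simp

lemma oddCycles_zero_of_unit (hG : G.Loopless) (F M : Finset G.E) (hMF : M ⊆ F)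
    (hM1 : ∀ v, fdeg G M v = 1) : G.oddCycles (↑F : Set G.E) = 0 := by
  rw [oddCycles_eq, Finset.card_eq_zero, Finset.eq_empty_iff_forall_notMem]
  intro C hC
  have hOdd := (Finset.mem_filter.1 hC).2
  have hdc := dc hG M (compFin (G.factorGraph (↑F : Set G.E)) C)
    (fun e he a b ha hb haC => comp_closed (hMF he) ha hb haC)
  have hsum : ∑ v ∈ compFin (G.factorGraph (↑F : Set G.E)) C, fdeg G M v
      = (compFin (G.factorGraph (↑F : Set G.E)) C).card := by
    rw [Finset.sum_congr rfl (fun v _ => hM1 v), Finset.sum_const, smul_eq_mul, mul_one]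
  rw [hsum] at hdc
  exact (Nat.not_even_iff_odd.2 hOdd) ⟨_, by rw [hdc]; ring⟩

lemma oddCycles_le_of_cover (hG : G.Loopless) (F M R : Finset G.E) (hMF : M ⊆ F)
    (hRF : R ⊆ F) (hM1 : ∀ v, fdeg G R v = 0 → fdeg G M v = 1) :
    G.oddCycles (↑F : Set G.E) ≤ R.card := by
  rcases Finset.eq_empty_or_nonempty R with rfl | ⟨e0, he0⟩
  · rw [oddCycles_zero_of_unit hG F M hMF (fun v => hM1 v (by simp [fdeg]))]
    exact Nat.zero_le _
  · rw [oddCycles_eq]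
    have hex : ∀ C ∈ univ.filter
        (fun C : (G.factorGraph (↑F : Set G.E)).ConnectedComponent =>
          Odd (compFin (G.factorGraph (↑F : Set G.E)) C).card),
        ∃ e ∈ R, ∃ z ∈ G.inc e, z ∈ compFin (G.factorGraph (↑F : Set G.E)) C := by
      intro C hC
      by_contra h
      push_neg at h
      have hOdd := (Finset.mem_filter.1 hC).2
      have hM1' : ∀ v ∈ compFin (G.factorGraph (↑F : Set G.E)) C, fdeg G M v = 1 := by
        intro v hv
        apply hM1
        by_contra h0
        obtain ⟨e, he⟩ := Finset.card_pos.1 (Nat.pos_of_ne_zero h0)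
        exact h e (Finset.mem_filter.1 he).1 v (Finset.mem_filter.1 he).2 hv
      have hdc := dc hG M (compFin (G.factorGraph (↑F : Set G.E)) C)
        (fun e he a b ha hb haC => comp_closed (hMF he) ha hb haC)
      have hsum : ∑ v ∈ compFin (G.factorGraph (↑F : Set G.E)) C, fdeg G M v
          = (compFin (G.factorGraph (↑F : Set G.E)) C).card :=
        Finset.sum_congr rfl hM1'
        |>.trans (by rw [Finset.sum_const, smul_eq_mul, mul_one])
      rw [hsum] at hdc
      exact (Nat.not_even_iff_odd.2 hOdd) ⟨_, by rw [hdc]; ring⟩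
    apply Finset.card_le_card_of_injOn
      (f := fun C => if h : ∃ e ∈ R, ∃ z ∈ G.inc e,
        z ∈ compFin (G.factorGraph (↑F : Set G.E)) C then h.choose else e0)
    · intro C hC
      simp only [Finset.mem_coe] at hC ⊢
      rw [dif_pos (hex C hC)]
      exact (hex C hC).choose_spec.1
    · intro C hC C' hC' hEq
      simp only [Finset.mem_coe] at hC hC'
      simp only at hEq
      rw [dif_pos (hex C hC), dif_pos (hex C' hC')] at hEq
      obtain ⟨hR1, z, hz1, hz2⟩ := (hex C hC).choose_spec
      obtain ⟨hR1', z', hz1', hz2'⟩ := (hex C' hC').choose_spec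
      rw [hEq] at hz1
      have hz2'' : z ∈ compFin (G.factorGraph (↑F : Set G.E)) C' :=
        comp_closed (hRF hR1') hz1' hz1 hz2'
      rw [mem_compFin] at hz2 hz2''
      exact hz2.symm.trans hz2''

lemma natCard_deg'' (p : G.E → Prop) (F : Finset G.E) (hF : ∀ e, e ∈ F ↔ p e) (v : G.V) :
    Nat.card {e : G.E // p e ∧ v ∈ G.inc e} = fdeg G F v := by
  rw [Nat.card_eq_fintype_card, Fintype.card_subtype]
  unfold fdeg
  congr 1
  ext e
  simp [hF e]

lemma color_classes_sum {s : ℕ} (hreg : G.Regular s) (R : Finset G.E) (c : G.E → Fin s)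
    (v : G.V) :
    ∑ k : Fin s, fdeg G (Mcl G R c k) v = s - fdeg G R v := by
  have hsum : ∑ k : Fin s, fdeg G (Mcl G R c k) v = fdeg G (univ \ R) v := by
    unfold Mcl fdeg
    rw [Finset.card_eq_sum_card_fiberwise
      (f := c) (t := univ) (fun x _ => mem_univ _)]
    apply Finset.sum_congr rfl
    intro k _
    rw [Finset.filter_comm]
  rw [hsum, fdeg_sdiff, fdeg_univ_eq hreg]

lemma core_decomp (hG : G.Loopless) {s : ℕ} (hreg : G.Regular s) (hs2 : 2 ≤ s)
    (R : Finset G.E) (hR2 : R.card ≤ 2) (c : G.E → Fin s)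
    (hprop : ∀ e, e ∉ R → ∀ f, f ∉ R → e ≠ f →
      (∃ v, v ∈ G.inc e ∧ v ∈ G.inc f) → c e ≠ c f)
    (i j : Fin s) (hij : i ≠ j)
    (hB : ∀ k : Fin s, k ≠ i → k ≠ j → ∀ v, fdeg G (Mcl G R c k) v = 1) :
    ∃ (n : ℕ) (g : G.E → Option (Fin n)), G.IsDecomp g ∧ G.decompOdd g ≤ R.card := by
  classical
  have h0s : (0:ℕ) < s := by omega
  have h1s : (1:ℕ) < s := by omega
  obtain ⟨σ, hσi, hσj⟩ : ∃ σ : Equiv.Perm (Fin s), σ i = ⟨0, h0s⟩ ∧ σ j = ⟨1, h1s⟩ := by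
    refine ⟨(Equiv.swap i ⟨0, h0s⟩).trans
      (Equiv.swap ((Equiv.swap i ⟨0, h0s⟩) j) ⟨1, h1s⟩), ?_, ?_⟩
    · show Equiv.swap _ _ ((Equiv.swap i ⟨0, h0s⟩) i) = _
      rw [Equiv.swap_apply_left]
      apply Equiv.swap_apply_of_ne_of_ne
      · intro h
        have h1 : (Equiv.swap i ⟨0, h0s⟩) i = ⟨0, h0s⟩ := Equiv.swap_apply_left _ _
        exact hij ((Equiv.swap i ⟨0, h0s⟩).injective (h1.trans h))
      · exact Fin.ne_of_val_ne (by norm_num)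
    · show Equiv.swap _ _ ((Equiv.swap i ⟨0, h0s⟩) j) = _
      exact Equiv.swap_apply_left _ _
  obtain ⟨n, hn⟩ : ∃ n : ℕ, s = 2 * n ∨ s = 2 * n + 1 := ⟨s / 2, by omega⟩
  have hn0 : 0 < n := by omega
  set g : G.E → Option (Fin n) := fun e =>
    if e ∈ R then some ⟨0, hn0⟩
    else if (σ (c e)).1 < 2 then some ⟨0, hn0⟩
    else if hlt : (σ (c e)).1 < 2 * n then some ⟨(σ (c e)).1 / 2, by omega⟩
    else none
    with hgdef
  have hσlt2 : ∀ k : Fin s, (σ k).1 < 2 ↔ (k = i ∨ k = j) := by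
    intro k
    constructor
    · intro h
      have h2 : σ k = ⟨0, h0s⟩ ∨ σ k = ⟨1, h1s⟩ := by
        have : (σ k).1 = 0 ∨ (σ k).1 = 1 := by omega
        rcases this with h' | h'
        · exact Or.inl (Fin.ext h')
        · exact Or.inr (Fin.ext h')
      rcases h2 with h' | h'
      · exact Or.inl (σ.injective (h'.trans hσi.symm))
      · exact Or.inr (σ.injective (h'.trans hσj.symm))
    · rintro (rfl | rfl)
      · rw [hσi]; norm_num
      · rw [hσj]; norm_num
  have hgR : ∀ e ∈ R, g e = some ⟨0, hn0⟩ := by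
    intro e he
    simp only [hgdef]
    rw [if_pos he]
  have hgij : ∀ e, e ∉ R → (c e = i ∨ c e = j) → g e = some ⟨0, hn0⟩ := by
    intro e he hc
    simp only [hgdef]
    rw [if_neg he, if_pos ((hσlt2 (c e)).2 hc)]
  have hgmid : ∀ e, e ∉ R → 2 ≤ (σ (c e)).1 → (σ (c e)).1 < 2 * n →
      ∀ t : Fin n, (g e = some t ↔ t.1 = (σ (c e)).1 / 2) := by
    intro e he h2 hlt t
    simp only [hgdef]
    rw [if_neg he, if_neg (by omega), dif_pos hlt]
    constructor
    · intro h
      exact (congrArg Fin.val (Option.some_inj.1 h)).symm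
    · intro h
      exact congrArg some (Fin.ext h.symm)
  have hgnone : ∀ e, e ∉ R → (g e = none ↔ 2 * n ≤ (σ (c e)).1) := by
    intro e he
    simp only [hgdef]
    rw [if_neg he]
    by_cases h2 : (σ (c e)).1 < 2
    · rw [if_pos h2]
      constructor
      · intro h; cases h
      · intro h; omega
    · rw [if_neg h2]
      by_cases hlt : (σ (c e)).1 < 2 * n
      · rw [dif_pos hlt]
        constructor
        · intro h; cases h
        · intro h; omega
      · rw [dif_neg hlt]
        constructor
        · intro _; omega
        · intro _; rfl
  have hfib0 : univ.filter (fun e => g e = some ⟨0, hn0⟩)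
      = R ∪ (Mcl G R c i ∪ Mcl G R c j) := by
    ext e
    constructor
    · intro hmem
      have hval := (Finset.mem_filter.1 hmem).2
      by_cases hR : e ∈ R
      · exact Finset.mem_union_left _ hR
      by_cases h2 : (σ (c e)).1 < 2
      · rcases (hσlt2 (c e)).1 h2 with h | h
        · exact Finset.mem_union_right _ (Finset.mem_union_left _
            (Finset.mem_filter.2 ⟨Finset.mem_sdiff.2 ⟨mem_univ _, hR⟩, h⟩))
        · exact Finset.mem_union_right _ (Finset.mem_union_right _
            (Finset.mem_filter.2 ⟨Finset.mem_sdiff.2 ⟨mem_univ _, hR⟩, h⟩))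
      · by_cases hlt : (σ (c e)).1 < 2 * n
        · have hdiv := (hgmid e hR (by omega) hlt _).1 hval
          have h00 : ((⟨0, hn0⟩ : Fin n)).1 = 0 := rfl
          rw [h00] at hdiv
          exfalso
          omega
        · have hnone := (hgnone e hR).2 (by omega)
          rw [hval] at hnone
          cases hnone
    · intro hmem
      refine Finset.mem_filter.2 ⟨mem_univ _, ?_⟩
      rcases Finset.mem_union.1 hmem with hR | hMm
      · exact hgR e hR
      rcases Finset.mem_union.1 hMm with hMi | hMj
      · have h1 := Finset.mem_filter.1 hMi
        exact hgij e (Finset.mem_sdiff.1 h1.1).2 (Or.inl h1.2)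
      · have h1 := Finset.mem_filter.1 hMj
        exact hgij e (Finset.mem_sdiff.1 h1.1).2 (Or.inr h1.2)
  have hstb : ∀ t : Fin n, t ≠ ⟨0, hn0⟩ → 2*t.1 < s ∧ 2*t.1+1 < s := by
    intro t ht
    have h1 : t.1 ≠ 0 := fun h => ht (Fin.ext h)
    have h2 := t.2
    omega
  have hfibt : ∀ (t : Fin n) (ht : t ≠ ⟨0, hn0⟩),
      univ.filter (fun e => g e = some t)
        = Mcl G R c (σ.symm ⟨2*t.1, (hstb t ht).1⟩)
          ∪ Mcl G R c (σ.symm ⟨2*t.1+1, (hstb t ht).2⟩) := by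
    intro t ht
    have h1 : t.1 ≠ 0 := fun h => ht (Fin.ext h)
    have ht2 := t.2
    ext e
    constructor
    · intro hmem
      have hval := (Finset.mem_filter.1 hmem).2
      by_cases hR : e ∈ R
      · rw [hgR e hR] at hval
        exact absurd (Option.some_inj.1 hval).symm ht
      by_cases h2 : (σ (c e)).1 < 2
      · rw [hgij e hR ((hσlt2 (c e)).1 h2)] at hval
        exact absurd (Option.some_inj.1 hval).symm ht
      by_cases hlt : (σ (c e)).1 < 2 * n
      · have hdiv := (hgmid e hR (by omega) hlt t).1 hval
        have hor : (σ (c e)).1 = 2*t.1 ∨ (σ (c e)).1 = 2*t.1 + 1 := by omega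
        rcases hor with h | h
        · apply Finset.mem_union_left
          refine Finset.mem_filter.2 ⟨Finset.mem_sdiff.2 ⟨mem_univ _, hR⟩, ?_⟩
          apply σ.injective
          rw [Equiv.apply_symm_apply]
          exact Fin.ext h
        · apply Finset.mem_union_right
          refine Finset.mem_filter.2 ⟨Finset.mem_sdiff.2 ⟨mem_univ _, hR⟩, ?_⟩
          apply σ.injective
          rw [Equiv.apply_symm_apply]
          exact Fin.ext h
      · rw [(hgnone e hR).2 (by omega)] at hval
        cases hval
    · intro hmem
      have hcases : e ∉ R ∧ ((σ (c e)).1 = 2*t.1 ∨ (σ (c e)).1 = 2*t.1+1) := by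
        rcases Finset.mem_union.1 hmem with h | h
        · have hh := Finset.mem_filter.1 h
          refine ⟨(Finset.mem_sdiff.1 hh.1).2, Or.inl ?_⟩
          rw [hh.2, Equiv.apply_symm_apply]
        · have hh := Finset.mem_filter.1 h
          refine ⟨(Finset.mem_sdiff.1 hh.1).2, Or.inr ?_⟩
          rw [hh.2, Equiv.apply_symm_apply]
      obtain ⟨hR, hv⟩ := hcases
      refine Finset.mem_filter.2 ⟨mem_univ _, ?_⟩
      rw [hgmid e hR (by omega) (by omega) t]
      omega
  have hsymm_ne : ∀ (m : ℕ) (hm : m < s), 2 ≤ m →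
      (σ.symm ⟨m, hm⟩ ≠ i ∧ σ.symm ⟨m, hm⟩ ≠ j) := by
    intro m hm h2
    constructor
    · intro h
      have h3 : (⟨m, hm⟩ : Fin s) = σ i := by rw [← h, Equiv.apply_symm_apply]
      rw [hσi] at h3
      have h4 := congrArg Fin.val h3
      simp only at h4
      omega
    · intro h
      have h3 : (⟨m, hm⟩ : Fin s) = σ j := by rw [← h, Equiv.apply_symm_apply]
      rw [hσj] at h3
      have h4 := congrArg Fin.val h3
      simp only at h4
      omega
  have hdisj_kk : ∀ k k' : Fin s, k ≠ k' → Disjoint (Mcl G R c k) (Mcl G R c k') := by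
    intro k k' hkk
    rw [Finset.disjoint_left]
    intro e he he'
    exact hkk (((Finset.mem_filter.1 he).2).symm.trans (Finset.mem_filter.1 he').2)
  have hdisjR : ∀ k, Disjoint R (Mcl G R c k) := by
    intro k
    rw [Finset.disjoint_left]
    intro e he hMk
    exact (Finset.mem_sdiff.1 (Finset.mem_filter.1 hMk).1).2 he
  have hfdeg_union : ∀ (A B : Finset G.E), Disjoint A B → ∀ v,
      fdeg G (A ∪ B) v = fdeg G A v + fdeg G B v := by
    intro A B hAB v
    unfold fdeg
    rw [Finset.filter_union, Finset.card_union_of_disjoint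
      (Finset.disjoint_filter_filter hAB)]
  have hsum2 : ∀ v, fdeg G (Mcl G R c i) v + fdeg G (Mcl G R c j) v + fdeg G R v = 2 := by
    intro v
    obtain ⟨hmatch, hmiss⟩ := color_classes hG hreg R c hprop v
    have hsumk := color_classes_sum hreg R c v
    have hj' : j ∈ univ.erase i := Finset.mem_erase.2 ⟨Ne.symm hij, mem_univ j⟩
    have e1 := Finset.add_sum_erase univ (fun k => fdeg G (Mcl G R c k) v) (mem_univ i)
    have e2 := Finset.add_sum_erase (univ.erase i) (fun k => fdeg G (Mcl G R c k) v) hj'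
    have hrest : ∀ k ∈ (univ.erase i).erase j, fdeg G (Mcl G R c k) v = 1 := by
      intro k hk
      exact hB k (Finset.mem_erase.1 (Finset.mem_erase.1 hk).2).1
        (Finset.mem_erase.1 hk).1 v
    have hsumrest : ∑ k ∈ (univ.erase i).erase j, fdeg G (Mcl G R c k) v = s - 2 := by
      rw [Finset.sum_congr rfl hrest, Finset.sum_const, smul_eq_mul, mul_one,
        Finset.card_erase_of_mem hj', Finset.card_erase_of_mem (mem_univ i),
        Finset.card_univ, Fintype.card_fin]
      omega
    have hRv : fdeg G R v ≤ R.card := Finset.card_filter_le _ _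
    have h_i := hmatch i
    have h_j := hmatch j
    omega
  have h2ns : s = 2*n+1 → 2*n < s := by omega
  have hfibnone : ∀ (hs : s = 2*n+1), univ.filter (fun e => g e = none)
      = Mcl G R c (σ.symm ⟨2*n, h2ns hs⟩) := by
    intro hs
    ext e
    constructor
    · intro hmem
      have hval := (Finset.mem_filter.1 hmem).2
      by_cases hR : e ∈ R
      · rw [hgR e hR] at hval; cases hval
      have h2n := (hgnone e hR).1 hval
      have hlt := (σ (c e)).2
      refine Finset.mem_filter.2 ⟨Finset.mem_sdiff.2 ⟨mem_univ _, hR⟩, ?_⟩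
      apply σ.injective
      rw [Equiv.apply_symm_apply]
      apply Fin.ext
      show (σ (c e)).1 = 2*n
      omega
    · intro hmem
      have hh := Finset.mem_filter.1 hmem
      have hR := (Finset.mem_sdiff.1 hh.1).2
      refine Finset.mem_filter.2 ⟨mem_univ _, ?_⟩
      rw [hgnone e hR, hh.2, Equiv.apply_symm_apply]
  refine ⟨n, g, ⟨?_, ?_⟩, ?_⟩
  · rcases hn with hs | hs
    · left
      intro e h
      by_cases hR : e ∈ R
      · rw [hgR e hR] at h; cases h
      · have h1 := (hgnone e hR).1 h
        have h2 := (σ (c e)).2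
        omega
    · right
      intro v
      refine (natCard_deg'' (fun e => g e = none)
        (Mcl G R c (σ.symm ⟨2*n, h2ns hs⟩)) ?_ v).trans ?_
      · intro e
        rw [← hfibnone hs]
        simp
      · exact hB _ (hsymm_ne (2*n) (h2ns hs) (by omega)).1
          (hsymm_ne (2*n) (h2ns hs) (by omega)).2 v
  · intro t v
    by_cases ht : t = ⟨0, hn0⟩
    · subst ht
      refine (natCard_deg'' (fun e => g e = some ⟨0, hn0⟩)
        (R ∪ (Mcl G R c i ∪ Mcl G R c j)) ?_ v).trans ?_
      · intro e
        rw [← hfib0]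
        simp
      · rw [hfdeg_union _ _
          (Finset.disjoint_union_right.2 ⟨hdisjR i, hdisjR j⟩),
          hfdeg_union _ _ (hdisj_kk i j hij)]
        have := hsum2 v
        omega
    · have h1 : t.1 ≠ 0 := fun h => ht (Fin.ext h)
      refine (natCard_deg'' (fun e => g e = some t)
        (Mcl G R c (σ.symm ⟨2*t.1, (hstb t ht).1⟩)
          ∪ Mcl G R c (σ.symm ⟨2*t.1+1, (hstb t ht).2⟩)) ?_ v).trans ?_
      · intro e
        rw [← hfibt t ht]
        simp
      · rw [hfdeg_union _ _ (hdisj_kk _ _ ?kk)]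
        case kk =>
          intro h
          have h3 := congrArg σ h
          rw [Equiv.apply_symm_apply, Equiv.apply_symm_apply] at h3
          have h4 := congrArg Fin.val h3
          simp only at h4
          omega
        rw [hB _ (hsymm_ne (2*t.1) (hstb t ht).1 (by omega)).1
            (hsymm_ne (2*t.1) (hstb t ht).1 (by omega)).2 v,
          hB _ (hsymm_ne (2*t.1+1) (hstb t ht).2 (by omega)).1
            (hsymm_ne (2*t.1+1) (hstb t ht).2 (by omega)).2 v]
  · unfold Mgraph.decompOdd
    have hzero_t : ∀ t : Fin n, t ≠ ⟨0, hn0⟩ → G.oddCycles {e | g e = some t} = 0 := by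
      intro t ht
      have h1 : t.1 ≠ 0 := fun h => ht (Fin.ext h)
      have hset : {e : G.E | g e = some t} = ↑(univ.filter (fun e => g e = some t)) := by
        ext e; simp
      rw [hset]
      apply oddCycles_zero_of_unit hG _ (Mcl G R c (σ.symm ⟨2*t.1, (hstb t ht).1⟩))
      · rw [hfibt t ht]
        exact Finset.subset_union_left
      · intro v
        exact hB _ (hsymm_ne (2*t.1) (hstb t ht).1 (by omega)).1
          (hsymm_ne (2*t.1) (hstb t ht).1 (by omega)).2 v
    have esum := Finset.add_sum_erase univ
      (fun t : Fin n => G.oddCycles {e | g e = some t}) (mem_univ ⟨0, hn0⟩)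
    rw [← esum]
    have hrest0 : ∑ t ∈ univ.erase ⟨0, hn0⟩, G.oddCycles {e | g e = some t} = 0 :=
      Finset.sum_eq_zero (fun t ht => hzero_t t (Finset.mem_erase.1 ht).1)
    rw [hrest0, add_zero]
    have hset : {e : G.E | g e = some ⟨0, hn0⟩}
        = ↑(univ.filter (fun e => g e = some ⟨0, hn0⟩)) := by
      ext e; simp
    rw [hset]
    apply oddCycles_le_of_cover hG _ (Mcl G R c i) R
    · rw [hfib0]
      intro x hx
      exact Finset.mem_union_right _ (Finset.mem_union_left _ hx)
    · rw [hfib0]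
      exact Finset.subset_union_left
    · intro v hv
      obtain ⟨hmatch, -⟩ := color_classes hG hreg R c hprop v
      have h2 := hsum2 v
      have h3 := hmatch i
      have h4 := hmatch j
      omega

lemma colorable_to_partial {s : ℕ} (hs : 0 < s) {S : Set G.E}
    (h : (G.deleteEdges S).EdgeColorable s) :
    ∃ c : G.E → Fin s, ∀ e, e ∉ S.toFinset → ∀ f, f ∉ S.toFinset → e ≠ f →
      (∃ v, v ∈ G.inc e ∧ v ∈ G.inc f) → c e ≠ c f := by
  obtain ⟨c0, hc0⟩ := h
  refine ⟨fun e => if h : e ∈ S then ⟨0, hs⟩ else c0 ⟨e, h⟩, ?_⟩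
  intro e he f hf hef hsh
  rw [Set.mem_toFinset] at he hf
  simp only [dif_neg he, dif_neg hf]
  exact hc0 ⟨e, he⟩ ⟨f, hf⟩ (fun h => hef (congrArg Subtype.val h)) hsh

lemma partial_to_colorable {s : ℕ} (R : Finset G.E) (c : G.E → Fin s)
    (hprop : ∀ e, e ∉ R → ∀ f, f ∉ R → e ≠ f →
      (∃ v, v ∈ G.inc e ∧ v ∈ G.inc f) → c e ≠ c f) :
    (G.deleteEdges (↑R : Set G.E)).EdgeColorable s := by
  refine ⟨fun e => c e.1, ?_⟩
  intro e f hef hsh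
  exact hprop e.1 (fun h => e.2 (Finset.mem_coe.2 h)) f.1
    (fun h => f.2 (Finset.mem_coe.2 h)) (fun h => hef (Subtype.ext h)) hsh

lemma exists_ij (hG : G.Loopless) {s : ℕ} (hreg : G.Regular s) (hs2 : 2 ≤ s)
    (heven : Even (Nat.card G.V)) (R : Finset G.E) (hR : R.card = 2)
    (c : G.E → Fin s)
    (hprop : ∀ e, e ∉ R → ∀ f, f ∉ R → e ≠ f →
      (∃ v, v ∈ G.inc e ∧ v ∈ G.inc f) → c e ≠ c f) :
    ∃ i j : Fin s, i ≠ j ∧ ∀ k, k ≠ i → k ≠ j → ∀ v, fdeg G (Mcl G R c k) v = 1 := by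
  have htot : ∑ k : Fin s, (univ.filter (fun v => fdeg G (Mcl G R c k) v = 0)).card = 4 := by
    have hswap : (∑ k : Fin s, (univ.filter (fun v => fdeg G (Mcl G R c k) v = 0)).card)
        = ∑ v : G.V, (univ.filter (fun k : Fin s => fdeg G (Mcl G R c k) v = 0)).card := by
      simp only [Finset.card_filter]
      rw [Finset.sum_comm]
    rw [hswap, Finset.sum_congr rfl
      (fun v _ => (color_classes hG hreg R c hprop v).2), handshake hG R, hR]
  set B := univ.filter (fun k : Fin s =>
    (univ.filter (fun v => fdeg G (Mcl G R c k) v = 0)).card ≠ 0) with hBdef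
  have heach : ∀ k ∈ B, 2 ≤ (univ.filter (fun v => fdeg G (Mcl G R c k) v = 0)).card := by
    intro k hk
    have he := miss_card_even hG heven R c k
      (fun v => (color_classes hG hreg R c hprop v).1 k)
    have hne := (Finset.mem_filter.1 hk).2
    obtain ⟨m, hm⟩ := he
    omega
  have hBle : B.card ≤ 2 := by
    have h1 := Finset.card_nsmul_le_sum B
      (fun k => (univ.filter (fun v => fdeg G (Mcl G R c k) v = 0)).card) 2 heach
    have h2 : (∑ k ∈ B, (univ.filter (fun v => fdeg G (Mcl G R c k) v = 0)).card) ≤ 4 := by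
      rw [← htot]
      exact Finset.sum_le_sum_of_subset (Finset.subset_univ B)
    simp only [smul_eq_mul] at h1
    omega
  obtain ⟨i, j, hij, hcover⟩ : ∃ i j : Fin s, i ≠ j ∧ ∀ k ∈ B, k = i ∨ k = j := by
    have h012 : B.card = 0 ∨ B.card = 1 ∨ B.card = 2 := by omega
    rcases h012 with hc | hc | hc
    · refine ⟨⟨0, by omega⟩, ⟨1, by omega⟩, Fin.ne_of_val_ne (by norm_num), ?_⟩
      intro k hk
      rw [Finset.card_eq_zero.1 hc] at hk
      exact absurd hk (Finset.notMem_empty k)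
    · obtain ⟨i, hi⟩ := Finset.card_eq_one.1 hc
      have hj : ∃ j : Fin s, j ≠ i := by
        by_cases h : i = ⟨0, by omega⟩
        · exact ⟨⟨1, by omega⟩, by rw [h]; exact Fin.ne_of_val_ne (by norm_num)⟩
        · exact ⟨⟨0, by omega⟩, fun hh => h hh.symm⟩
      obtain ⟨j, hji⟩ := hj
      refine ⟨i, j, fun h => hji h.symm, ?_⟩
      intro k hk
      rw [hi] at hk
      exact Or.inl (Finset.mem_singleton.1 hk)
    · obtain ⟨i, j, hij, hBij⟩ := Finset.card_eq_two.1 hc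
      refine ⟨i, j, hij, ?_⟩
      intro k hk
      rw [hBij] at hk
      simpa using hk
  refine ⟨i, j, hij, ?_⟩
  intro k hki hkj v
  have hk0 : (univ.filter (fun v => fdeg G (Mcl G R c k) v = 0)).card = 0 := by
    by_contra h
    have hkB : k ∈ B := Finset.mem_filter.2 ⟨mem_univ _, h⟩
    rcases hcover k hkB with rfl | rfl
    exacts [hki rfl, hkj rfl]
  have h1 := (color_classes hG hreg R c hprop v).1 k
  have hv : fdeg G (Mcl G R c k) v ≠ 0 := by
    intro h0
    have hvm : v ∈ univ.filter (fun v => fdeg G (Mcl G R c k) v = 0) :=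
      Finset.mem_filter.2 ⟨mem_univ _, h0⟩
    rw [Finset.card_eq_zero.1 hk0] at hvm
    exact absurd hvm (Finset.notMem_empty v)
  omega

lemma one_removed (hG : G.Loopless) {s : ℕ} (hreg : G.Regular s)
    (heven : Even (Nat.card G.V)) (R : Finset G.E) (hR : R.card = 1)
    (c : G.E → Fin s)
    (hprop : ∀ e, e ∉ R → ∀ f, f ∉ R → e ≠ f →
      (∃ v, v ∈ G.inc e ∧ v ∈ G.inc f) → c e ≠ c f) :
    ∃ c' : G.E → Fin s, ∀ e f : G.E, e ≠ f →
      (∃ v, v ∈ G.inc e ∧ v ∈ G.inc f) → c' e ≠ c' f := by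
  obtain ⟨e0, hR0⟩ := Finset.card_eq_one.1 hR
  obtain ⟨a, b, hab, hinc0⟩ := exists_two_endpoints hG e0
  have hfRa : fdeg G R a = 1 := by
    unfold fdeg
    rw [hR0, Finset.filter_singleton, if_pos (by rw [hinc0]; simp)]
    exact Finset.card_singleton e0
  have hma := (color_classes hG hreg R c hprop a).2
  rw [hfRa] at hma
  obtain ⟨istar, hi⟩ := Finset.card_eq_one.1 hma
  have hia : fdeg G (Mcl G R c istar) a = 0 := by
    have hm : istar ∈ univ.filter (fun k : Fin s => fdeg G (Mcl G R c k) a = 0) := by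
      rw [hi]; exact Finset.mem_singleton_self istar
    exact (Finset.mem_filter.1 hm).2
  have hsub : univ.filter (fun v => fdeg G (Mcl G R c istar) v = 0) ⊆ {a, b} := by
    intro v hv
    by_contra hvab
    have hfRv : fdeg G R v = 0 := by
      unfold fdeg
      rw [hR0, Finset.filter_singleton, if_neg, Finset.card_empty]
      rw [hinc0]
      simp only [Sym2.mem_iff]
      rintro (rfl | rfl) <;> simp at hvab
    have h2 := (color_classes hG hreg R c hprop v).2
    rw [hfRv, Finset.card_eq_zero] at h2
    have hmem : istar ∈ univ.filter (fun k : Fin s => fdeg G (Mcl G R c k) v = 0) :=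
      Finset.mem_filter.2 ⟨mem_univ _, (Finset.mem_filter.1 hv).2⟩
    rw [h2] at hmem
    exact absurd hmem (Finset.notMem_empty istar)
  have hev := miss_card_even hG heven R c istar
    (fun v => (color_classes hG hreg R c hprop v).1 istar)
  have hbmiss : fdeg G (Mcl G R c istar) b = 0 := by
    by_contra hb
    have heq : univ.filter (fun v => fdeg G (Mcl G R c istar) v = 0) = {a} := by
      apply Finset.Subset.antisymm
      · intro v hv
        have := hsub hv
        simp only [Finset.mem_insert, Finset.mem_singleton] at this
        rcases this with rfl | rfl
        · exact Finset.mem_singleton_self v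
        · exact absurd (Finset.mem_filter.1 hv).2 hb
      · intro v hv
        rw [Finset.mem_singleton] at hv
        subst hv
        exact Finset.mem_filter.2 ⟨mem_univ _, hia⟩
    rw [heq, Finset.card_singleton] at hev
    exact Nat.not_even_one hev
  refine ⟨Function.update c e0 istar, ?_⟩
  have main : ∀ f, f ≠ e0 → (∃ z, z ∈ G.inc e0 ∧ z ∈ G.inc f) →
      Function.update c e0 istar f ≠ Function.update c e0 istar e0 := by
    rintro f hf ⟨z, hz0, hzf⟩
    rw [Function.update_of_ne hf, Function.update_self]
    intro hEq
    have hzab : z = a ∨ z = b := by rw [hinc0] at hz0; simpa using hz0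
    have hfR : f ∉ R := by rw [hR0]; simpa using hf
    have hfM : f ∈ Mcl G R c istar :=
      Finset.mem_filter.2 ⟨Finset.mem_sdiff.2 ⟨mem_univ _, hfR⟩, hEq⟩
    have hpos : 0 < fdeg G (Mcl G R c istar) z :=
      Finset.card_pos.2 ⟨f, Finset.mem_filter.2 ⟨hfM, hzf⟩⟩
    rcases hzab with rfl | rfl
    · omega
    · omega
  intro e f hef hsh
  by_cases he : e = e0
  · subst he
    obtain ⟨z, hz1, hz2⟩ := hsh
    exact (main f (Ne.symm hef) ⟨z, hz1, hz2⟩).symm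
  by_cases hf : f = e0
  · subst hf
    obtain ⟨z, hz1, hz2⟩ := hsh
    exact main e he ⟨z, hz2, hz1⟩
  · rw [Function.update_of_ne he, Function.update_of_ne hf]
    exact hprop e (by rw [hR0]; simpa using he) f (by rw [hR0]; simpa using hf) hef hsh

lemma colorable_small (hG : G.Loopless) {s : ℕ} (hreg : G.Regular s) (hs : s ≤ 1) :
    (G.deleteEdges (∅ : Set G.E)).EdgeColorable s := by
  by_cases hE : Nonempty G.E
  · obtain ⟨e⟩ := hE
    obtain ⟨x, y, hxy, hincx⟩ := exists_two_endpoints hG e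
    have hx : 1 ≤ fdeg G univ x :=
      Finset.card_pos.2 ⟨e, Finset.mem_filter.2 ⟨mem_univ _, by rw [hincx]; simp⟩⟩
    have hs1 : s = 1 := by
      have := fdeg_univ_eq hreg x
      omega
    subst hs1
    refine ⟨fun _ => ⟨0, by omega⟩, ?_⟩
    intro e' f' hef hsh
    exfalso
    obtain ⟨v, hv1, hv2⟩ := hsh
    have h2 : 1 < fdeg G univ v := Finset.one_lt_card.2
      ⟨e'.1, by simp; exact hv1, f'.1,
        by simp; exact hv2, fun h => hef (Subtype.ext h)⟩
    have := fdeg_univ_eq hreg v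
    omega
  · refine ⟨fun e => (hE ⟨e.1⟩).elim, ?_⟩
    intro e _ _ _
    exact (hE ⟨e.1⟩).elim

lemma small_s_decomp (hG : G.Loopless) {s : ℕ} (hreg : G.Regular s) (hs : s ≤ 1) :
    ∃ (n : ℕ) (g : G.E → Option (Fin n)), G.IsDecomp g ∧ G.decompOdd g = 0 := by
  refine ⟨0, fun _ => none, ⟨?_, fun i => absurd i.2 (by omega)⟩, by simp [Mgraph.decompOdd]⟩
  rcases Nat.le_one_iff_eq_zero_or_eq_one.1 hs with hs0 | hs1
  · left
    intro e _
    obtain ⟨x, y, hxy, hincx⟩ := exists_two_endpoints hG e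
    have hx : 1 ≤ fdeg G univ x :=
      Finset.card_pos.2 ⟨e, Finset.mem_filter.2 ⟨mem_univ _, by rw [hincx]; simp⟩⟩
    have := fdeg_univ_eq hreg x
    omega
  · right
    intro v
    refine (natCard_deg'' (fun _ => (none : Option (Fin 0)) = none) univ
      (by simp) v).trans ?_
    rw [fdeg_univ_eq hreg, hs1]

end MgraphAux

open Mgraph in
/-- For a connected `s`-regular finite loopless multigraph of even order:
`r(G) = 2` if and only if `ξ(G) = 2`. -/
theorem resistance_eq_two_iff_oddness_eq_two (G : Mgraph) (hG : G.Loopless) (s : ℕ)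
    (hreg : G.Regular s) (hconn : G.Connected) (heven : Even (Nat.card G.V)) :
    G.resistance = 2 ↔ G.oddness = 2 := by
  classical
  open MgraphAux Finset in
  have hne : Nonempty G.V := SimpleGraph.Connected.nonempty hconn
  have hmax : G.maxDegree = s := maxDegree_eq hreg hne
  have hres : G.resistance
      = sInf {k : ℕ | ∃ S : Set G.E, Nat.card S = k ∧ (G.deleteEdges S).EdgeColorable s} := by
    unfold Mgraph.resistance Mgraph.resistanceTo
    rw [hmax]
  set RS : Set ℕ := {k | ∃ S : Set G.E, Nat.card S = k ∧ (G.deleteEdges S).EdgeColorable s}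
    with hRSdef
  set OS : Set ℕ∞ := {k : ℕ∞ | ∃ (n : ℕ) (f : G.E → Option (Fin n)),
    G.IsDecomp f ∧ k = (G.decompOdd f : ℕ∞)} with hOSdef
  have hoddn : G.oddness = sInf OS := rfl
  have hRSne : RS.Nonempty := by
    refine ⟨Nat.card (Set.univ : Set G.E), Set.univ, rfl, ⟨fun e => (e.2 (Set.mem_univ e.1)).elim, ?_⟩⟩
    intro e _ _ _
    exact (e.2 (Set.mem_univ e.1)).elim
  have hdecomp_even : ∀ (n : ℕ) (f : G.E → Option (Fin n)), G.IsDecomp f →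
      Even (G.decompOdd f) := by
    intro n f hdec
    unfold Mgraph.decompOdd
    apply Finset.even_sum
    intro i _
    have hset : {e : G.E | f e = some i} = ↑(univ.filter (fun e => f e = some i)) := by
      ext e; simp
    rw [hset]
    exact even_oddCycles _ heven
  -- membership in OS implies resistance-set membership of the same size
  have hOS_to_RS : ∀ (n : ℕ) (f : G.E → Option (Fin n)), G.IsDecomp f →
      G.decompOdd f ∈ RS := by
    intro n f hdec
    obtain ⟨S, hS1, hS2⟩ := decomp_to_coloring hG hreg hne f hdec
    exact ⟨S, hS1, hS2⟩
  -- 0 ∈ RS → oddness-set contains 0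
  have hRS0_to_OS : 0 ∈ RS → (0 : ℕ∞) ∈ OS := by
    intro h0
    obtain ⟨S0, hS0card, hS0col⟩ := h0
    -- s ≥ 2 or small s
    by_cases hs2 : 2 ≤ s
    · obtain ⟨c, hc⟩ := colorable_to_partial (by omega) hS0col
      have hRcard : S0.toFinset.card = 0 := by
        rw [← Set.ncard_eq_toFinset_card', ← Nat.card_coe_set_eq, hS0card]
      have hB : ∀ k : Fin s, k ≠ ⟨0, by omega⟩ → k ≠ ⟨1, by omega⟩ → ∀ v,
          fdeg G (Mcl G S0.toFinset c k) v = 1 := by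
        intro k _ _ v
        obtain ⟨hmatch, hmiss⟩ := color_classes hG hreg S0.toFinset c hc v
        have hfR : fdeg G S0.toFinset v = 0 := by
          unfold fdeg
          rw [Finset.card_eq_zero.1 hRcard]
          simp
        rw [hfR, Finset.card_eq_zero] at hmiss
        have h1 := hmatch k
        have h2 : fdeg G (Mcl G S0.toFinset c k) v ≠ 0 := by
          intro h0'
          have : k ∈ univ.filter (fun k : Fin s =>
              fdeg G (Mcl G S0.toFinset c k) v = 0) :=
            Finset.mem_filter.2 ⟨mem_univ _, h0'⟩
          rw [hmiss] at this
          exact absurd this (Finset.notMem_empty k)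
        omega
      obtain ⟨n, g, hdec, hodd⟩ := core_decomp hG hreg hs2 S0.toFinset (by omega) c hc
        ⟨0, by omega⟩ ⟨1, by omega⟩ (Fin.ne_of_val_ne (by norm_num)) hB
      have hodd0 : G.decompOdd g = 0 := by omega
      exact ⟨n, g, hdec, by rw [hodd0]; rfl⟩
    · obtain ⟨n, g, hdec, hodd⟩ := small_s_decomp hG hreg (by omega)
      exact ⟨n, g, hdec, by rw [hodd]; rfl⟩
  have hOS0 : (0 : ℕ∞) ∈ OS → G.oddness ≠ 2 := by
    intro h0 hcon
    rw [hoddn] at hcon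
    have : sInf OS ≤ 0 := sInf_le h0
    rw [hcon] at this
    exact absurd this (by norm_num)
  constructor
  · -- resistance = 2 → oddness = 2
    intro hr
    rw [hres] at hr
    have h2mem : 2 ∈ RS := hr ▸ Nat.sInf_mem hRSne
    have h0not : 0 ∉ RS := fun h => by
      have := Nat.sInf_le h
      omega
    have h1not : 1 ∉ RS := fun h => by
      have := Nat.sInf_le h
      omega
    have hs2 : 2 ≤ s := by
      by_contra hs
      exact h0not ⟨∅, by simp [Nat.card_coe_set_eq], colorable_small hG hreg (by omega)⟩
    obtain ⟨S, hScard, hScol⟩ := h2mem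
    obtain ⟨c, hc⟩ := colorable_to_partial (by omega) hScol
    have hRcard : S.toFinset.card = 2 := by
      rw [← Set.ncard_eq_toFinset_card', ← Nat.card_coe_set_eq, hScard]
    obtain ⟨i, j, hij, hB⟩ := exists_ij hG hreg hs2 heven S.toFinset hRcard c hc
    obtain ⟨n, g, hdec, hodd⟩ := core_decomp hG hreg hs2 S.toFinset (by omega) c hc i j hij hB
    have hle2 : G.oddness ≤ 2 := by
      rw [hoddn]
      refine le_trans (sInf_le ⟨n, g, hdec, rfl⟩) ?_
      have : G.decompOdd g ≤ 2 := by omega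
      exact_mod_cast this
    have hge2 : (2 : ℕ∞) ≤ G.oddness := by
      rw [hoddn]
      by_contra hlt
      push_neg at hlt
      obtain ⟨a, haOS, halt⟩ := sInf_lt_iff.1 hlt
      obtain ⟨n', f', hdec', rfl⟩ := haOS
      have hm2 : G.decompOdd f' < 2 := by exact_mod_cast halt
      have hev := hdecomp_even n' f' hdec'
      have hm0 : G.decompOdd f' = 0 := by
        obtain ⟨m, hm⟩ := hev
        omega
      exact h0not (hm0 ▸ hOS_to_RS n' f' hdec')
    exact le_antisymm hle2 hge2
  · -- oddness = 2 → resistance = 2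
    intro hx
    have h0notOS : (0 : ℕ∞) ∉ OS := fun h => hOS0 h hx
    have h0not : 0 ∉ RS := fun h => h0notOS (hRS0_to_OS h)
    have h1not : 1 ∉ RS := by
      intro h1
      obtain ⟨S1, hS1card, hS1col⟩ := h1
      have hs1 : 1 ≤ s := by
        by_contra hs
        -- s = 0 : use small-s decomposition to contradict oddness = 2
        obtain ⟨n, g, hdec, hodd⟩ := small_s_decomp hG hreg (by omega)
        exact hOS0 ⟨n, g, hdec, by rw [hodd]; rfl⟩ hx
      obtain ⟨c, hc⟩ := colorable_to_partial (by omega) hS1col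
      have hRcard : S1.toFinset.card = 1 := by
        rw [← Set.ncard_eq_toFinset_card', ← Nat.card_coe_set_eq, hS1card]
      obtain ⟨c', hc'⟩ := one_removed hG hreg heven S1.toFinset hRcard c hc
      apply h0not
      refine ⟨(↑(∅ : Finset G.E) : Set G.E), by simp [Nat.card_coe_set_eq], ?_⟩
      apply partial_to_colorable (∅ : Finset G.E) c'
      intro e _ f _ hef hsh
      exact hc' e f hef hsh
    -- get a decomposition with decompOdd = 2
    have hlt3 : sInf OS < 3 := by
      rw [← hoddn, hx]
      norm_num
    obtain ⟨a, haOS, halt⟩ := sInf_lt_iff.1 hlt3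
    obtain ⟨n', f', hdec', rfl⟩ := haOS
    have hm3 : G.decompOdd f' < 3 := by exact_mod_cast halt
    have hev := hdecomp_even n' f' hdec'
    have hm2 : G.decompOdd f' = 0 ∨ G.decompOdd f' = 2 := by
      obtain ⟨m, hm⟩ := hev
      omega
    have hm2' : G.decompOdd f' = 2 := by
      rcases hm2 with h | h
      · exact absurd (hOS0 ⟨n', f', hdec', by rw [h]; rfl⟩ hx) (fun a => a)
      · exact h
    have h2mem : 2 ∈ RS := hm2' ▸ hOS_to_RS n' f' hdec'
    rw [hres]
    have hle := Nat.sInf_le h2mem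
    have hmem := Nat.sInf_mem ⟨2, h2mem⟩
    have hs0 : sInf RS ≠ 0 := fun h => h0not (h ▸ hmem)
    have hs1 : sInf RS ≠ 1 := fun h => h1not (h ▸ hmem)
    omega
end
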